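/- arXiv:1302.3531 — 6 statements merged into one kernel-verified Lean document; each statement's English description precedes it below -/
import Mathlib

section
/- For every e ∈ (0,1) there exists a constant c > 0 (depending only on e) such that every graphon g with edge density e(g) = e satisfies I(g) - I₀(e) ≥ c·|t(g) - e³|. Consequently, among graphons of fixed edge density e, the rate function is minimized (i.e. -I is maximized) exactly when the triangle density equals e³, and the minimum value I₀(e) is approached at most linearly in |t(g) - e³|. -/
open MeasureTheory Set

/-- `I₀(u) = (1/2)[u ln u + (1-u) ln(1-u)]`; since `Real.log 0 = 0`,
this automatically satisfies the continuous extension `I₀(0) = I₀(1) = 0`. -/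
noncomputable def I0 (u : ℝ) : ℝ :=
  (1/2) * (u * Real.log u + (1 - u) * Real.log (1 - u))

/-- A graphon: a measurable function `[0,1]² → [0,1]`, symmetric on `[0,1]²`. -/
def IsGraphon (g : ℝ → ℝ → ℝ) : Prop :=
  Measurable (Function.uncurry g) ∧
  (∀ x ∈ Icc (0:ℝ) 1, ∀ y ∈ Icc (0:ℝ) 1, g x y = g y x) ∧
  (∀ x ∈ Icc (0:ℝ) 1, ∀ y ∈ Icc (0:ℝ) 1, g x y ∈ Icc (0:ℝ) 1)

/-- Edge density `e(g) = ∫∫ g`. -/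
noncomputable def edgeDensity (g : ℝ → ℝ → ℝ) : ℝ :=
  ∫ x in Icc (0:ℝ) 1, ∫ y in Icc (0:ℝ) 1, g x y

/-- Triangle density `t(g) = ∫∫∫ g(x,y) g(y,z) g(z,x)`. -/
noncomputable def triangleDensity (g : ℝ → ℝ → ℝ) : ℝ :=
  ∫ x in Icc (0:ℝ) 1, ∫ y in Icc (0:ℝ) 1, ∫ z in Icc (0:ℝ) 1,
    g x y * g y z * g z x

/-- Rate function `I(g) = ∫∫ I₀(g(x,y))`. -/
noncomputable def rateFn (g : ℝ → ℝ → ℝ) : ℝ :=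
  ∫ x in Icc (0:ℝ) 1, ∫ y in Icc (0:ℝ) 1, I0 (g x y)

namespace EntropyAux

/-! ### Pointwise convexity facts -/

noncomputable def psi (u : ℝ) : ℝ := u * Real.log u + (1 - u) * Real.log (1 - u) - 2 * u ^ 2

lemma continuous_psi : Continuous psi :=
  ((Real.continuous_mul_log).add
    ((Real.continuous_mul_log).comp (continuous_const.sub continuous_id))).sub
    (continuous_const.mul (continuous_pow 2))

lemma hasDerivAt_psi {x : ℝ} (hx : x ∈ Ioo (0:ℝ) 1) :
    HasDerivAt psi (Real.log x - Real.log (1 - x) - 4 * x) x := by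
  have hx0 : x ≠ 0 := ne_of_gt hx.1
  have hx1 : (1:ℝ) - x ≠ 0 := sub_ne_zero.2 (ne_of_lt hx.2).symm
  have d1 : HasDerivAt (fun u : ℝ => u * Real.log u) (Real.log x + 1) x :=
    Real.hasDerivAt_mul_log hx0
  have inner : HasDerivAt (fun u : ℝ => 1 - u) (-1 : ℝ) x := by
    simpa using (hasDerivAt_id x).const_sub 1
  have d2 : HasDerivAt (fun u : ℝ => (1 - u) * Real.log (1 - u))
      ((Real.log (1 - x) + 1) * (-1)) x :=
    (Real.hasDerivAt_mul_log hx1).comp x inner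
  have d3 : HasDerivAt (fun u : ℝ => 2 * u ^ 2) (2 * (2 * x ^ 1)) x :=
    (hasDerivAt_pow 2 x).const_mul 2
  have : HasDerivAt psi (Real.log x + 1 + (Real.log (1 - x) + 1) * (-1) - 2 * (2 * x ^ 1)) x :=
    (d1.add d2).sub d3
  convert this using 1
  ring

lemma hasDerivAt_psi' {x : ℝ} (hx : x ∈ Ioo (0:ℝ) 1) :
    HasDerivAt (fun u => Real.log u - Real.log (1 - u) - 4 * u)
      (x⁻¹ + (1 - x)⁻¹ - 4) x := by
  have hx0 : x ≠ 0 := ne_of_gt hx.1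
  have hx1 : (1:ℝ) - x ≠ 0 := sub_ne_zero.2 (ne_of_lt hx.2).symm
  have d1 : HasDerivAt Real.log x⁻¹ x := Real.hasDerivAt_log hx0
  have inner : HasDerivAt (fun u : ℝ => 1 - u) (-1 : ℝ) x := by
    simpa using (hasDerivAt_id x).const_sub 1
  have d2 : HasDerivAt (fun u : ℝ => Real.log (1 - u)) ((1 - x)⁻¹ * (-1)) x :=
    (Real.hasDerivAt_log hx1).comp x inner
  have d3 : HasDerivAt (fun u : ℝ => 4 * u) 4 x := by
    simpa using (hasDerivAt_id x).const_mul 4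
  have : HasDerivAt (fun u => Real.log u - Real.log (1 - u) - 4 * u)
      (x⁻¹ - (1 - x)⁻¹ * (-1) - 4) x := (d1.sub d2).sub d3
  convert this using 1
  ring

lemma convexOn_psi : ConvexOn ℝ (Icc (0:ℝ) 1) psi := by
  have hD : Convex ℝ (Icc (0:ℝ) 1) := convex_Icc 0 1
  refine convexOn_of_hasDerivWithinAt2_nonneg hD continuous_psi.continuousOn
    (f' := fun u => Real.log u - Real.log (1 - u) - 4 * u)
    (f'' := fun u => u⁻¹ + (1 - u)⁻¹ - 4) ?_ ?_ ?_
  · rw [interior_Icc]; exact fun x hx => (hasDerivAt_psi hx).hasDerivWithinAt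
  · rw [interior_Icc]; exact fun x hx => (hasDerivAt_psi' hx).hasDerivWithinAt
  · rw [interior_Icc]
    intro x hx
    have h0 : 0 < x := hx.1
    have h1 : 0 < 1 - x := by linarith [hx.2]
    have key : x⁻¹ + (1 - x)⁻¹ - 4 = (1 - 2*x)^2 / (x * (1 - x)) := by
      field_simp; ring
    show (0:ℝ) ≤ x⁻¹ + (1 - x)⁻¹ - 4
    rw [key]
    positivity

/-- Tangent-line bound for `psi`. -/
lemma psi_tangent {e u : ℝ} (he : e ∈ Ioo (0:ℝ) 1) (hu : u ∈ Icc (0:ℝ) 1) :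
    psi e + (Real.log e - Real.log (1 - e) - 4 * e) * (u - e) ≤ psi u := by
  set L := Real.log e - Real.log (1 - e) - 4 * e with hL
  have he' : e ∈ Icc (0:ℝ) 1 := Ioo_subset_Icc_self he
  have hd : HasDerivAt psi L e := hasDerivAt_psi he
  rcases lt_trichotomy u e with h | h | h
  · have hs := convexOn_psi.slope_le_of_hasDerivAt hu he' h hd
    rw [slope_def_field] at hs
    have := (div_le_iff₀ (by linarith : (0:ℝ) < e - u)).mp hs
    nlinarith
  · simp [h]
  · have hs := convexOn_psi.le_slope_of_hasDerivAt he' hu h hd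
    rw [slope_def_field] at hs
    have := (le_div_iff₀ (by linarith : (0:ℝ) < u - e)).mp hs
    linarith

/-- The key pointwise quadratic lower bound for `I0`. -/
lemma I0_tangent {e u : ℝ} (he : e ∈ Ioo (0:ℝ) 1) (hu : u ∈ Icc (0:ℝ) 1) :
    I0 e + ((1/2) * (Real.log e - Real.log (1 - e))) * (u - e) + (u - e)^2 ≤ I0 u := by
  have h := psi_tangent he hu
  simp only [psi] at h
  simp only [I0]
  nlinarith [h]

lemma abs_mul_log_le_one {v : ℝ} (hv : v ∈ Icc (0:ℝ) 1) : |v * Real.log v| ≤ 1 := by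
  rcases eq_or_lt_of_le hv.1 with h | h
  · simp [← h]
  · have := Real.abs_log_mul_self_lt v h hv.2
    calc |v * Real.log v| = |Real.log v * v| := by rw [mul_comm]
    _ ≤ 1 := this.le

lemma abs_I0_le_one {u : ℝ} (hu : u ∈ Icc (0:ℝ) 1) : |I0 u| ≤ 1 := by
  have h1 := abs_mul_log_le_one hu
  have h2 : |(1 - u) * Real.log (1 - u)| ≤ 1 :=
    abs_mul_log_le_one ⟨by linarith [hu.2], by linarith [hu.1]⟩
  have habs := abs_add_le (u * Real.log u) ((1 - u) * Real.log (1 - u))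
  simp only [I0, abs_mul]
  rw [abs_of_nonneg (by norm_num : (0:ℝ) ≤ 1/2)]
  linarith

lemma continuous_I0 : Continuous I0 := by
  unfold I0
  exact continuous_const.mul (Real.continuous_mul_log.add
    (Real.continuous_mul_log.comp (continuous_const.sub continuous_id)))

/-! ### Integration helpers on `[0,1]` -/

noncomputable abbrev mu01 : Measure ℝ := volume.restrict (Icc (0:ℝ) 1)

instance : IsProbabilityMeasure mu01 :=
  ⟨by simp [mu01, Real.volume_Icc]⟩

lemma int_bd {f : ℝ → ℝ} (hm : AEStronglyMeasurable f mu01) {C : ℝ}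
    (hb : ∀ x ∈ Icc (0:ℝ) 1, |f x| ≤ C) : Integrable f mu01 := by
  refine ⟨hm, HasFiniteIntegral.of_bounded (C := C) ?_⟩
  filter_upwards [ae_restrict_mem measurableSet_Icc] with x hx
  simpa [Real.norm_eq_abs] using hb x hx

lemma abs_int_le {f : ℝ → ℝ} {C : ℝ} (hb : ∀ x ∈ Icc (0:ℝ) 1, |f x| ≤ C) :
    |∫ x, f x ∂mu01| ≤ C := by
  have h : ∀ᵐ x ∂mu01, ‖f x‖ ≤ C := by
    filter_upwards [ae_restrict_mem measurableSet_Icc] with x hx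
    simpa [Real.norm_eq_abs] using hb x hx
  have := norm_integral_le_of_norm_le_const h
  simpa [Real.norm_eq_abs] using this

lemma sq_int_le {f : ℝ → ℝ} (hm : AEStronglyMeasurable f mu01) {C : ℝ}
    (hb : ∀ x ∈ Icc (0:ℝ) 1, |f x| ≤ C) :
    (∫ x, f x ∂mu01)^2 ≤ ∫ x, (f x)^2 ∂mu01 := by
  set c := ∫ x, f x ∂mu01 with hc
  have h1 : Integrable f mu01 := int_bd hm hb
  have hm2 : AEStronglyMeasurable (fun x => (f x)^2) mu01 := by
    simpa [sq, Pi.mul_def] using hm.mul hm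
  have h2 : Integrable (fun x => (f x)^2) mu01 := by
    refine int_bd hm2 (C := C^2) fun x hx => ?_
    rw [abs_pow]
    exact pow_le_pow_left₀ (abs_nonneg _) (hb x hx) 2
  have key : 0 ≤ ∫ x, (f x - c)^2 ∂mu01 := integral_nonneg fun x => sq_nonneg _
  have expand : ∫ x, (f x - c)^2 ∂mu01 = (∫ x, (f x)^2 ∂mu01) - 2*c*c + c^2 := by
    have hfe : (fun x => (f x - c)^2) = fun x => (f x)^2 - (2*c) * f x + c^2 := by
      funext x; ring
    have hsub : Integrable (fun x => f x ^ 2 - 2*c*f x) mu01 := h2.sub (h1.const_mul (2*c))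
    rw [hfe, integral_add hsub (integrable_const _), integral_sub h2 (h1.const_mul (2*c)),
      integral_const_mul, integral_const]
    simp [← hc]
  nlinarith [key, expand]

lemma meas_int {F : ℝ → ℝ → ℝ} (hm : Measurable (Function.uncurry F)) :
    Measurable (fun x => ∫ y, F x y ∂mu01) :=
  (hm.stronglyMeasurable.integral_prod_right').measurable

lemma meas_int2 {F : ℝ → ℝ → ℝ → ℝ}
    (hm : Measurable (fun p : (ℝ × ℝ) × ℝ => F p.1.1 p.1.2 p.2)) :
    Measurable (Function.uncurry (fun x y => ∫ z, F x y z ∂mu01)) :=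
  (hm.stronglyMeasurable.integral_prod_right').measurable

lemma swap_bd {F : ℝ → ℝ → ℝ} (hm : Measurable (Function.uncurry F)) {C : ℝ}
    (hb : ∀ x ∈ Icc (0:ℝ) 1, ∀ y ∈ Icc (0:ℝ) 1, |F x y| ≤ C) :
    ∫ x, ∫ y, F x y ∂mu01 ∂mu01 = ∫ y, ∫ x, F x y ∂mu01 ∂mu01 := by
  apply integral_integral_swap
  refine ⟨hm.aestronglyMeasurable, HasFiniteIntegral.of_bounded (C := C) ?_⟩
  rw [Measure.prod_restrict]
  filter_upwards [ae_restrict_mem (measurableSet_Icc.prod measurableSet_Icc)] with p hp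
  simpa [Real.norm_eq_abs, Function.uncurry] using hb p.1 hp.1 p.2 hp.2

lemma int_congr_Icc {f g : ℝ → ℝ} (h : ∀ x ∈ Icc (0:ℝ) 1, f x = g x) :
    ∫ x, f x ∂mu01 = ∫ x, g x ∂mu01 :=
  setIntegral_congr_fun measurableSet_Icc h

lemma int_mono_Icc {f g : ℝ → ℝ} (hf : Integrable f mu01) (hg : Integrable g mu01)
    (h : ∀ x ∈ Icc (0:ℝ) 1, f x ≤ g x) :
    ∫ x, f x ∂mu01 ≤ ∫ x, g x ∂mu01 :=
  setIntegral_mono_on hf hg measurableSet_Icc h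

end EntropyAux


open EntropyAux in
/-- For every `e ∈ (0,1)` there is `c > 0` such that every graphon `g` with edge
density `e` satisfies `I(g) - I₀(e) ≥ c |t(g) - e³|`. -/
theorem entropy_linear_bound (e : ℝ) (he : e ∈ Ioo (0:ℝ) 1) :
    ∃ c : ℝ, 0 < c ∧ ∀ g : ℝ → ℝ → ℝ, IsGraphon g → edgeDensity g = e →
      rateFn g - I0 e ≥ c * |triangleDensity g - e ^ 3| := by
  have he0 := he.1
  have he1 := he.2
  refine ⟨1/4, by norm_num, ?_⟩
  rintro g ⟨hgm, hgs, hgb⟩ hEdge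
  set h : ℝ → ℝ → ℝ := fun x y => g x y - e with hh
  have hhm : Measurable (Function.uncurry h) := hgm.sub measurable_const
  have hswapm : Measurable (Function.uncurry fun x z => h z x) := hhm.comp measurable_swap
  have hhb : ∀ x ∈ Icc (0:ℝ) 1, ∀ y ∈ Icc (0:ℝ) 1, |h x y| ≤ 1 := by
    intro x hx y hy
    obtain ⟨h0, h1⟩ := hgb x hx y hy
    simp only [hh]
    rw [abs_le]; constructor <;> linarith
  have hsym : ∀ x ∈ Icc (0:ℝ) 1, ∀ y ∈ Icc (0:ℝ) 1, h x y = h y x := by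
    intro x hx y hy; simp only [hh]; rw [hgs x hx y hy]
  have hslice1 : ∀ y : ℝ, Measurable fun z => h y z := fun y => hhm.of_uncurry_left
  have hslice2 : ∀ x : ℝ, Measurable fun z => h z x := fun x => hhm.of_uncurry_right
  have hint1 : ∀ y ∈ Icc (0:ℝ) 1, Integrable (fun z => h y z) mu01 :=
    fun y hy => int_bd (hslice1 y).aestronglyMeasurable (fun z hz => hhb y hy z hz)
  have hint2 : ∀ x ∈ Icc (0:ℝ) 1, Integrable (fun z => h z x) mu01 :=
    fun x hx => int_bd (hslice2 x).aestronglyMeasurable (fun z hz => hhb z hz x hx)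
  set f : ℝ → ℝ := fun x => ∫ z, h x z ∂mu01 with hf
  set f' : ℝ → ℝ := fun x => ∫ z, h z x ∂mu01 with hf'
  set q : ℝ → ℝ := fun x => ∫ z, (h x z)^2 ∂mu01 with hq
  set F : ℝ → ℝ := fun x => ∫ z, |h x z| ∂mu01 with hF
  set K : ℝ → ℝ → ℝ := fun x y => ∫ z, h y z * h z x ∂mu01 with hK
  have hfm : Measurable f := meas_int hhm
  have hf'm : Measurable f' := meas_int hswapm
  have hqm : Measurable q := meas_int (F := fun x z => (h x z)^2) (hhm.pow_const 2)
  have hFm : Measurable F := meas_int (F := fun x z => |h x z|) hhm.abs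
  have hKm : Measurable (Function.uncurry K) :=
    meas_int2 (F := fun x y z => h y z * h z x)
      ((hhm.comp (measurable_fst.snd.prodMk measurable_snd)).mul
      (hhm.comp (measurable_snd.prodMk measurable_fst.fst)))
  have hfb : ∀ x ∈ Icc (0:ℝ) 1, |f x| ≤ 1 :=
    fun x hx => abs_int_le (fun z hz => hhb x hx z hz)
  have hf'b : ∀ x ∈ Icc (0:ℝ) 1, |f' x| ≤ 1 :=
    fun x hx => abs_int_le (fun z hz => hhb z hz x hx)
  have hqb : ∀ x ∈ Icc (0:ℝ) 1, |q x| ≤ 1 := by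
    intro x hx
    refine abs_int_le fun z hz => ?_
    rw [abs_pow]
    exact pow_le_one₀ (abs_nonneg _) (hhb x hx z hz)
  have hFb : ∀ x ∈ Icc (0:ℝ) 1, |F x| ≤ 1 := by
    intro x hx
    refine abs_int_le fun z hz => ?_
    rw [abs_abs]; exact hhb x hx z hz
  have hKb : ∀ x ∈ Icc (0:ℝ) 1, ∀ y ∈ Icc (0:ℝ) 1, |K x y| ≤ 1 := by
    intro x hx y hy
    refine abs_int_le fun z hz => ?_
    rw [abs_mul]
    exact mul_le_one₀ (hhb y hy z hz) (abs_nonneg _) (hhb z hz x hx)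
  have hfint : Integrable f mu01 := int_bd hfm.aestronglyMeasurable hfb
  have hf'int : Integrable f' mu01 := int_bd hf'm.aestronglyMeasurable hf'b
  have hqint : Integrable q mu01 := int_bd hqm.aestronglyMeasurable hqb
  have hff' : ∀ x ∈ Icc (0:ℝ) 1, f' x = f x := by
    intro x hx
    exact int_congr_Icc (fun z hz => hsym z hz x hx)
  -- the mean of f is zero
  have hM : ∫ x, f x ∂mu01 = 0 := by
    have hstep : ∀ x ∈ Icc (0:ℝ) 1, f x = (∫ y, g x y ∂mu01) - e := by
      intro x hx
      have hgint : Integrable (fun y => g x y) mu01 := by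
        refine int_bd (hgm.of_uncurry_left).aestronglyMeasurable (C := 1) fun y hy => ?_
        obtain ⟨h0, h1⟩ := hgb x hx y hy
        rw [abs_le]; constructor <;> linarith
      simp only [hf, hh]
      rw [integral_sub hgint (integrable_const e), integral_const]
      simp
    rw [int_congr_Icc hstep]
    have hgint2 : Integrable (fun x => ∫ y, g x y ∂mu01) mu01 := by
      refine int_bd (meas_int hgm).aestronglyMeasurable (C := 1) fun x hx => ?_
      refine abs_int_le fun y hy => ?_
      obtain ⟨h0, h1⟩ := hgb x hx y hy
      rw [abs_le]; constructor <;> linarith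
    rw [integral_sub hgint2 (integrable_const e), integral_const]
    have hE : (∫ x, ∫ y, g x y ∂mu01 ∂mu01) = e := hEdge
    rw [hE]
    simp
  have hM' : ∫ x, f' x ∂mu01 = 0 := by rw [int_congr_Icc hff']; exact hM
  set Q := ∫ x, (f x)^2 ∂mu01 with hQdef
  set S := ∫ x, q x ∂mu01 with hSdef
  have hf2int : Integrable (fun x => (f x)^2) mu01 := by
    refine int_bd (hfm.pow_const 2).aestronglyMeasurable (C := 1) fun x hx => ?_
    rw [abs_pow]; exact pow_le_one₀ (abs_nonneg _) (hfb x hx)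
  have hQS : Q ≤ S := by
    refine int_mono_Icc hf2int hqint fun x hx => ?_
    exact sq_int_le (hslice1 x).aestronglyMeasurable (fun z hz => hhb x hx z hz)
  have hQ0 : 0 ≤ Q := integral_nonneg fun x => sq_nonneg _
  have hS0 : 0 ≤ S := le_trans hQ0 hQS
  -- Part A : entropy bound
  set L := (1/2 : ℝ) * (Real.log e - Real.log (1 - e)) with hLdef
  have hA : I0 e + S ≤ rateFn g := by
    have hinner : ∀ x ∈ Icc (0:ℝ) 1, I0 e + L * f x + q x ≤ ∫ y, I0 (g x y) ∂mu01 := by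
      intro x hx
      have hI0int : Integrable (fun y => I0 (g x y)) mu01 :=
        int_bd ((continuous_I0.measurable.comp hgm.of_uncurry_left).aestronglyMeasurable)
          (C := 1) fun y hy => abs_I0_le_one (hgb x hx y hy)
      have hsqint : Integrable (fun y => (h x y)^2) mu01 := by
        refine int_bd ((hslice1 x).pow_const 2).aestronglyMeasurable (C := 1) fun y hy => ?_
        rw [abs_pow]; exact pow_le_one₀ (abs_nonneg _) (hhb x hx y hy)
      have j00 : Integrable (fun y => L * h x y) mu01 := (hint1 x hx).const_mul L
      have j0 : Integrable (fun y => I0 e + L * h x y) mu01 := (integrable_const _).add j00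
      have hlhsint : Integrable (fun y => I0 e + L * h x y + (h x y)^2) mu01 := j0.add hsqint
      have heq : ∫ y, (I0 e + L * h x y + (h x y)^2) ∂mu01 = I0 e + L * f x + q x := by
        rw [integral_add j0 hsqint, integral_add (integrable_const (I0 e)) j00,
            integral_const, integral_const_mul]
        simp only [hf, hq]
        simp
      rw [← heq]
      refine int_mono_Icc hlhsint hI0int fun y hy => ?_
      have htang := I0_tangent he (hgb x hx y hy)
      rw [hLdef]
      simp only [hh]
      exact htang
    have hrate : rateFn g = ∫ x, ∫ y, I0 (g x y) ∂mu01 ∂mu01 := rfl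
    have houtint : Integrable (fun x => ∫ y, I0 (g x y) ∂mu01) mu01 :=
      int_bd (meas_int (F := fun x y => I0 (g x y))
          (continuous_I0.measurable.comp hgm)).aestronglyMeasurable
        (C := 1) fun x hx => abs_int_le fun y hy => abs_I0_le_one (hgb x hx y hy)
    have l0 : Integrable (fun x => L * f x) mu01 := hfint.const_mul L
    have l1 : Integrable (fun x => I0 e + L * f x) mu01 := (integrable_const _).add l0
    have hlhsint2 : Integrable (fun x => I0 e + L * f x + q x) mu01 := l1.add hqint
    have hsplit : ∫ x, (I0 e + L * f x + q x) ∂mu01 = I0 e + S := by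
      rw [integral_add l1 hqint, integral_add (integrable_const (I0 e)) l0,
          integral_const, integral_const_mul, hM]
      simp [hSdef]
    have hmono := int_mono_Icc hlhsint2 houtint hinner
    rw [hsplit] at hmono
    rw [hrate]
    linarith
  -- Part B : triangle density expansion
  set R : ℝ → ℝ := fun x => ∫ y, h x y * f y ∂mu01 with hR
  set J : ℝ → ℝ := fun x => ∫ y, K x y ∂mu01 with hJ
  set Cc : ℝ → ℝ := fun x => ∫ y, h x y * K x y ∂mu01 with hCc
  have hRm : Measurable R := meas_int (F := fun x y => h x y * f y)
    (hhm.mul (hfm.comp measurable_snd))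
  have hJm : Measurable J := meas_int hKm
  have hCcm : Measurable Cc := meas_int (F := fun x y => h x y * K x y) (hhm.mul hKm)
  have hRb : ∀ x ∈ Icc (0:ℝ) 1, |R x| ≤ 1 := by
    intro x hx
    refine abs_int_le fun y hy => ?_
    rw [abs_mul]
    exact mul_le_one₀ (hhb x hx y hy) (abs_nonneg _) (hfb y hy)
  have hJb : ∀ x ∈ Icc (0:ℝ) 1, |J x| ≤ 1 :=
    fun x hx => abs_int_le fun y hy => hKb x hx y hy
  have hCcb : ∀ x ∈ Icc (0:ℝ) 1, |Cc x| ≤ 1 := by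
    intro x hx
    refine abs_int_le fun y hy => ?_
    rw [abs_mul]
    exact mul_le_one₀ (hhb x hx y hy) (abs_nonneg _) (hKb x hx y hy)
  have hRint : Integrable R mu01 := int_bd hRm.aestronglyMeasurable hRb
  have hJint : Integrable J mu01 := int_bd hJm.aestronglyMeasurable hJb
  have hCcint : Integrable Cc mu01 := int_bd hCcm.aestronglyMeasurable hCcb
  have hf'fint : Integrable (fun x => f' x * f x) mu01 := by
    refine int_bd (hf'm.mul hfm).aestronglyMeasurable (C := 1) fun x hx => ?_
    rw [abs_mul]
    exact mul_le_one₀ (hf'b x hx) (abs_nonneg _) (hfb x hx)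
  -- innermost integral
  have hinner3 : ∀ x ∈ Icc (0:ℝ) 1, ∀ y ∈ Icc (0:ℝ) 1,
      (∫ z, g x y * g y z * g z x ∂mu01)
        = (e^3 + e^2 * h x y) + (e^2 + e * h x y) * f y
          + (e^2 + e * h x y) * f' x + (e + h x y) * K x y := by
    intro x hx y hy
    have i1 := hint1 y hy
    have i2 := hint2 x hx
    have i3 : Integrable (fun z => h y z * h z x) mu01 := by
      refine int_bd ((hslice1 y).mul (hslice2 x)).aestronglyMeasurable (C := 1) fun z hz => ?_
      rw [abs_mul]
      exact mul_le_one₀ (hhb y hy z hz) (abs_nonneg _) (hhb z hz x hx)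
    have hexp : ∀ z, g x y * g y z * g z x
        = (e^3 + e^2 * h x y) + ((e^2 + e * h x y) * h y z
          + ((e^2 + e * h x y) * h z x + (e + h x y) * (h y z * h z x))) := by
      intro z; simp only [hh]; ring
    rw [integral_congr_ae (Filter.Eventually.of_forall hexp)]
    have p1 : Integrable (fun z => (e^2 + e * h x y) * h y z) mu01 := i1.const_mul _
    have p2 : Integrable (fun z => (e^2 + e * h x y) * h z x) mu01 := i2.const_mul _
    have p3 : Integrable (fun z => (e + h x y) * (h y z * h z x)) mu01 := i3.const_mul _
    have p23 : Integrable (fun z => (e^2 + e * h x y) * h z x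
        + (e + h x y) * (h y z * h z x)) mu01 := p2.add p3
    have p123 : Integrable (fun z => (e^2 + e * h x y) * h y z
        + ((e^2 + e * h x y) * h z x + (e + h x y) * (h y z * h z x))) mu01 := p1.add p23
    rw [integral_add (integrable_const _) p123, integral_add p1 p23, integral_add p2 p3,
      integral_const_mul, integral_const_mul, integral_const_mul, integral_const]
    simp only [hf, hf', hK]
    simp
    try ring
  -- middle integral
  have hmid : ∀ x ∈ Icc (0:ℝ) 1,
      (∫ y, ∫ z, g x y * g y z * g z x ∂mu01 ∂mu01)
        = e^3 + (e^2 + e * f x) * f' x + e^2 * f x + e * R x + e * J x + Cc x := by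
    intro x hx
    rw [int_congr_Icc (fun y hy => hinner3 x hx y hy)]
    have ia := hint1 x hx
    have ic : Integrable (fun y => h x y * f y) mu01 := by
      refine int_bd ((hslice1 x).mul hfm).aestronglyMeasurable (C := 1) fun y hy => ?_
      rw [abs_mul]
      exact mul_le_one₀ (hhb x hx y hy) (abs_nonneg _) (hfb y hy)
    have idK : Integrable (fun y => K x y) mu01 :=
      int_bd (hKm.of_uncurry_left).aestronglyMeasurable (fun y hy => hKb x hx y hy)
    have ie : Integrable (fun y => h x y * K x y) mu01 := by
      refine int_bd ((hslice1 x).mul hKm.of_uncurry_left).aestronglyMeasurable (C := 1)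
        fun y hy => ?_
      rw [abs_mul]
      exact mul_le_one₀ (hhb x hx y hy) (abs_nonneg _) (hKb x hx y hy)
    have hexp : ∀ y, (e^3 + e^2 * h x y) + (e^2 + e * h x y) * f y
          + (e^2 + e * h x y) * f' x + (e + h x y) * K x y
        = (e^3 + e^2 * f' x) + ((e^2 + e * f' x) * h x y
          + (e^2 * f y + (e * (h x y * f y) + (e * K x y + h x y * K x y)))) := by
      intro y; ring
    rw [integral_congr_ae (Filter.Eventually.of_forall hexp)]
    have j2 : Integrable (fun y => (e^2 + e * f' x) * h x y) mu01 := ia.const_mul _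
    have j3 : Integrable (fun y => e^2 * f y) mu01 := hfint.const_mul _
    have j4 : Integrable (fun y => e * (h x y * f y)) mu01 := ic.const_mul _
    have j5 : Integrable (fun y => e * K x y) mu01 := idK.const_mul _
    have j56 : Integrable (fun y => e * K x y + h x y * K x y) mu01 := j5.add ie
    have j456 : Integrable (fun y => e * (h x y * f y)
        + (e * K x y + h x y * K x y)) mu01 := j4.add j56
    have j3456 : Integrable (fun y => e^2 * f y
        + (e * (h x y * f y) + (e * K x y + h x y * K x y))) mu01 := j3.add j456
    have j23456 : Integrable (fun y => (e^2 + e * f' x) * h x y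
        + (e^2 * f y + (e * (h x y * f y) + (e * K x y + h x y * K x y)))) mu01 := j2.add j3456
    rw [integral_add (integrable_const _) j23456,
      integral_add j2 j3456,
      integral_add j3 j456,
      integral_add j4 j56,
      integral_add j5 ie,
      integral_const_mul, integral_const_mul, integral_const_mul, integral_const_mul,
      integral_const, hM]
    simp only [hf, hR, hJ, hCc]
    simp
    try ring
  -- outer integral
  have hT : triangleDensity g
      = e^3 + e * (∫ x, f' x * f x ∂mu01) + e * (∫ x, R x ∂mu01) + e * (∫ x, J x ∂mu01)
        + (∫ x, Cc x ∂mu01) := by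
    have htd : triangleDensity g = ∫ x, ∫ y, ∫ z, g x y * g y z * g z x ∂mu01 ∂mu01 ∂mu01 := rfl
    rw [htd, int_congr_Icc hmid]
    have hffint2 : Integrable (fun x => f x * f' x) mu01 := by
      refine hf'fint.congr (Filter.Eventually.of_forall fun x => ?_)
      show f' x * f x = f x * f' x
      ring
    have k1 : Integrable (fun x => (e^2 + e * f x) * f' x) mu01 := by
      have k1a : Integrable (fun x => e^2 * f' x) mu01 := hf'int.const_mul _
      have k1b : Integrable (fun x => e * (f x * f' x)) mu01 := hffint2.const_mul _
      have k1ab : Integrable (fun x => e^2 * f' x + e * (f x * f' x)) mu01 := k1a.add k1b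
      refine k1ab.congr (Filter.Eventually.of_forall fun x => ?_)
      show e^2 * f' x + e * (f x * f' x) = (e^2 + e * f x) * f' x
      ring
    have k2 : Integrable (fun x => e^2 * f x) mu01 := hfint.const_mul _
    have k3 : Integrable (fun x => e * R x) mu01 := hRint.const_mul _
    have k4 : Integrable (fun x => e * J x) mu01 := hJint.const_mul _
    have k12 : Integrable (fun x => e^3 + (e^2 + e * f x) * f' x) mu01 :=
      (integrable_const _).add k1
    have k123 : Integrable (fun x => e^3 + (e^2 + e * f x) * f' x + e^2 * f x) mu01 :=
      k12.add k2
    have k1234 : Integrable (fun x => e^3 + (e^2 + e * f x) * f' x + e^2 * f x + e * R x)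
        mu01 := k123.add k3
    have k12345 : Integrable (fun x => e^3 + (e^2 + e * f x) * f' x + e^2 * f x + e * R x
        + e * J x) mu01 := k1234.add k4
    rw [integral_add k12345 hCcint, integral_add k1234 k4, integral_add k123 k3,
      integral_add k12 k2, integral_add (integrable_const _) k1,
      integral_const_mul, integral_const_mul, integral_const_mul, hM,
      integral_const]
    have hsplit1 : ∫ x, (e^2 + e * f x) * f' x ∂mu01
        = e^2 * (∫ x, f' x ∂mu01) + e * ∫ x, f x * f' x ∂mu01 := by
      have m1 : Integrable (fun x => e^2 * f' x) mu01 := hf'int.const_mul _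
      have m2 : Integrable (fun x => e * (f x * f' x)) mu01 := hffint2.const_mul _
      have hcongr : ∀ x : ℝ, (e^2 + e * f x) * f' x = e^2 * f' x + e * (f x * f' x) := by
        intro x; ring
      rw [integral_congr_ae (Filter.Eventually.of_forall hcongr),
        integral_add m1 m2, integral_const_mul, integral_const_mul]
    rw [hsplit1, hM']
    have hswap2 : (∫ x, f x * f' x ∂mu01) = ∫ x, f' x * f x ∂mu01 :=
      integral_congr_ae (Filter.Eventually.of_forall fun x => mul_comm _ _)
    rw [hswap2]
    simp
    try ring
  -- the three quadratic terms all equal Q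
  have hQ1 : (∫ x, f' x * f x ∂mu01) = Q := by
    rw [hQdef]
    exact int_congr_Icc fun x hx => by
      show f' x * f x = f x ^ 2
      rw [hff' x hx, ← pow_two]
  have hQ2 : (∫ x, R x ∂mu01) = Q := by
    have hswap : (∫ x, ∫ y, h x y * f y ∂mu01 ∂mu01) = ∫ y, ∫ x, h x y * f y ∂mu01 ∂mu01 := by
      refine swap_bd (F := fun x y => h x y * f y)
        (hhm.mul (hfm.comp measurable_snd)) (C := 1) fun x hx y hy => ?_
      rw [abs_mul]
      exact mul_le_one₀ (hhb x hx y hy) (abs_nonneg _) (hfb y hy)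
    have hstep : ∫ x, R x ∂mu01 = ∫ y, (∫ x, h x y ∂mu01) * f y ∂mu01 := by
      simp only [hR]
      rw [hswap]
      exact integral_congr_ae (Filter.Eventually.of_forall fun y =>
        integral_mul_const (f y) (fun x => h x y))
    rw [hstep]
    have : ∀ y ∈ Icc (0:ℝ) 1, (∫ x, h x y ∂mu01) * f y = (f y)^2 := by
      intro y hy
      have hfy : (∫ x, h x y ∂mu01) = f y := int_congr_Icc fun x hx => hsym x hx y hy
      rw [hfy, ← pow_two]
    rw [int_congr_Icc this]
  have hQ3 : (∫ x, J x ∂mu01) = Q := by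
    have hJx : ∀ x ∈ Icc (0:ℝ) 1, J x = ∫ z, (∫ y, h y z ∂mu01) * h z x ∂mu01 := by
      intro x hx
      simp only [hJ, hK]
      have hs : (∫ y, ∫ z, h y z * h z x ∂mu01 ∂mu01)
          = ∫ z, ∫ y, h y z * h z x ∂mu01 ∂mu01 := by
        refine swap_bd (F := fun y z => h y z * h z x)
          (hhm.mul (hhm.comp (measurable_snd.prodMk measurable_const))) (C := 1)
          fun y hy z hz => ?_
        rw [abs_mul]
        exact mul_le_one₀ (hhb y hy z hz) (abs_nonneg _) (hhb z hz x hx)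
      rw [hs]
      exact integral_congr_ae (Filter.Eventually.of_forall fun z =>
        integral_mul_const (h z x) (fun y => h y z))
    rw [int_congr_Icc hJx]
    have hs2 : (∫ x, ∫ z, (∫ y, h y z ∂mu01) * h z x ∂mu01 ∂mu01)
        = ∫ z, ∫ x, (∫ y, h y z ∂mu01) * h z x ∂mu01 ∂mu01 := by
      refine swap_bd (F := fun x z => (∫ y, h y z ∂mu01) * h z x)
        ((hf'm.comp measurable_snd).mul hswapm) (C := 1) fun x hx z hz => ?_
      rw [abs_mul]
      exact mul_le_one₀ (hf'b z hz) (abs_nonneg _) (hhb z hz x hx)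
    rw [hs2]
    have hstep : ∀ z : ℝ, (∫ x, (∫ y, h y z ∂mu01) * h z x ∂mu01)
        = f' z * f z := fun z => integral_const_mul _ _
    rw [integral_congr_ae (Filter.Eventually.of_forall hstep)]
    rw [hQdef]
    exact int_congr_Icc fun z hz => by
      show f' z * f z = f z ^ 2
      rw [hff' z hz, ← pow_two]
  -- bounding the cubic term
  have hCc_bound : |∫ x, Cc x ∂mu01| ≤ S := by
    have hCcabs_int : Integrable (fun x => |Cc x|) mu01 := hCcint.abs
    have houter_meas : Measurable (fun x => ∫ y, |h x y| * F y ∂mu01) :=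
      meas_int (F := fun x y => |h x y| * F y) (hhm.abs.mul (hFm.comp measurable_snd))
    have houter_bd : ∀ x ∈ Icc (0:ℝ) 1, |∫ y, |h x y| * F y ∂mu01| ≤ 1 := by
      intro x hx
      refine abs_int_le fun y hy => ?_
      rw [abs_mul, abs_abs]
      exact mul_le_one₀ (hhb x hx y hy) (abs_nonneg _) (by simpa using hFb y hy)
    have houter_int : Integrable (fun x => ∫ y, |h x y| * F y ∂mu01) mu01 :=
      int_bd houter_meas.aestronglyMeasurable houter_bd
    have step1 : |∫ x, Cc x ∂mu01| ≤ ∫ x, |Cc x| ∂mu01 := by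
      simpa [Real.norm_eq_abs] using norm_integral_le_integral_norm (μ := mu01) Cc
    have step2 : ∫ x, |Cc x| ∂mu01 ≤ ∫ x, (∫ y, |h x y| * F y ∂mu01) ∂mu01 := by
      refine int_mono_Icc hCcabs_int houter_int fun x hx => ?_
      have habs1 : |Cc x| ≤ ∫ y, |h x y| * |K x y| ∂mu01 := by
        simpa [hCc, Real.norm_eq_abs, abs_mul] using
          norm_integral_le_integral_norm (μ := mu01) (fun y => h x y * K x y)
      refine le_trans habs1 ?_
      have hmint : Integrable (fun y => |h x y| * |K x y|) mu01 := by
        refine int_bd ((hslice1 x).abs.mul hKm.of_uncurry_left.abs).aestronglyMeasurable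
          (C := 1) fun y hy => ?_
        rw [abs_mul, abs_abs, abs_abs]
        exact mul_le_one₀ (hhb x hx y hy) (abs_nonneg _) (hKb x hx y hy)
      have hmint2 : Integrable (fun y => |h x y| * F y) mu01 := by
        refine int_bd ((hslice1 x).abs.mul hFm).aestronglyMeasurable (C := 1) fun y hy => ?_
        rw [abs_mul, abs_abs]
        exact mul_le_one₀ (hhb x hx y hy) (abs_nonneg _) (by simpa using hFb y hy)
      refine int_mono_Icc hmint hmint2 fun y hy => ?_
      refine mul_le_mul_of_nonneg_left ?_ (abs_nonneg _)
      -- |K x y| ≤ F y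
      have hk1 : |K x y| ≤ ∫ z, |h y z| * |h z x| ∂mu01 := by
        simpa [hK, Real.norm_eq_abs, abs_mul] using
          norm_integral_le_integral_norm (μ := mu01) (fun z => h y z * h z x)
      refine le_trans hk1 ?_
      have hi1 : Integrable (fun z => |h y z| * |h z x|) mu01 := by
        refine int_bd ((hslice1 y).abs.mul (hslice2 x).abs).aestronglyMeasurable
          (C := 1) fun z hz => ?_
        rw [abs_mul, abs_abs, abs_abs]
        exact mul_le_one₀ (hhb y hy z hz) (abs_nonneg _) (hhb z hz x hx)
      have hi2 : Integrable (fun z => |h y z|) mu01 := by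
        refine int_bd (hslice1 y).abs.aestronglyMeasurable (C := 1) fun z hz => ?_
        rw [abs_abs]; exact hhb y hy z hz
      exact int_mono_Icc hi1 hi2 fun z hz =>
        mul_le_of_le_one_right (abs_nonneg _) (hhb z hz x hx)
    have step3 : ∫ x, (∫ y, |h x y| * F y ∂mu01) ∂mu01
        = ∫ y, (∫ x, |h x y| ∂mu01) * F y ∂mu01 := by
      have hs : (∫ x, ∫ y, |h x y| * F y ∂mu01 ∂mu01)
          = ∫ y, ∫ x, |h x y| * F y ∂mu01 ∂mu01 := by
        refine swap_bd (F := fun x y => |h x y| * F y)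
          (hhm.abs.mul (hFm.comp measurable_snd)) (C := 1) fun x hx y hy => ?_
        rw [abs_mul, abs_abs]
        exact mul_le_one₀ (hhb x hx y hy) (abs_nonneg _) (by simpa using hFb y hy)
      rw [hs]
      exact integral_congr_ae (Filter.Eventually.of_forall fun y =>
        integral_mul_const (F y) (fun x => |h x y|))
    have hF2int : Integrable (fun y => (F y)^2) mu01 := by
      refine int_bd (hFm.pow_const 2).aestronglyMeasurable (C := 1) fun y hy => ?_
      rw [abs_pow]
      exact pow_le_one₀ (abs_nonneg _) (hFb y hy)
    have step4 : ∫ y, (∫ x, |h x y| ∂mu01) * F y ∂mu01 ≤ S := by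
      have hcongr : ∀ y ∈ Icc (0:ℝ) 1, (∫ x, |h x y| ∂mu01) * F y = (F y)^2 := by
        intro y hy
        have hFy : (∫ x, |h x y| ∂mu01) = F y :=
          int_congr_Icc fun x hx => by rw [hsym x hx y hy]
        rw [hFy, ← pow_two]
      rw [int_congr_Icc hcongr, hSdef]
      refine int_mono_Icc hF2int hqint fun y hy => ?_
      have hcs := sq_int_le (f := fun z => |h y z|) (hslice1 y).abs.aestronglyMeasurable
        (C := 1) (fun z hz => by rw [abs_abs]; exact hhb y hy z hz)
      calc (F y)^2 ≤ ∫ z, (|h y z|)^2 ∂mu01 := hcs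
        _ = q y := by simp only [hq, sq_abs]
    linarith [step1, step2, step3, step4]
  -- assemble
  have hTabs : |triangleDensity g - e^3| ≤ 4 * S := by
    have hTval : triangleDensity g - e^3 = e*Q + e*Q + e*Q + (∫ x, Cc x ∂mu01) := by
      rw [hT, hQ1, hQ2, hQ3]; ring
    rw [hTval]
    have habs : |e*Q + e*Q + e*Q + (∫ x, Cc x ∂mu01)|
        ≤ |e*Q + e*Q + e*Q| + |∫ x, Cc x ∂mu01| := abs_add_le _ _
    have h3 : |e*Q + e*Q + e*Q| = 3*(e*Q) := by
      rw [abs_of_nonneg (by nlinarith)]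
      ring
    have h4 : 3*(e*Q) ≤ 3*S := by nlinarith
    rw [h3] at habs
    linarith [hCc_bound]
  rw [ge_iff_le]
  have hfinal : (1/4 : ℝ) * |triangleDensity g - e ^ 3| ≤ S := by linarith [hTabs]
  linarith [hA, hfinal]
end

section
/- For every e ∈ (0,1) there exists a constant c̃ > 0 (depending only on e) such that every graphon g with edge density e(g) = e and triangle density t(g) ≤ e³ satisfies I(g) - I₀(e) ≥ c̃·(e³ - t(g))^{2/3}. -/
open MeasureTheory Set

lemma I0_continuous : Continuous I0 := by
  unfold I0
  have h1 : Continuous fun u : ℝ => u * Real.log u := Real.continuous_mul_log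
  have h2 : Continuous fun u : ℝ => (1 - u) * Real.log (1 - u) :=
    Real.continuous_mul_log.comp (continuous_const.sub continuous_id)
  continuity

lemma I0_hasDeriv {u : ℝ} (h0 : 0 < u) (h1 : u < 1) :
    HasDerivAt I0 ((1/2) * (Real.log u - Real.log (1 - u))) u := by
  have hA : HasDerivAt (fun t : ℝ => t * Real.log t) (Real.log u + 1) u :=
    Real.hasDerivAt_mul_log h0.ne'
  have hsub : HasDerivAt (fun t : ℝ => 1 - t) (-1 : ℝ) u := by
    simpa using (hasDerivAt_id u).const_sub 1
  have hB : HasDerivAt (fun t : ℝ => (1 - t) * Real.log (1 - t))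
      ((Real.log (1 - u) + 1) * (-1)) u :=
    (Real.hasDerivAt_mul_log (by linarith : (1:ℝ) - u ≠ 0)).comp u hsub
  have := ((hA.add hB).const_mul (1/2 : ℝ))
  exact this.congr_deriv (by ring)

/-- Pinsker-type pointwise convexity inequality. -/
lemma pinsker {e u : ℝ} (he : e ∈ Ioo (0:ℝ) 1) (hu : u ∈ Icc (0:ℝ) 1) :
    I0 e + (1/2) * (Real.log e - Real.log (1 - e)) * (u - e) + (u - e)^2 ≤ I0 u := by
  obtain ⟨he0, he1⟩ := he
  set A : ℝ := (1/2) * (Real.log e - Real.log (1 - e)) with hA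
  set φ : ℝ → ℝ := fun t => I0 t - I0 e - A * (t - e) - (t - e)^2 with hφ
  set ψ : ℝ → ℝ := fun t => (1/2) * (Real.log t - Real.log (1 - t)) - A - 2 * (t - e) with hψ
  have hφc : Continuous φ := by
    show Continuous fun t => I0 t - I0 e - A * (t - e) - (t - e)^2
    have := I0_continuous
    continuity
  have hφd : ∀ t ∈ Ioo (0:ℝ) 1, HasDerivAt φ (ψ t) t := by
    intro t ht
    have h1 := I0_hasDeriv ht.1 ht.2
    have h2 : HasDerivAt (fun s : ℝ => I0 e + A * (s - e) + (s - e)^2)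
        (A + 2 * (t - e)) t := by
      have ha : HasDerivAt (fun s : ℝ => s - e) 1 t := by
        simpa using (hasDerivAt_id t).sub_const e
      have hb : HasDerivAt (fun s : ℝ => (s - e)^2) (2 * (t - e)) t := by
        have := ha.pow 2
        exact this.congr_deriv (by norm_num)
      have hc : HasDerivAt (fun s : ℝ => A * (s - e)) A t := by
        simpa using ha.const_mul A
      exact ((hc.const_add (I0 e)).add hb)
    have := h1.sub h2
    convert this using 1
    · rfl
    · rfl
    · funext s; simp only [hφ, Pi.sub_apply]; ring
    · simp only [hψ]; ring
  -- ψ is monotone on Ioo 0 1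
  have hψd : ∀ t ∈ Ioo (0:ℝ) 1, HasDerivAt ψ ((1/2) * (1/t + 1/(1-t)) - 2) t := by
    intro t ht
    obtain ⟨ht0, ht1⟩ := ht
    have hl1 : HasDerivAt Real.log (1/t) t := by
      simpa [one_div] using Real.hasDerivAt_log ht0.ne'
    have hsub : HasDerivAt (fun s : ℝ => 1 - s) (-1 : ℝ) t := by
      simpa using (hasDerivAt_id t).const_sub 1
    have hl2 : HasDerivAt (fun s : ℝ => Real.log (1 - s)) ((1/(1-t)) * (-1)) t := by
      have : HasDerivAt Real.log (1/(1-t)) (1-t) := by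
        simpa [one_div] using Real.hasDerivAt_log (by linarith : (1:ℝ) - t ≠ 0)
      exact this.comp t hsub
    have hlin : HasDerivAt (fun s : ℝ => A + 2 * (s - e)) 2 t := by
      have : HasDerivAt (fun s : ℝ => s - e) 1 t := by
        simpa using (hasDerivAt_id t).sub_const e
      simpa using (this.const_mul 2).const_add A
    have := ((hl1.sub hl2).const_mul (1/2 : ℝ)).sub hlin
    convert this using 1
    · rfl
    · rfl
    · funext s; simp only [hψ, Pi.sub_apply]; ring
    · ring
  have hψmono : MonotoneOn ψ (Ioo (0:ℝ) 1) := by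
    apply monotoneOn_of_deriv_nonneg (convex_Ioo 0 1)
    · exact fun t ht => (hψd t ht).continuousAt.continuousWithinAt
    · intro t ht
      rw [interior_Ioo] at ht
      exact (hψd t ht).differentiableAt.differentiableWithinAt
    · intro t ht
      rw [interior_Ioo] at ht
      rw [(hψd t ht).deriv]
      have h0t : 0 < t := ht.1
      have h1t : 0 < 1 - t := by linarith [ht.2]
      have key : 1/t + 1/(1-t) ≥ 4 := by
        rw [div_add_div _ _ h0t.ne' h1t.ne', ge_iff_le, le_div_iff₀ (by positivity)]
        nlinarith [sq_nonneg (t - 1/2)]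
      linarith
  have hψe : ψ e = 0 := by simp only [hψ, hA]; ring
  have hφe : φ e = 0 := by simp only [hφ]; ring
  have heI : e ∈ Ioo (0:ℝ) 1 := ⟨he0, he1⟩
  -- φ antitone on [0,e], monotone on [e,1]
  have hanti : AntitoneOn φ (Icc (0:ℝ) e) := by
    apply antitoneOn_of_deriv_nonpos (convex_Icc 0 e) hφc.continuousOn
    · intro t ht
      rw [interior_Icc] at ht
      exact (hφd t ⟨ht.1, lt_trans ht.2 he1⟩).differentiableAt.differentiableWithinAt
    · intro t ht
      rw [interior_Icc] at ht
      have htI : t ∈ Ioo (0:ℝ) 1 := ⟨ht.1, lt_trans ht.2 he1⟩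
      rw [(hφd t htI).deriv]
      calc ψ t ≤ ψ e := hψmono htI heI (le_of_lt ht.2)
        _ = 0 := hψe
  have hmono : MonotoneOn φ (Icc e 1) := by
    apply monotoneOn_of_deriv_nonneg (convex_Icc e 1) hφc.continuousOn
    · intro t ht
      rw [interior_Icc] at ht
      exact (hφd t ⟨lt_trans he0 ht.1, ht.2⟩).differentiableAt.differentiableWithinAt
    · intro t ht
      rw [interior_Icc] at ht
      have htI : t ∈ Ioo (0:ℝ) 1 := ⟨lt_trans he0 ht.1, ht.2⟩
      rw [(hφd t htI).deriv]
      calc (0:ℝ) = ψ e := hψe.symm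
        _ ≤ ψ t := hψmono heI htI (le_of_lt ht.1)
  have hφnn : 0 ≤ φ u := by
    rcases le_total u e with h | h
    · have := hanti ⟨hu.1, h⟩ ⟨hu.1.trans h, le_refl e⟩ h
      rw [hφe] at this; exact this
    · have := hmono ⟨le_refl e, he1.le⟩ ⟨h, hu.2⟩ h
      rw [hφe] at this; exact this
  simp only [hφ] at hφnn
  linarith

noncomputable abbrev μ01 : MeasureTheory.Measure ℝ := MeasureTheory.volume.restrict (Icc (0:ℝ) 1)

instance : IsProbabilityMeasure μ01 :=
  ⟨by rw [Measure.restrict_apply_univ, Real.volume_Icc]; norm_num⟩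

lemma intg {φ : ℝ → ℝ} (hφ : Measurable φ) {C : ℝ}
    (h : ∀ t ∈ Icc (0:ℝ) 1, |φ t| ≤ C) : Integrable φ μ01 := by
  refine Measure.integrableOn_of_bounded (M := C) ?_ hφ.aestronglyMeasurable ?_
  · rw [Real.volume_Icc]; norm_num
  · exact (ae_restrict_iff' measurableSet_Icc).2 (ae_of_all _ fun t ht => by
      rw [Real.norm_eq_abs]; exact h t ht)

lemma intg2 {F : ℝ × ℝ → ℝ} (hF : Measurable F) {C : ℝ}
    (h : ∀ p ∈ Icc (0:ℝ) 1 ×ˢ Icc (0:ℝ) 1, |F p| ≤ C) :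
    Integrable F (μ01.prod μ01) := by
  rw [Measure.prod_restrict]
  refine Measure.integrableOn_of_bounded (M := C) ?_ hF.aestronglyMeasurable ?_
  · rw [Measure.prod_prod, Real.volume_Icc]; norm_num
  · exact (ae_restrict_iff' (measurableSet_Icc.prod measurableSet_Icc)).2
      (ae_of_all _ fun p hp => by rw [Real.norm_eq_abs]; exact h p hp)

lemma abs_int_le {φ : ℝ → ℝ} {C : ℝ}
    (h : ∀ t ∈ Icc (0:ℝ) 1, |φ t| ≤ C) : |∫ t in Icc (0:ℝ) 1, φ t| ≤ C := by
  have hb : ∀ᵐ t ∂μ01, ‖φ t‖ ≤ C := (ae_restrict_iff' measurableSet_Icc).2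
    (ae_of_all _ fun t ht => by rw [Real.norm_eq_abs]; exact h t ht)
  have := norm_integral_le_of_norm_le_const (μ := μ01) hb
  simpa [Real.norm_eq_abs, measure_univ] using this

lemma integral_CS {α : Type*} {m : MeasurableSpace α} {ν : Measure α} {u v : α → ℝ}
    (hu : Integrable (fun a => u a ^ 2) ν) (hv : Integrable (fun a => v a ^ 2) ν)
    (huv : Integrable (fun a => u a * v a) ν) :
    (∫ a, u a * v a ∂ν) ^ 2 ≤ (∫ a, u a ^ 2 ∂ν) * (∫ a, v a ^ 2 ∂ν) := by
  set A := ∫ a, u a ^ 2 ∂ν with hA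
  set B := ∫ a, v a ^ 2 ∂ν with hB
  set C := ∫ a, u a * v a ∂ν with hC
  have key : ∀ t : ℝ, 0 ≤ A * (t * t) + (2 * C) * t + B := by
    intro t
    have h0 : 0 ≤ ∫ a, (t * u a + v a) ^ 2 ∂ν := integral_nonneg fun a => sq_nonneg _
    have hfun : (fun a => (t * u a + v a) ^ 2)
        = fun a => (t^2) * (u a ^ 2) + ((2*t) * (u a * v a) + v a ^ 2) := by
      funext a; ring
    rw [hfun] at h0
    have i1 : Integrable (fun a => (t^2) * (u a ^ 2)) ν := hu.const_mul _
    have i2 : Integrable (fun a => (2*t) * (u a * v a)) ν := huv.const_mul _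
    have i3 : Integrable (fun a => (2*t) * (u a * v a) + v a ^ 2) ν := i2.add hv
    rw [integral_add i1 i3, integral_add i2 hv, integral_const_mul, integral_const_mul] at h0
    rw [← hA, ← hB, ← hC] at h0
    nlinarith [h0]
  have hd := discrim_le_zero key
  rw [discrim] at hd
  nlinarith [hd]

lemma abs_integral_CS {α : Type*} {m : MeasurableSpace α} {ν : Measure α} {u v : α → ℝ}
    (hu : Integrable (fun a => u a ^ 2) ν) (hv : Integrable (fun a => v a ^ 2) ν)
    (huv : Integrable (fun a => u a * v a) ν) :
    |∫ a, u a * v a ∂ν| ≤ Real.sqrt ((∫ a, u a ^ 2 ∂ν) * (∫ a, v a ^ 2 ∂ν)) := by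
  have h := integral_CS hu hv huv
  have := Real.sqrt_le_sqrt h
  rwa [Real.sqrt_sq_eq_abs] at this

noncomputable def ddF (f : ℝ → ℝ → ℝ) (x : ℝ) : ℝ := ∫ y, f x y ∂μ01
noncomputable def S2F (f : ℝ → ℝ → ℝ) : ℝ := ∫ x, (∫ y, (f x y)^2 ∂μ01) ∂μ01
noncomputable def QF (f : ℝ → ℝ → ℝ) : ℝ := ∫ x, (ddF f x)^2 ∂μ01
noncomputable def BF (f : ℝ → ℝ → ℝ) (a b : ℝ) : ℝ := ∫ w, f a w * f w b ∂μ01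
noncomputable def T3F (f : ℝ → ℝ → ℝ) : ℝ :=
  ∫ x, (∫ y, (∫ z, f x y * f y z * f z x ∂μ01) ∂μ01) ∂μ01

section Meas

variable {f : ℝ → ℝ → ℝ} (hm : Measurable (Function.uncurry f))

include hm

lemma mL (x : ℝ) : Measurable (f x) := by
  have : Measurable fun y => Function.uncurry f (x, y) := hm.comp measurable_prodMk_left
  exact this

lemma mR (y : ℝ) : Measurable (fun x => f x y) := by
  have : Measurable fun x => Function.uncurry f (x, y) := hm.comp measurable_prodMk_right
  exact this

lemma m_dd : Measurable (ddF f) := by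
  have : StronglyMeasurable fun x => ∫ y, Function.uncurry f (x, y) ∂μ01 :=
    hm.stronglyMeasurable.integral_prod_right'
  exact this.measurable

lemma m_sq : Measurable (Function.uncurry fun x y => (f x y)^2) := by
  have : Measurable fun p : ℝ × ℝ => (Function.uncurry f p)^2 := hm.pow_const 2
  exact this

lemma m_inn_sq : Measurable (fun x => ∫ y, (f x y)^2 ∂μ01) := by
  have : StronglyMeasurable fun x => ∫ y, Function.uncurry (fun x y => (f x y)^2) (x, y) ∂μ01 :=
    (m_sq hm).stronglyMeasurable.integral_prod_right'
  exact this.measurable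

lemma m_BF : Measurable (Function.uncurry (BF f)) := by
  have hh : Measurable fun q : (ℝ × ℝ) × ℝ => f q.1.1 q.2 * f q.2 q.1.2 := by
    have h1 : Measurable fun q : (ℝ × ℝ) × ℝ => f q.1.1 q.2 :=
      hm.comp ((measurable_fst.comp measurable_fst).prodMk measurable_snd)
    have h2 : Measurable fun q : (ℝ × ℝ) × ℝ => f q.2 q.1.2 :=
      hm.comp (measurable_snd.prodMk (measurable_snd.comp measurable_fst))
    exact h1.mul h2
  have : StronglyMeasurable fun p : ℝ × ℝ => ∫ w, f p.1 w * f w p.2 ∂μ01 :=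
    hh.stronglyMeasurable.integral_prod_right'
  exact this.measurable

end Meas

section Bounds

variable {f : ℝ → ℝ → ℝ}
  (hb : ∀ x ∈ Icc (0:ℝ) 1, ∀ y ∈ Icc (0:ℝ) 1, |f x y| ≤ 1)

include hb

lemma b_dd : ∀ x ∈ Icc (0:ℝ) 1, |ddF f x| ≤ 1 :=
  fun x hx => abs_int_le (fun y hy => hb x hx y hy)

lemma b_BF : ∀ a ∈ Icc (0:ℝ) 1, ∀ b ∈ Icc (0:ℝ) 1, |BF f a b| ≤ 1 := by
  intro a ha b hbb
  refine abs_int_le (fun w hw => ?_)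
  rw [abs_mul]
  exact mul_le_one₀ (hb a ha w hw) (abs_nonneg _) (hb w hw b hbb)

lemma b_sq : ∀ x ∈ Icc (0:ℝ) 1, ∀ y ∈ Icc (0:ℝ) 1, |(f x y)^2| ≤ 1 := by
  intro x hx y hy
  rw [abs_pow]
  exact pow_le_one₀ (abs_nonneg _) (hb x hx y hy)

lemma b_inn_sq : ∀ x ∈ Icc (0:ℝ) 1, |∫ y, (f x y)^2 ∂μ01| ≤ 1 :=
  fun x hx => abs_int_le (fun y hy => b_sq hb x hx y hy)

omit hb in
lemma S2F_nonneg : 0 ≤ S2F f :=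
  integral_nonneg fun x => integral_nonneg fun y => sq_nonneg _

omit hb in
lemma QF_nonneg : 0 ≤ QF f := integral_nonneg fun x => sq_nonneg _

end Bounds

section T3B

variable {f : ℝ → ℝ → ℝ} (hm : Measurable (Function.uncurry f))
  (hb : ∀ x ∈ Icc (0:ℝ) 1, ∀ y ∈ Icc (0:ℝ) 1, |f x y| ≤ 1)

include hm

lemma m_inn_sq' : Measurable (fun z => ∫ y, (f y z)^2 ∂μ01) := by
  have hmm : Measurable (Function.uncurry fun z y => (f y z)^2) := by
    have : Measurable fun p : ℝ × ℝ => (f p.2 p.1)^2 :=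
      (hm.comp (measurable_snd.prodMk measurable_fst)).pow_const 2
    exact this
  have : StronglyMeasurable fun z => ∫ y, Function.uncurry (fun z y => (f y z)^2) (z, y) ∂μ01 :=
    hmm.stronglyMeasurable.integral_prod_right'
  exact this.measurable

include hb

lemma b_inn_sq' : ∀ z ∈ Icc (0:ℝ) 1, |∫ y, (f y z)^2 ∂μ01| ≤ 1 := by
  intro z hz
  refine abs_int_le (fun y hy => ?_)
  rw [abs_pow]
  exact pow_le_one₀ (abs_nonneg _) (hb y hy z hz)

lemma swap_sq : (∫ z, (∫ y, (f y z)^2 ∂μ01) ∂μ01) = S2F f := by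
  have hi : Integrable (Function.uncurry fun z y => (f y z)^2) (μ01.prod μ01) := by
    refine intg2 (C := 1) ?_ ?_
    · exact (hm.comp (measurable_snd.prodMk measurable_fst)).pow_const 2
    · rintro ⟨z, y⟩ ⟨hz, hy⟩
      simp only [Function.uncurry]
      rw [abs_pow]
      exact pow_le_one₀ (abs_nonneg _) (hb y hy z hz)
  exact integral_integral_swap hi

lemma T3_bound : |T3F f| ≤ Real.sqrt (S2F f) * S2F f := by
  have hS2 : 0 ≤ S2F f := S2F_nonneg
  -- Step 1: inner swap
  have step1 : ∀ x ∈ Icc (0:ℝ) 1,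
      (∫ y, (∫ z, f x y * f y z * f z x ∂μ01) ∂μ01) = ∫ z, BF f x z * f z x ∂μ01 := by
    intro x hx
    have hint : Integrable (Function.uncurry fun y z => f x y * f y z * f z x)
        (μ01.prod μ01) := by
      refine intg2 (C := 1) ?_ ?_
      · have h1 : Measurable fun p : ℝ × ℝ => f x p.1 := (mL hm x).comp measurable_fst
        have h3 : Measurable fun p : ℝ × ℝ => f p.2 x := (mR hm x).comp measurable_snd
        exact (h1.mul hm).mul h3
      · rintro ⟨y, z⟩ ⟨hy, hz⟩
        simp only [Function.uncurry]
        rw [abs_mul, abs_mul]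
        exact mul_le_one₀ (mul_le_one₀ (hb x hx y hy) (abs_nonneg _) (hb y hy z hz))
          (abs_nonneg _) (hb z hz x hx)
    rw [integral_integral_swap hint]
    refine integral_congr_ae (ae_of_all _ fun z => ?_)
    show (∫ y, f x y * f y z * f z x ∂μ01) = (∫ w, f x w * f w z ∂μ01) * f z x
    rw [← integral_mul_const]
  have h1 : T3F f = ∫ x, (∫ z, BF f x z * f z x ∂μ01) ∂μ01 := by
    rw [T3F]
    exact setIntegral_congr_fun measurableSet_Icc fun x hx => step1 x hx
  have hint2 : Integrable (Function.uncurry fun x z => BF f x z * f z x) (μ01.prod μ01) := by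
    refine intg2 (C := 1) ?_ ?_
    · exact (m_BF hm).mul (hm.comp (measurable_snd.prodMk measurable_fst))
    · rintro ⟨x, z⟩ ⟨hx, hz⟩
      simp only [Function.uncurry]
      rw [abs_mul]
      exact mul_le_one₀ (b_BF hb x hx z hz) (abs_nonneg _) (hb z hz x hx)
  have hT3eq : T3F f = ∫ p, BF f p.1 p.2 * f p.2 p.1 ∂(μ01.prod μ01) :=
    h1.trans (integral_integral hint2)
  -- integrability of squares
  have hu2m : Integrable (fun p : ℝ × ℝ => (BF f p.1 p.2)^2) (μ01.prod μ01) := by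
    refine intg2 (C := 1) ((m_BF hm).pow_const 2) ?_
    rintro ⟨x, z⟩ ⟨hx, hz⟩
    rw [abs_pow]
    exact pow_le_one₀ (abs_nonneg _) (b_BF hb x hx z hz)
  have hv2m : Integrable (fun p : ℝ × ℝ => (f p.2 p.1)^2) (μ01.prod μ01) := by
    refine intg2 (C := 1) ((hm.comp (measurable_snd.prodMk measurable_fst)).pow_const 2) ?_
    rintro ⟨x, z⟩ ⟨hx, hz⟩
    rw [abs_pow]
    exact pow_le_one₀ (abs_nonneg _) (hb z hz x hx)
  have huvm : Integrable (fun p : ℝ × ℝ => BF f p.1 p.2 * f p.2 p.1) (μ01.prod μ01) := by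
    have := hint2
    exact this
  have hCS := abs_integral_CS hu2m hv2m huvm
  -- evaluate ∫ v²
  have hv2 : (∫ p, (f p.2 p.1)^2 ∂(μ01.prod μ01)) = S2F f := by
    have hi : Integrable (Function.uncurry fun x z => (f z x)^2) (μ01.prod μ01) := by
      refine intg2 (C := 1) ((hm.comp (measurable_snd.prodMk measurable_fst)).pow_const 2) ?_
      rintro ⟨x, z⟩ ⟨hx, hz⟩
      simp only [Function.uncurry]
      rw [abs_pow]
      exact pow_le_one₀ (abs_nonneg _) (hb z hz x hx)
    calc (∫ p, (f p.2 p.1)^2 ∂(μ01.prod μ01))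
        = ∫ x, (∫ z, (f z x)^2 ∂μ01) ∂μ01 := (integral_integral hi).symm
      _ = ∫ z, (∫ x, (f z x)^2 ∂μ01) ∂μ01 := integral_integral_swap hi
      _ = S2F f := rfl
  -- bound ∫ u²
  have hu2le : (∫ p, (BF f p.1 p.2)^2 ∂(μ01.prod μ01)) ≤ S2F f * S2F f := by
    have hprodm : Integrable
        (fun p : ℝ × ℝ => (∫ y, (f p.1 y)^2 ∂μ01) * (∫ y, (f y p.2)^2 ∂μ01))
        (μ01.prod μ01) := by
      refine intg2 (C := 1) ?_ ?_
      · exact ((m_inn_sq hm).comp measurable_fst).mul ((m_inn_sq' hm).comp measurable_snd)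
      · rintro ⟨x, z⟩ ⟨hx, hz⟩
        rw [abs_mul]
        exact mul_le_one₀ (b_inn_sq hb x hx) (abs_nonneg _) (b_inn_sq' hm hb z hz)
    have hpt : ∀ᵐ p ∂(μ01.prod μ01),
        (BF f p.1 p.2)^2 ≤ (∫ y, (f p.1 y)^2 ∂μ01) * (∫ y, (f y p.2)^2 ∂μ01) := by
      rw [Measure.prod_restrict]
      refine (ae_restrict_iff' (measurableSet_Icc.prod measurableSet_Icc)).2
        (ae_of_all _ ?_)
      rintro ⟨x, z⟩ ⟨hx, hz⟩
      have hcs := integral_CS (ν := μ01) (u := fun y => f x y) (v := fun y => f y z)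
        (intg ((mL hm x).pow_const 2) (fun y hy => by
          rw [abs_pow]; exact pow_le_one₀ (abs_nonneg _) (hb x hx y hy)))
        (intg ((mR hm z).pow_const 2) (fun y hy => by
          rw [abs_pow]; exact pow_le_one₀ (abs_nonneg _) (hb y hy z hz)))
        (intg ((mL hm x).mul (mR hm z)) (C := 1) (fun y hy => by
          rw [abs_mul]
          exact mul_le_one₀ (hb x hx y hy) (abs_nonneg _) (hb y hy z hz)))
      exact hcs
    calc (∫ p, (BF f p.1 p.2)^2 ∂(μ01.prod μ01))
        ≤ ∫ p, (∫ y, (f p.1 y)^2 ∂μ01) * (∫ y, (f y p.2)^2 ∂μ01) ∂(μ01.prod μ01) :=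
          integral_mono_ae hu2m hprodm hpt
      _ = (∫ x, (∫ y, (f x y)^2 ∂μ01) ∂μ01) * (∫ z, (∫ y, (f y z)^2 ∂μ01) ∂μ01) :=
          integral_prod_mul (fun x => ∫ y, (f x y)^2 ∂μ01) (fun z => ∫ y, (f y z)^2 ∂μ01)
      _ = S2F f * S2F f := by rw [swap_sq hm hb]; rfl
  -- finish
  rw [hT3eq]
  refine le_trans hCS ?_
  have hmono : (∫ p, (BF f p.1 p.2)^2 ∂(μ01.prod μ01)) * (∫ p, (f p.2 p.1)^2 ∂(μ01.prod μ01))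
      ≤ (S2F f * S2F f) * S2F f := by
    rw [hv2]
    exact mul_le_mul_of_nonneg_right hu2le hS2
  refine le_trans (Real.sqrt_le_sqrt hmono) ?_
  rw [Real.sqrt_mul (by positivity) (S2F f), Real.sqrt_mul_self hS2]
  ring_nf
  exact le_refl _

end T3B

section Expansion

variable {f : ℝ → ℝ → ℝ} (hm : Measurable (Function.uncurry f))
  (hb : ∀ x ∈ Icc (0:ℝ) 1, ∀ y ∈ Icc (0:ℝ) 1, |f x y| ≤ 1)
  (hs : ∀ x ∈ Icc (0:ℝ) 1, ∀ y ∈ Icc (0:ℝ) 1, f x y = f y x)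

include hm

lemma m_C : Measurable (fun x => ∫ y, f x y * ddF f y ∂μ01) := by
  have hmm : Measurable fun p : ℝ × ℝ => f p.1 p.2 * ddF f p.2 :=
    hm.mul ((m_dd hm).comp measurable_snd)
  exact (hmm.stronglyMeasurable.integral_prod_right').measurable

lemma m_BFswap : Measurable fun p : ℝ × ℝ => BF f p.2 p.1 :=
  (m_BF hm).comp (measurable_snd.prodMk measurable_fst)

lemma m_E : Measurable (fun x => ∫ y, BF f y x ∂μ01) := by
  have hmm : Measurable fun p : ℝ × ℝ => BF f p.2 p.1 := m_BFswap hm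
  exact (hmm.stronglyMeasurable.integral_prod_right').measurable

lemma m_F : Measurable (fun x => ∫ y, f x y * BF f y x ∂μ01) := by
  have hmm : Measurable fun p : ℝ × ℝ => f p.1 p.2 * BF f p.2 p.1 :=
    hm.mul (m_BFswap hm)
  exact (hmm.stronglyMeasurable.integral_prod_right').measurable

include hb

lemma b_C : ∀ x ∈ Icc (0:ℝ) 1, |∫ y, f x y * ddF f y ∂μ01| ≤ 1 := by
  intro x hx
  refine abs_int_le fun y hy => ?_
  rw [abs_mul]
  exact mul_le_one₀ (hb x hx y hy) (abs_nonneg _) (b_dd hb y hy)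

lemma b_E : ∀ x ∈ Icc (0:ℝ) 1, |∫ y, BF f y x ∂μ01| ≤ 1 :=
  fun x hx => abs_int_le fun y hy => b_BF hb y hy x hx

lemma b_F : ∀ x ∈ Icc (0:ℝ) 1, |∫ y, f x y * BF f y x ∂μ01| ≤ 1 := by
  intro x hx
  refine abs_int_le fun y hy => ?_
  rw [abs_mul]
  exact mul_le_one₀ (hb x hx y hy) (abs_nonneg _) (b_BF hb y hy x hx)

include hs

lemma colQ : (∫ v, ((∫ u, f u v ∂μ01) * ddF f v) ∂μ01) = QF f := by
  rw [QF]
  refine setIntegral_congr_fun measurableSet_Icc fun v hv => ?_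
  have : (∫ u, f u v ∂μ01) = ddF f v :=
    setIntegral_congr_fun measurableSet_Icc fun u hu => hs u hu v hv
  rw [this, pow_two]

lemma claimC : (∫ x, (∫ y, f x y * ddF f y ∂μ01) ∂μ01) = QF f := by
  have hiC : Integrable (Function.uncurry fun x y => f x y * ddF f y) (μ01.prod μ01) := by
    refine intg2 (C := 1) (hm.mul ((m_dd hm).comp measurable_snd)) ?_
    rintro ⟨x, y⟩ ⟨hx, hy⟩
    simp only [Function.uncurry]
    rw [abs_mul]
    exact mul_le_one₀ (hb x hx y hy) (abs_nonneg _) (b_dd hb y hy)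
  rw [integral_integral_swap hiC]
  simp_rw [integral_mul_const]
  exact colQ hm hb hs

lemma claimE : (∫ x, (∫ y, BF f y x ∂μ01) ∂μ01) = QF f := by
  have int2a : Integrable (Function.uncurry fun x y => BF f y x) (μ01.prod μ01) := by
    refine intg2 (C := 1) (m_BFswap hm) ?_
    rintro ⟨x, y⟩ ⟨hx, hy⟩
    exact b_BF hb y hy x hx
  rw [integral_integral_swap int2a]
  have step : ∀ y ∈ Icc (0:ℝ) 1,
      (∫ x, BF f y x ∂μ01) = ∫ w, f y w * ddF f w ∂μ01 := by
    intro y hy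
    have intyb : Integrable (Function.uncurry fun x w => f y w * f w x) (μ01.prod μ01) := by
      refine intg2 (C := 1) ?_ ?_
      · exact ((mL hm y).comp measurable_snd).mul
          (hm.comp (measurable_snd.prodMk measurable_fst))
      · rintro ⟨x, w⟩ ⟨hx, hw⟩
        simp only [Function.uncurry]
        rw [abs_mul]
        exact mul_le_one₀ (hb y hy w hw) (abs_nonneg _) (hb w hw x hx)
    have h0 : (∫ x, BF f y x ∂μ01) = ∫ x, (∫ w, f y w * f w x ∂μ01) ∂μ01 := rfl
    rw [h0, integral_integral_swap intyb]
    simp_rw [integral_const_mul]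
    rfl
  rw [setIntegral_congr_fun measurableSet_Icc step]
  have intc : Integrable (Function.uncurry fun y w => f y w * ddF f w) (μ01.prod μ01) := by
    refine intg2 (C := 1) (hm.mul ((m_dd hm).comp measurable_snd)) ?_
    rintro ⟨y, w⟩ ⟨hy, hw⟩
    simp only [Function.uncurry]
    rw [abs_mul]
    exact mul_le_one₀ (hb y hy w hw) (abs_nonneg _) (b_dd hb w hw)
  rw [integral_integral_swap intc]
  simp_rw [integral_mul_const]
  exact colQ hm hb hs

omit hb hs in
lemma claimF : (∫ x, (∫ y, f x y * BF f y x ∂μ01) ∂μ01) = T3F f := by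
  rw [T3F]
  refine integral_congr_ae (ae_of_all _ fun x => integral_congr_ae (ae_of_all _ fun y => ?_))
  show f x y * BF f y x = ∫ z, f x y * f y z * f z x ∂μ01
  have : (∫ z, f x y * f y z * f z x ∂μ01) = ∫ z, f x y * (f y z * f z x) ∂μ01 := by
    simp_rw [mul_assoc]
  rw [this, integral_const_mul]
  rfl

end Expansion

section Expansion2

variable {f : ℝ → ℝ → ℝ} {e : ℝ} (hm : Measurable (Function.uncurry f))
  (hb : ∀ x ∈ Icc (0:ℝ) 1, ∀ y ∈ Icc (0:ℝ) 1, |f x y| ≤ 1)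
  (hs : ∀ x ∈ Icc (0:ℝ) 1, ∀ y ∈ Icc (0:ℝ) 1, f x y = f y x)

include hm hb hs

lemma expansion :
    (∫ x, (∫ y, (∫ z, (e + f x y) * (e + f y z) * (e + f z x) ∂μ01) ∂μ01) ∂μ01)
      = e^3 + 3*e^2*(∫ x, ddF f x ∂μ01) + 3*e*QF f + T3F f := by
  have hB1 : ∀ x ∈ Icc (0:ℝ) 1, ∀ y ∈ Icc (0:ℝ) 1,
      (∫ z, (e + f x y) * (e + f y z) * (e + f z x) ∂μ01)
        = (e + f x y) * (e^2 + e * ddF f y + e * ddF f x + BF f y x) := by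
    intro x hx y hy
    have i1 : Integrable (fun z => f y z) μ01 := intg (mL hm y) (fun z hz => hb y hy z hz)
    have i2 : Integrable (fun z => f z x) μ01 := intg (mR hm x) (fun z hz => hb z hz x hx)
    have i3 : Integrable (fun z => f y z * f z x) μ01 := by
      refine intg ((mL hm y).mul (mR hm x)) (C := 1) fun z hz => ?_
      rw [abs_mul]; exact mul_le_one₀ (hb y hy z hz) (abs_nonneg _) (hb z hz x hx)
    have h1 : (∫ z, (e + f x y) * (e + f y z) * (e + f z x) ∂μ01)
        = (e + f x y) * ∫ z, (e + f y z) * (e + f z x) ∂μ01 := by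
      rw [← integral_const_mul]
      simp_rw [mul_assoc]
    have h2 : (∫ z, (e + f y z) * (e + f z x) ∂μ01)
        = e^2 + e * ddF f y + e * (∫ z, f z x ∂μ01) + BF f y x := by
      have hfe : (fun z => (e + f y z) * (e + f z x))
          = fun z => e*e + (e * f y z + (e * f z x + f y z * f z x)) := by
        funext z; ring
      have ia : Integrable (fun z => e * f z x + f y z * f z x) μ01 := (i2.const_mul e).add i3
      have ib : Integrable (fun z => e * f y z + (e * f z x + f y z * f z x)) μ01 :=
        (i1.const_mul e).add ia
      rw [hfe, integral_add (integrable_const _) ib,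
          integral_add (i1.const_mul e) ia,
          integral_add (i2.const_mul e) i3]
      simp only [integral_const_mul, integral_const, measure_univ, probReal_univ, ENNReal.toReal_one,
        smul_eq_mul, one_mul]
      show e*e + (e * ddF f y + (e * (∫ z, f z x ∂μ01) + BF f y x)) = _
      ring
    have hsymx : (∫ z, f z x ∂μ01) = ddF f x :=
      setIntegral_congr_fun measurableSet_Icc fun z hz => hs z hz x hx
    rw [h1, h2, hsymx]
  have hB2 : ∀ x ∈ Icc (0:ℝ) 1,
      (∫ y, (∫ z, (e + f x y) * (e + f y z) * (e + f z x) ∂μ01) ∂μ01)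
        = e^3 + e^2 * (∫ t, ddF f t ∂μ01) + 2*e^2 * ddF f x
          + e * (∫ y, BF f y x ∂μ01) + e * (∫ y, f x y * ddF f y ∂μ01)
          + e * (ddF f x)^2 + (∫ y, f x y * BF f y x ∂μ01) := by
    intro x hx
    rw [setIntegral_congr_fun measurableSet_Icc (fun y hy => hB1 x hx y hy)]
    have j1 : Integrable (fun y => ddF f y) μ01 := intg (m_dd hm) (b_dd hb)
    have j2 : Integrable (fun y => BF f y x) μ01 := by
      refine intg ((m_BF hm).comp (measurable_id.prodMk measurable_const)) (C := 1)
        fun y hy => b_BF hb y hy x hx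
    have j3 : Integrable (fun y => f x y) μ01 := intg (mL hm x) (fun y hy => hb x hx y hy)
    have j4 : Integrable (fun y => f x y * ddF f y) μ01 := by
      refine intg ((mL hm x).mul (m_dd hm)) (C := 1) fun y hy => ?_
      rw [abs_mul]; exact mul_le_one₀ (hb x hx y hy) (abs_nonneg _) (b_dd hb y hy)
    have j5 : Integrable (fun y => f x y * BF f y x) μ01 := by
      refine intg ((mL hm x).mul ((m_BF hm).comp (measurable_id.prodMk measurable_const)))
        (C := 1) fun y hy => ?_
      rw [abs_mul]; exact mul_le_one₀ (hb x hx y hy) (abs_nonneg _) (b_BF hb y hy x hx)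
    have hfe2 : (fun y => (e + f x y) * (e^2 + e * ddF f y + e * ddF f x + BF f y x))
        = fun y => (e^3 + (e^2 + e * (ddF f x)^2 * 0) * ddF f x)
            + ((e^2) * ddF f y
              + (e * BF f y x
                + ((e^2 + e * ddF f x) * f x y
                  + (e * (f x y * ddF f y)
                    + f x y * BF f y x)))) := by
      funext y; ring
    have ja : Integrable (fun y => e * (f x y * ddF f y) + f x y * BF f y x) μ01 :=
      (j4.const_mul _).add j5
    have jb : Integrable (fun y => (e^2 + e * ddF f x) * f x y
        + (e * (f x y * ddF f y) + f x y * BF f y x)) μ01 := (j3.const_mul _).add ja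
    have jc : Integrable (fun y => e * BF f y x + ((e^2 + e * ddF f x) * f x y
        + (e * (f x y * ddF f y) + f x y * BF f y x))) μ01 := (j2.const_mul _).add jb
    have jd : Integrable (fun y => e^2 * ddF f y + (e * BF f y x
        + ((e^2 + e * ddF f x) * f x y
          + (e * (f x y * ddF f y) + f x y * BF f y x)))) μ01 := (j1.const_mul _).add jc
    rw [hfe2, integral_add (integrable_const _) jd,
        integral_add (j1.const_mul _) jc,
        integral_add (j2.const_mul _) jb,
        integral_add (j3.const_mul _) ja,
        integral_add (j4.const_mul _) j5]
    simp only [integral_const_mul, integral_const, measure_univ, probReal_univ, ENNReal.toReal_one,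
      smul_eq_mul, one_mul]
    show _ = e^3 + e^2 * (∫ y, ddF f y ∂μ01) + 2*e^2 * ddF f x
          + e * (∫ y, BF f y x ∂μ01) + e * (∫ y, f x y * ddF f y ∂μ01)
          + e * (ddF f x)^2 + (∫ y, f x y * BF f y x ∂μ01)
    have hdx : (∫ y, f x y ∂μ01) = ddF f x := rfl
    rw [hdx]
    ring
  rw [setIntegral_congr_fun measurableSet_Icc hB2]
  have k1 : Integrable (fun x => ddF f x) μ01 := intg (m_dd hm) (b_dd hb)
  have k2 : Integrable (fun x => ∫ y, BF f y x ∂μ01) μ01 := intg (m_E hm) (b_E hm hb)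
  have k3 : Integrable (fun x => ∫ y, f x y * ddF f y ∂μ01) μ01 := intg (m_C hm) (b_C hm hb)
  have k4 : Integrable (fun x => (ddF f x)^2) μ01 := by
    refine intg ((m_dd hm).pow_const 2) (C := 1) fun x hx => ?_
    rw [abs_pow]; exact pow_le_one₀ (abs_nonneg _) (b_dd hb x hx)
  have k5 : Integrable (fun x => ∫ y, f x y * BF f y x ∂μ01) μ01 := intg (m_F hm) (b_F hm hb)
  have hfe3 : (fun x => e^3 + e^2 * (∫ t, ddF f t ∂μ01) + 2*e^2 * ddF f x
          + e * (∫ y, BF f y x ∂μ01) + e * (∫ y, f x y * ddF f y ∂μ01)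
          + e * (ddF f x)^2 + (∫ y, f x y * BF f y x ∂μ01))
      = fun x => (e^3 + e^2 * (∫ t, ddF f t ∂μ01))
          + ((2*e^2) * ddF f x
            + (e * (∫ y, BF f y x ∂μ01)
              + (e * (∫ y, f x y * ddF f y ∂μ01)
                + (e * (ddF f x)^2
                  + (∫ y, f x y * BF f y x ∂μ01))))) := by
    funext x; ring
  have ka : Integrable (fun x => e * (ddF f x)^2 + (∫ y, f x y * BF f y x ∂μ01)) μ01 :=
    (k4.const_mul _).add k5
  have kb : Integrable (fun x => e * (∫ y, f x y * ddF f y ∂μ01)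
      + (e * (ddF f x)^2 + (∫ y, f x y * BF f y x ∂μ01))) μ01 := (k3.const_mul _).add ka
  have kc : Integrable (fun x => e * (∫ y, BF f y x ∂μ01)
      + (e * (∫ y, f x y * ddF f y ∂μ01)
        + (e * (ddF f x)^2 + (∫ y, f x y * BF f y x ∂μ01)))) μ01 := (k2.const_mul _).add kb
  have kd : Integrable (fun x => (2*e^2) * ddF f x
      + (e * (∫ y, BF f y x ∂μ01)
        + (e * (∫ y, f x y * ddF f y ∂μ01)
          + (e * (ddF f x)^2 + (∫ y, f x y * BF f y x ∂μ01))))) μ01 := (k1.const_mul _).add kc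
  rw [hfe3, integral_add (integrable_const _) kd,
      integral_add (k1.const_mul _) kc,
      integral_add (k2.const_mul _) kb,
      integral_add (k3.const_mul _) ka,
      integral_add (k4.const_mul _) k5]
  simp only [integral_const_mul, integral_const, measure_univ, probReal_univ, ENNReal.toReal_one,
    smul_eq_mul, one_mul]
  rw [claimC hm hb hs, claimE hm hb hs, claimF hm]
  have hq : (∫ x, (ddF f x)^2 ∂μ01) = QF f := rfl
  rw [hq]
  ring

end Expansion2

lemma mul_log_lb {u : ℝ} (h0 : 0 ≤ u) (h1 : u ≤ 1) : u - 1 ≤ u * Real.log u := by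
  rcases eq_or_lt_of_le h0 with h | h
  · simp [← h]
  · have hlog := Real.log_le_sub_one_of_pos (show (0:ℝ) < u⁻¹ by positivity)
    rw [Real.log_inv] at hlog
    have hinv : u * u⁻¹ = 1 := mul_inv_cancel₀ (ne_of_gt h)
    nlinarith [mul_le_mul_of_nonneg_left hlog h0]

lemma I0_abs_le {u : ℝ} (h : u ∈ Icc (0:ℝ) 1) : |I0 u| ≤ 1 := by
  obtain ⟨h0, h1⟩ := h
  have a1 : u * Real.log u ≤ 0 := Real.mul_log_nonpos h0 h1
  have a2 : (1 - u) * Real.log (1 - u) ≤ 0 := Real.mul_log_nonpos (by linarith) (by linarith)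
  have b1 : u - 1 ≤ u * Real.log u := mul_log_lb h0 h1
  have b2 : (1 - u) - 1 ≤ (1 - u) * Real.log (1 - u) := mul_log_lb (by linarith) (by linarith)
  rw [I0, abs_le]
  constructor <;> nlinarith

/-- For every `e ∈ (0,1)` there is `c̃ > 0` such that every graphon `g` with edge
density `e` and triangle density `t(g) ≤ e³` satisfies
`I(g) - I₀(e) ≥ c̃ (e³ - t(g))^{2/3}`. -/
theorem entropy_two_thirds_bound (e : ℝ) (he : e ∈ Ioo (0:ℝ) 1) :
    ∃ c : ℝ, 0 < c ∧ ∀ g : ℝ → ℝ → ℝ, IsGraphon g → edgeDensity g = e →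
      triangleDensity g ≤ e ^ 3 →
      rateFn g - I0 e ≥ c * (e ^ 3 - triangleDensity g) ^ ((2:ℝ)/3) := by
  obtain ⟨he0, he1⟩ := he
  refine ⟨1, one_pos, ?_⟩
  intro g hg hE hT
  obtain ⟨hgm, hgs, hgb⟩ := hg
  set f : ℝ → ℝ → ℝ := fun x y => g x y - e with hf
  have hm : Measurable (Function.uncurry f) := by
    have : Function.uncurry f = fun p => Function.uncurry g p - e := rfl
    rw [this]; exact hgm.sub measurable_const
  have hb : ∀ x ∈ Icc (0:ℝ) 1, ∀ y ∈ Icc (0:ℝ) 1, |f x y| ≤ 1 := by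
    intro x hx y hy
    have h := hgb x hx y hy
    show |g x y - e| ≤ 1
    rw [abs_le]
    constructor
    · linarith [h.1]
    · linarith [h.2]
  have hs : ∀ x ∈ Icc (0:ℝ) 1, ∀ y ∈ Icc (0:ℝ) 1, f x y = f y x := by
    intro x hx y hy
    show g x y - e = g y x - e
    rw [hgs x hx y hy]
  have hgb1 : ∀ x ∈ Icc (0:ℝ) 1, ∀ y ∈ Icc (0:ℝ) 1, |g x y| ≤ 1 := by
    intro x hx y hy
    have h := hgb x hx y hy
    rw [abs_le]; exact ⟨by linarith [h.1], h.2⟩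
  -- mean-zero property
  have hDbar : (∫ x, ddF f x ∂μ01) = 0 := by
    have hinner : ∀ x ∈ Icc (0:ℝ) 1, ddF f x = (∫ y, g x y ∂μ01) - e := by
      intro x hx
      have hgint : Integrable (fun y => g x y) μ01 :=
        intg (mL hgm x) (fun y hy => hgb1 x hx y hy)
      show (∫ y, (g x y - e) ∂μ01) = _
      rw [integral_sub hgint (integrable_const _), integral_const]
      simp [measure_univ]
    rw [setIntegral_congr_fun measurableSet_Icc hinner]
    have hgint2 : Integrable (fun x => ∫ y, g x y ∂μ01) μ01 :=
      intg (m_dd hgm) (fun x hx => abs_int_le (fun y hy => hgb1 x hx y hy))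
    rw [integral_sub hgint2 (integrable_const _), integral_const]
    have hEE : (∫ x, (∫ y, g x y ∂μ01) ∂μ01) = e := hE
    rw [hEE]
    simp [measure_univ]
  -- triangle density expansion
  have htri : triangleDensity g = e^3 + 3*e*QF f + T3F f := by
    have h0 : triangleDensity g
        = ∫ x, (∫ y, (∫ z, (e + f x y) * (e + f y z) * (e + f z x) ∂μ01) ∂μ01) ∂μ01 := by
      refine integral_congr_ae (ae_of_all _ fun x => ?_)
      refine integral_congr_ae (ae_of_all _ fun y => ?_)
      refine integral_congr_ae (ae_of_all _ fun z => ?_)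
      show g x y * g y z * g z x = (e + f x y) * (e + f y z) * (e + f z x)
      have e1 : e + f x y = g x y := by show e + (g x y - e) = g x y; ring
      have e2 : e + f y z = g y z := by show e + (g y z - e) = g y z; ring
      have e3 : e + f z x = g z x := by show e + (g z x - e) = g z x; ring
      rw [e1, e2, e3]
    rw [h0, expansion hm hb hs, hDbar]
    ring
  -- rate function lower bound
  set A : ℝ := (1/2) * (Real.log e - Real.log (1 - e)) with hA
  have hrate : rateFn g ≥ I0 e + S2F f := by
    have hinner2 : ∀ x ∈ Icc (0:ℝ) 1,
        I0 e + A * ddF f x + (∫ y, (f x y)^2 ∂μ01) ≤ ∫ y, I0 (g x y) ∂μ01 := by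
      intro x hx
      have hI : Integrable (fun y => I0 (g x y)) μ01 :=
        intg (I0_continuous.measurable.comp (mL hgm x))
          (fun y hy => I0_abs_le (hgb x hx y hy))
      have i1 : Integrable (fun y => f x y) μ01 := intg (mL hm x) (fun y hy => hb x hx y hy)
      have i2 : Integrable (fun y => (f x y)^2) μ01 := by
        refine intg ((mL hm x).pow_const 2) (C := 1) fun y hy => ?_
        rw [abs_pow]; exact pow_le_one₀ (abs_nonneg _) (hb x hx y hy)
      have ia : Integrable (fun y => A * f x y + (f x y)^2) μ01 := (i1.const_mul _).add i2
      have hRint : Integrable (fun y => I0 e + (A * f x y + (f x y)^2)) μ01 :=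
        (integrable_const _).add ia
      have hmono : (∫ y, (I0 e + (A * f x y + (f x y)^2)) ∂μ01) ≤ ∫ y, I0 (g x y) ∂μ01 := by
        refine setIntegral_mono_on hRint hI measurableSet_Icc (fun y hy => ?_)
        have hp := pinsker ⟨he0, he1⟩ (hgb x hx y hy)
        show I0 e + (A * (g x y - e) + (g x y - e)^2) ≤ I0 (g x y)
        rw [hA]
        linarith [hp]
      have heval : (∫ y, (I0 e + (A * f x y + (f x y)^2)) ∂μ01)
          = I0 e + A * ddF f x + (∫ y, (f x y)^2 ∂μ01) := by
        rw [integral_add (integrable_const _) ia, integral_add (i1.const_mul _) i2,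
          integral_const_mul, integral_const]
        simp only [measure_univ, probReal_univ, ENNReal.toReal_one, smul_eq_mul, one_mul]
        show I0 e + (A * ddF f x + (∫ y, (f x y)^2 ∂μ01)) = _
        ring
      linarith [hmono, heval.symm.le]
    have mI : Measurable (fun x => ∫ y, I0 (g x y) ∂μ01) := by
      have hmm : Measurable fun p : ℝ × ℝ => I0 (g p.1 p.2) := by
        have : Measurable fun p : ℝ × ℝ => I0 (Function.uncurry g p) :=
          I0_continuous.measurable.comp hgm
        exact this
      exact (hmm.stronglyMeasurable.integral_prod_right').measurable
    have hIout : Integrable (fun x => ∫ y, I0 (g x y) ∂μ01) μ01 :=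
      intg mI (fun x hx => abs_int_le (fun y hy => I0_abs_le (hgb x hx y hy)))
    have l1 : Integrable (fun x => ddF f x) μ01 := intg (m_dd hm) (b_dd hb)
    have l2 : Integrable (fun x => ∫ y, (f x y)^2 ∂μ01) μ01 :=
      intg (m_inn_sq hm) (b_inn_sq hb)
    have la : Integrable (fun x => A * ddF f x + (∫ y, (f x y)^2 ∂μ01)) μ01 :=
      (l1.const_mul _).add l2
    have hRout : Integrable (fun x => I0 e + (A * ddF f x + (∫ y, (f x y)^2 ∂μ01))) μ01 :=
      (integrable_const _).add la
    have houter : (∫ x, (I0 e + (A * ddF f x + (∫ y, (f x y)^2 ∂μ01))) ∂μ01)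
        ≤ ∫ x, (∫ y, I0 (g x y) ∂μ01) ∂μ01 := by
      refine setIntegral_mono_on hRout hIout measurableSet_Icc (fun x hx => ?_)
      have := hinner2 x hx
      linarith [this]
    have heval2 : (∫ x, (I0 e + (A * ddF f x + (∫ y, (f x y)^2 ∂μ01))) ∂μ01)
        = I0 e + S2F f := by
      rw [integral_add (integrable_const _) la, integral_add (l1.const_mul _) l2,
        integral_const_mul, integral_const, hDbar]
      simp only [measure_univ, probReal_univ, ENNReal.toReal_one, smul_eq_mul, one_mul, mul_zero]
      show I0 e + (0 + S2F f) = _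
      ring
    have hrfn : rateFn g = ∫ x, (∫ y, I0 (g x y) ∂μ01) ∂μ01 := rfl
    rw [hrfn]
    linarith [houter, heval2.symm.le]
  -- final assembly
  have hS2 : 0 ≤ S2F f := S2F_nonneg
  have hQ : 0 ≤ QF f := QF_nonneg
  have hT3 : |T3F f| ≤ Real.sqrt (S2F f) * S2F f := T3_bound hm hb
  have hD0 : 0 ≤ e^3 - triangleDensity g := by linarith [hT]
  have hDle : e^3 - triangleDensity g ≤ Real.sqrt (S2F f) * S2F f := by
    have h1 : e^3 - triangleDensity g = -(3*e*QF f) - T3F f := by rw [htri]; ring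
    have h2 : -T3F f ≤ |T3F f| := neg_le_abs _
    have h3 : 0 ≤ 3*e*QF f := by positivity
    linarith [hT3]
  have hrpow : (e^3 - triangleDensity g) ^ ((2:ℝ)/3) ≤ S2F f := by
    have h32 : Real.sqrt (S2F f) * S2F f = S2F f ^ ((3:ℝ)/2) := by
      rw [show (3:ℝ)/2 = 1/2 + 1 by norm_num, Real.rpow_add' hS2 (by norm_num),
        Real.rpow_one, Real.sqrt_eq_rpow]
    have hle2 : e^3 - triangleDensity g ≤ S2F f ^ ((3:ℝ)/2) := by rw [← h32]; exact hDle
    calc (e^3 - triangleDensity g) ^ ((2:ℝ)/3)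
        ≤ (S2F f ^ ((3:ℝ)/2)) ^ ((2:ℝ)/3) := Real.rpow_le_rpow hD0 hle2 (by norm_num)
      _ = S2F f := by
          rw [← Real.rpow_mul hS2]
          norm_num
  rw [one_mul]
  linarith [hrate, hrpow]
end

section
/- Fix e ∈ (0,1) and define f_-(e) = inf { (I₀(e+x) - x·I₀'(e) - I₀(e)) / x² : x ∈ [-e, 1-e], x ≠ 0 }. Then f_-(e) > 0, f_-(e) ≤ 1/(4e(1-e)), and every graphon g with edge density e(g) = e satisfies I(g) - I₀(e) ≥ f_-(e)·∫_{[0,1]²} (g(x,y) - e)² dx dy. -/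
open MeasureTheory Set

/-- `I₀'(u) = (1/2) ln(u/(1-u))`. -/
noncomputable def I0' (u : ℝ) : ℝ := (1/2) * Real.log (u / (1 - u))

/-- `f₋(e) = inf { (I₀(e+x) - x I₀'(e) - I₀(e))/x² : x ∈ [-e, 1-e], x ≠ 0 }`. -/
noncomputable def fminus (e : ℝ) : ℝ :=
  sInf {r : ℝ | ∃ x : ℝ, x ∈ Icc (-e) (1 - e) ∧ x ≠ 0 ∧
    r = (I0 (e + x) - x * I0' e - I0 e) / x ^ 2}


lemma hasDerivAt_congr_aux {f g : ℝ → ℝ} {f' g' x : ℝ} (h : HasDerivAt f f' x)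
    (hf : f = g) (hd : f' = g') : HasDerivAt g g' x := hf ▸ hd ▸ h

lemma I0_hasDerivAt {u : ℝ} (h0 : 0 < u) (h1 : u < 1) : HasDerivAt I0 (I0' u) u := by
  have h1' : (0:ℝ) < 1 - u := by linarith
  have d1 : HasDerivAt (fun v : ℝ => v * Real.log v) (Real.log u + 1) u :=
    Real.hasDerivAt_mul_log h0.ne'
  have d2 : HasDerivAt (fun v : ℝ => (1 - v) * Real.log (1 - v))
      (-(Real.log (1 - u) + 1)) u := by
    have := (Real.hasDerivAt_mul_log h1'.ne').comp u
      ((hasDerivAt_const u (1:ℝ)).sub (hasDerivAt_id u))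
    simpa [Function.comp_def] using this
  have final := ((d1.add d2).const_mul (1/2 : ℝ))
  have goal_eq : I0' u = (1/2) * ((Real.log u + 1) + -(Real.log (1 - u) + 1)) := by
    rw [I0', Real.log_div h0.ne' h1'.ne']; ring
  rw [goal_eq]; exact final

lemma I0'_hasDerivAt {u : ℝ} (h0 : 0 < u) (h1 : u < 1) :
    HasDerivAt I0' (1 / (2 * u * (1 - u))) u := by
  have h1' : (0:ℝ) < 1 - u := by linarith
  have d1 : HasDerivAt Real.log (1/u) u := by simpa [one_div] using Real.hasDerivAt_log h0.ne'
  have d2 : HasDerivAt (fun v : ℝ => Real.log (1 - v)) (-(1/(1-u))) u := by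
    have := (Real.hasDerivAt_log h1'.ne').comp u
      ((hasDerivAt_const u (1:ℝ)).sub (hasDerivAt_id u))
    simpa [one_div, Function.comp_def] using this
  have key : HasDerivAt (fun v : ℝ => (1/2) * (Real.log v - Real.log (1 - v)))
      (1 / (2 * u * (1 - u))) u := by
    have := ((d1.sub d2).const_mul (1/2 : ℝ))
    refine hasDerivAt_congr_aux this rfl ?_
    field_simp
    ring
  apply key.congr_of_eventuallyEq
  have hs : Ioo (0:ℝ) 1 ∈ nhds u := Ioo_mem_nhds h0 h1
  filter_upwards [hs] with v hv
  rw [I0', Real.log_div (ne_of_gt hv.1) (by linarith [hv.2] : (1:ℝ) - v ≠ 0)]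

/-- If `ψ 0 = something`, ψ continuous on `[0,x]`, with derivative `ψ'` on the interior,
`ψ'` continuous on `[0,x)` with `ψ' 0 = 0` and nonneg second derivative, then `ψ 0 ≤ ψ x`. -/
lemma aux_mono (ψ ψ' : ℝ → ℝ) (x : ℝ) (hx : 0 < x)
    (hc : ContinuousOn ψ (Icc 0 x))
    (hd1 : ∀ t ∈ Ioo 0 x, HasDerivAt ψ (ψ' t) t)
    (hd2 : ∀ t ∈ Ico 0 x, ∃ d, 0 ≤ d ∧ HasDerivAt ψ' d t)
    (h0' : ψ' 0 = 0) : ψ 0 ≤ ψ x := by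
  have key : ∀ t ∈ Ioo (0:ℝ) x, 0 ≤ ψ' t := by
    intro t ht
    have hmono : MonotoneOn ψ' (Icc 0 t) := by
      refine monotoneOn_of_deriv_nonneg (convex_Icc 0 t) ?_ ?_ ?_
      · intro s hs
        obtain ⟨d, _, hdd⟩ := hd2 s ⟨hs.1, lt_of_le_of_lt hs.2 ht.2⟩
        exact hdd.continuousAt.continuousWithinAt
      · intro s hs
        rw [interior_Icc] at hs
        obtain ⟨d, hd0, hdd⟩ := hd2 s ⟨hs.1.le, hs.2.trans ht.2⟩
        exact hdd.differentiableAt.differentiableWithinAt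
      · intro s hs
        rw [interior_Icc] at hs
        obtain ⟨d, hd0, hdd⟩ := hd2 s ⟨hs.1.le, hs.2.trans ht.2⟩
        rw [hdd.deriv]; exact hd0
    have := hmono (left_mem_Icc.2 ht.1.le) (right_mem_Icc.2 ht.1.le) ht.1.le
    rwa [h0'] at this
  have hmono : MonotoneOn ψ (Icc 0 x) := by
    refine monotoneOn_of_deriv_nonneg (convex_Icc 0 x) hc ?_ ?_
    · intro t ht
      rw [interior_Icc] at ht
      exact (hd1 t ht).differentiableAt.differentiableWithinAt
    · intro t ht
      rw [interior_Icc] at ht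
      rw [(hd1 t ht).deriv]; exact key t ht
  exact hmono (left_mem_Icc.2 hx.le) (right_mem_Icc.2 hx.le) hx.le

noncomputable def Fe (e x : ℝ) : ℝ := I0 (e + x) - x * I0' e - I0 e

lemma psi_deriv1 (e C t : ℝ) (h0 : 0 < e + t) (h1 : e + t < 1) :
    HasDerivAt (fun s => Fe e s - C * s^2 / 2) (I0' (e + t) - I0' e - C * t) t := by
  have d1 : HasDerivAt (fun s : ℝ => I0 (e + s)) (I0' (e + t)) t := by
    have := (I0_hasDerivAt h0 h1).comp t ((hasDerivAt_id t).const_add e)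
    simpa [Function.comp_def] using this
  have d2 : HasDerivAt (fun s : ℝ => s * I0' e) (I0' e) t := by
    simpa using (hasDerivAt_id t).mul_const (I0' e)
  have d3 : HasDerivAt (fun s : ℝ => C * s^2 / 2) (C * t) t := by
    have := ((hasDerivAt_pow 2 t).const_mul C).div_const 2
    refine hasDerivAt_congr_aux this rfl ?_
    simp; ring
  have := ((d1.sub d2).sub (hasDerivAt_const t (I0 e))).sub d3
  refine hasDerivAt_congr_aux this rfl ?_
  ring

lemma psi_deriv2 (e C t : ℝ) (h0 : 0 < e + t) (h1 : e + t < 1) :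
    HasDerivAt (fun s => I0' (e + s) - I0' e - C * s)
      (1 / (2 * (e+t) * (1 - (e+t))) - C) t := by
  have d1 : HasDerivAt (fun s : ℝ => I0' (e + s)) (1 / (2 * (e+t) * (1 - (e+t)))) t := by
    have := (I0'_hasDerivAt h0 h1).comp t ((hasDerivAt_id t).const_add e)
    simpa [Function.comp_def] using this
  have d2 : HasDerivAt (fun s : ℝ => C * s) C t := by
    simpa using (hasDerivAt_id t).const_mul C
  exact hasDerivAt_congr_aux ((d1.sub (hasDerivAt_const t (I0' e))).sub d2) rfl (by ring)

lemma Fe_ge_right (e C x : ℝ) (he : 0 < e) (hx : 0 < x) (hex : e + x ≤ 1)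
    (hC : ∀ u, e ≤ u → u < e + x → C ≤ 1 / (2 * u * (1 - u))) :
    C * x^2 / 2 ≤ Fe e x := by
  have h := aux_mono (fun s => Fe e s - C * s^2 / 2)
      (fun s => I0' (e + s) - I0' e - C * s) x hx
      (by
        apply Continuous.continuousOn
        apply Continuous.sub
        · exact ((I0_continuous.comp (continuous_const.add continuous_id)).sub
            (continuous_id.mul continuous_const)).sub continuous_const
        · fun_prop)
      (fun t ht => psi_deriv1 e C t (by linarith [ht.1]) (by linarith [ht.2]))
      (fun t ht => by
        refine ⟨1 / (2 * (e+t) * (1 - (e+t))) - C, ?_, psi_deriv2 e C t (by linarith [ht.1]) (by linarith [ht.2])⟩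
        have := hC (e + t) (by linarith [ht.1]) (by linarith [ht.2])
        linarith)
      (by simp)
  simp only [Fe] at h ⊢
  simp at h
  linarith

lemma Fe_ge_left (e C x : ℝ) (he1 : e < 1) (hx : x < 0) (hex : 0 ≤ e + x)
    (hC : ∀ u, e + x < u → u ≤ e → C ≤ 1 / (2 * u * (1 - u))) :
    C * x^2 / 2 ≤ Fe e x := by
  have h := aux_mono (fun s => Fe e (-s) - C * s^2 / 2)
      (fun s => -(I0' (e + (-s)) - I0' e - C * (-s))) (-x) (by linarith)
      (by
        apply Continuous.continuousOn
        apply Continuous.sub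
        · refine ((I0_continuous.comp ?_).sub (continuous_neg.mul continuous_const)).sub
            continuous_const
          fun_prop
        · fun_prop)
      (fun t ht => by
        have hd := psi_deriv1 e C (-t) (by simp at ht ⊢; linarith [ht.2]) (by simp at ht ⊢; linarith [ht.1])
        have h2 : HasDerivAt (fun s => Fe e (-s) - C * (-s)^2 / 2)
            ((I0' (e + (-t)) - I0' e - C * (-t)) * (-1)) t := hd.comp t (hasDerivAt_neg t)
        convert h2 using 1
        · funext s; ring_nf
        · ring)
      (fun t ht => by
        have h0 : 0 < e + (-t) := by simp at ht ⊢; linarith [ht.2]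
        have h1 : e + (-t) < 1 := by simp at ht ⊢; linarith [ht.1]
        have hd := psi_deriv2 e C (-t) h0 h1
        have h2 : HasDerivAt (fun s => I0' (e + (-s)) - I0' e - C * (-s))
            ((1 / (2 * (e + (-t)) * (1 - (e + (-t)))) - C) * (-1)) t := hd.comp t (hasDerivAt_neg t)
        refine ⟨1 / (2 * (e + (-t)) * (1 - (e + (-t)))) - C, ?_, ?_⟩
        · have := hC (e + (-t)) (by simp at ht ⊢; linarith [ht.2]) (by simp at ht ⊢; linarith)
          linarith
        · have h3 := h2.neg
          refine hasDerivAt_congr_aux h3 rfl ?_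
          ring)
      (by simp)
  have h0 : Fe e (-(0:ℝ)) - C * (0:ℝ)^2/2 = 0 := by simp [Fe]
  rw [h0] at h
  have hxx : Fe e (-(-x)) - C * (-x)^2 / 2 = Fe e x - C * x^2/2 := by
    rw [neg_neg, neg_pow]; ring
  rw [hxx] at h
  linarith

lemma Fe_le_right (e C x : ℝ) (he : 0 < e) (hx : 0 < x) (hex : e + x ≤ 1)
    (hC : ∀ u, e ≤ u → u < e + x → 1 / (2 * u * (1 - u)) ≤ C) :
    Fe e x ≤ C * x^2 / 2 := by
  have h := aux_mono (fun s => C * s^2 / 2 - Fe e s)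
      (fun s => C * s - (I0' (e + s) - I0' e)) x hx
      (by
        apply Continuous.continuousOn
        apply Continuous.sub
        · fun_prop
        · exact ((I0_continuous.comp (continuous_const.add continuous_id)).sub
            (continuous_id.mul continuous_const)).sub continuous_const)
      (fun t ht => by
        have := (psi_deriv1 e C t (by linarith [ht.1]) (by linarith [ht.2])).neg
        refine hasDerivAt_congr_aux this ?_ ?_
        · ext s; simp only [Pi.neg_apply]; ring
        · ring)
      (fun t ht => by
        refine ⟨C - 1 / (2 * (e+t) * (1 - (e+t))), ?_, ?_⟩
        · have := hC (e + t) (by linarith [ht.1]) (by linarith [ht.2])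
          linarith
        · have := (psi_deriv2 e C t (by linarith [ht.1]) (by linarith [ht.2])).neg
          refine hasDerivAt_congr_aux this ?_ ?_
          · ext s; simp only [Pi.neg_apply]; ring
          · ring)
      (by simp)
  simp only [Fe] at h ⊢
  simp at h
  linarith

noncomputable def Sset (e : ℝ) : Set ℝ :=
  {r : ℝ | ∃ x : ℝ, x ∈ Icc (-e) (1 - e) ∧ x ≠ 0 ∧
    r = (I0 (e + x) - x * I0' e - I0 e) / x ^ 2}

lemma fminus_eq (e : ℝ) : fminus e = sInf (Sset e) := rfl

lemma k_ge_two {u : ℝ} (h0 : 0 < u) (h1 : u < 1) : (2:ℝ) ≤ 1 / (2 * u * (1 - u)) := by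
  rw [le_div_iff₀ (by nlinarith)]
  nlinarith [sq_nonneg (2*u - 1)]

lemma Fe_ge_sq (e x : ℝ) (he : e ∈ Ioo (0:ℝ) 1) (hx : x ∈ Icc (-e) (1 - e)) :
    x^2 ≤ Fe e x := by
  obtain ⟨he0, he1⟩ := he
  rcases lt_trichotomy x 0 with h | h | h
  · have := Fe_ge_left e 2 x he1 h (by linarith [hx.1])
      (fun u hu1 hu2 => k_ge_two (by linarith [hx.1]) (by linarith))
    linarith
  · simp [h, Fe]
  · have := Fe_ge_right e 2 x he0 h (by linarith [hx.2])
      (fun u hu1 hu2 => k_ge_two (by linarith) (by linarith [hx.2]))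
    linarith

lemma Sset_ge_one (e : ℝ) (he : e ∈ Ioo (0:ℝ) 1) : ∀ r ∈ Sset e, (1:ℝ) ≤ r := by
  rintro r ⟨x, hx, hx0, rfl⟩
  have hx2 : 0 < x^2 := by positivity
  rw [le_div_iff₀ hx2, one_mul]
  exact Fe_ge_sq e x he hx

lemma Sset_nonempty (e : ℝ) (he : e ∈ Ioo (0:ℝ) 1) : (Sset e).Nonempty := by
  refine ⟨(I0 (e + (1-e)) - (1-e) * I0' e - I0 e) / (1-e) ^ 2, (1-e), ?_, ?_, rfl⟩
  · exact ⟨by linarith [he.1, he.2], le_refl _⟩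
  · exact sub_ne_zero.mpr he.2.ne'

lemma Sset_bddBelow (e : ℝ) (he : e ∈ Ioo (0:ℝ) 1) : BddBelow (Sset e) :=
  ⟨1, fun r hr => Sset_ge_one e he r hr⟩

lemma one_le_fminus (e : ℝ) (he : e ∈ Ioo (0:ℝ) 1) : (1:ℝ) ≤ fminus e :=
  le_csInf (Sset_nonempty e he) (Sset_ge_one e he)

lemma fminus_le (e : ℝ) (he : e ∈ Ioo (0:ℝ) 1) : fminus e ≤ 1 / (4 * e * (1 - e)) := by
  obtain ⟨he0, he1⟩ := he
  rw [fminus_eq, Real.sInf_le_iff (Sset_bddBelow e ⟨he0, he1⟩) (Sset_nonempty e ⟨he0, he1⟩)]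
  intro ε hε
  -- continuity of k at e
  have hk : ContinuousAt (fun u : ℝ => 1 / (2 * u * (1 - u))) e := by
    apply ContinuousAt.div continuousAt_const (by fun_prop)
    nlinarith
  have hlt : (fun u : ℝ => 1 / (2 * u * (1 - u))) e < 1 / (2 * e * (1 - e)) + ε := by
    simp only; linarith
  have hev := hk.eventually_lt_const hlt
  obtain ⟨δ, hδ0, hδ⟩ := Metric.eventually_nhds_iff.mp hev
  set x := min (δ/2) ((1-e)/2) with hxdef
  have hx0 : 0 < x := lt_min (by linarith) (by linarith)
  have hx1 : e + x < 1 := by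
    have : x ≤ (1-e)/2 := min_le_right _ _
    linarith
  have hC : ∀ u, e ≤ u → u < e + x → 1 / (2 * u * (1 - u)) ≤ 1 / (2 * e * (1 - e)) + ε := by
    intro u hu1 hu2
    have hxd : x ≤ δ/2 := min_le_left _ _
    have : dist u e < δ := by
      rw [Real.dist_eq, abs_lt]; constructor <;> linarith
    exact (hδ this).le
  have hFe := Fe_le_right e (1 / (2 * e * (1 - e)) + ε) x he0 hx0 hx1.le hC
  refine ⟨(I0 (e + x) - x * I0' e - I0 e) / x ^ 2, ⟨x, ⟨by linarith, by linarith⟩, hx0.ne', rfl⟩, ?_⟩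
  have hx2 : 0 < x^2 := by positivity
  rw [div_lt_iff₀ hx2]
  have heq : (1 / (2 * e * (1 - e)) + ε) * x^2 / 2 = (1 / (4 * e * (1 - e)) + ε/2) * x^2 := by
    have ha : (0:ℝ) < e * (1 - e) := by nlinarith
    rw [show (2:ℝ)*e*(1-e) = 2*(e*(1-e)) by ring, show (4:ℝ)*e*(1-e) = 4*(e*(1-e)) by ring]
    field_simp [ha.ne']
    ring
  have : Fe e x ≤ (1 / (4 * e * (1 - e)) + ε/2) * x^2 := by
    rw [← heq]; exact hFe
  have hlt2 : (1 / (4 * e * (1 - e)) + ε/2) * x^2 < (1 / (4 * e * (1 - e)) + ε) * x^2 := by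
    apply mul_lt_mul_of_pos_right _ hx2
    linarith
  calc I0 (e + x) - x * I0' e - I0 e = Fe e x := rfl
    _ ≤ (1 / (4 * e * (1 - e)) + ε/2) * x^2 := this
    _ < (1 / (4 * e * (1 - e)) + ε) * x^2 := hlt2

lemma pointwise_bound (e : ℝ) (he : e ∈ Ioo (0:ℝ) 1) (u : ℝ) (hu : u ∈ Icc (0:ℝ) 1) :
    fminus e * (u - e)^2 ≤ I0 u - I0 e - (u - e) * I0' e := by
  rcases eq_or_ne u e with rfl | hne
  · simp
  · set x := u - e with hxdef
    have hx : x ∈ Icc (-e) (1 - e) := ⟨by simp [hxdef]; linarith [hu.1], by simp [hxdef]; linarith [hu.2]⟩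
    have hx0 : x ≠ 0 := sub_ne_zero.mpr hne
    have hmem : (I0 (e + x) - x * I0' e - I0 e) / x ^ 2 ∈ Sset e := ⟨x, hx, hx0, rfl⟩
    have hle := csInf_le (Sset_bddBelow e he) hmem
    rw [← fminus_eq] at hle
    have hx2 : 0 < x^2 := by positivity
    have := mul_le_mul_of_nonneg_right hle hx2.le
    rw [div_mul_cancel₀ _ hx2.ne'] at this
    have heu : e + x = u := by rw [hxdef]; ring
    rw [heu] at this
    linarith

lemma mul_log_bounds {v : ℝ} (h0 : 0 ≤ v) (h1 : v ≤ 1) :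
    -1 ≤ v * Real.log v ∧ v * Real.log v ≤ 0 := by
  rcases eq_or_lt_of_le h0 with rfl | hv
  · simp
  · constructor
    · have hlog : Real.log (1/v) ≤ 1/v - 1 := Real.log_le_sub_one_of_pos (by positivity)
      rw [one_div, Real.log_inv] at hlog
      have : -(v * Real.log v) ≤ 1 - v := by
        have := mul_le_mul_of_nonneg_left hlog hv.le
        calc -(v * Real.log v) = v * -Real.log v := by ring
          _ ≤ v * (v⁻¹ - 1) := this
          _ = 1 - v := by field_simp
      linarith
    · exact mul_nonpos_of_nonneg_of_nonpos hv.le (Real.log_nonpos h0 h1)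

lemma abs_I0_le {u : ℝ} (hu : u ∈ Icc (0:ℝ) 1) : |I0 u| ≤ 1 := by
  obtain ⟨ha1, ha2⟩ := mul_log_bounds hu.1 hu.2
  obtain ⟨hb1, hb2⟩ := mul_log_bounds (by linarith [hu.2] : (0:ℝ) ≤ 1 - u) (by linarith [hu.1])
  rw [abs_le, I0]
  constructor <;> nlinarith

lemma integrableOn_of_bounded {f : ℝ → ℝ} {C : ℝ}
    (hm : AEStronglyMeasurable f (volume.restrict (Icc (0:ℝ) 1)))
    (hb : ∀ x ∈ Icc (0:ℝ) 1, |f x| ≤ C) :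
    IntegrableOn f (Icc (0:ℝ) 1) volume := by
  refine ⟨hm, HasFiniteIntegral.restrict_of_bounded (C := C) ?_ ?_⟩
  · rw [Real.volume_Icc]; exact ENNReal.ofReal_lt_top
  · rw [ae_restrict_iff' measurableSet_Icc]
    exact Filter.Eventually.of_forall fun x hx => by
      rw [Real.norm_eq_abs]; exact hb x hx

lemma vol01 : (volume (Icc (0:ℝ) 1)).toReal = 1 := by
  rw [Real.volume_Icc]; norm_num

lemma setIntegral_const01 (c : ℝ) : ∫ _ in Icc (0:ℝ) 1, c = c := by
  rw [setIntegral_const, measureReal_def, vol01, one_smul]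

theorem main3 (e : ℝ) (he : e ∈ Ioo (0:ℝ) 1) (g : ℝ → ℝ → ℝ) (hg : IsGraphon g)
    (hE : edgeDensity g = e) :
    rateFn g - I0 e ≥
      fminus e * ∫ x in Icc (0:ℝ) 1, ∫ y in Icc (0:ℝ) 1, (g x y - e) ^ 2 := by
  obtain ⟨hm, -, hrange⟩ := hg
  have habs : ∀ x ∈ Icc (0:ℝ) 1, ∀ y ∈ Icc (0:ℝ) 1, |g x y| ≤ 1 := by
    intro x hx y hy
    obtain ⟨h1, h2⟩ := hrange x hx y hy
    rw [abs_le]; constructor <;> linarith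
  have habsq : ∀ x ∈ Icc (0:ℝ) 1, ∀ y ∈ Icc (0:ℝ) 1, |(g x y - e)^2| ≤ 1 := by
    intro x hx y hy
    obtain ⟨h1, h2⟩ := hrange x hx y hy
    obtain ⟨he1, he2⟩ := he
    rw [abs_le]; constructor <;> nlinarith
  -- inner integrability
  have hgx : ∀ x : ℝ, Measurable (fun y => g x y) :=
    fun x => hm.comp measurable_prodMk_left
  have iI0 : ∀ x ∈ Icc (0:ℝ) 1, IntegrableOn (fun y => I0 (g x y)) (Icc (0:ℝ) 1) volume :=
    fun x hx => integrableOn_of_bounded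
      ((I0_continuous.measurable.comp (hgx x)).aestronglyMeasurable)
      (fun y hy => abs_I0_le (hrange x hx y hy))
  have ig : ∀ x ∈ Icc (0:ℝ) 1, IntegrableOn (fun y => g x y) (Icc (0:ℝ) 1) volume :=
    fun x hx => integrableOn_of_bounded (hgx x).aestronglyMeasurable (habs x hx)
  have iq : ∀ x ∈ Icc (0:ℝ) 1, IntegrableOn (fun y => (g x y - e)^2) (Icc (0:ℝ) 1) volume :=
    fun x hx => integrableOn_of_bounded
      (((hgx x).sub measurable_const).pow_const 2).aestronglyMeasurable (habsq x hx)
  have iconst : ∀ c : ℝ, IntegrableOn (fun _ : ℝ => c) (Icc (0:ℝ) 1) volume := by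
    intro c
    exact integrableOn_const (by rw [Real.volume_Icc]; exact ENNReal.ofReal_ne_top)
  -- abbreviations
  set A : ℝ → ℝ := fun x => ∫ y in Icc (0:ℝ) 1, I0 (g x y) with hA
  set B : ℝ → ℝ := fun x => ∫ y in Icc (0:ℝ) 1, g x y with hB
  set Q : ℝ → ℝ := fun x => ∫ y in Icc (0:ℝ) 1, (g x y - e)^2 with hQ
  -- inner inequality
  have inner : ∀ x ∈ Icc (0:ℝ) 1,
      fminus e * Q x ≤ A x - I0 e - (B x - e) * I0' e := by
    intro x hx
    have mono := setIntegral_mono_on ((iq x hx).const_mul (fminus e))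
      (((iI0 x hx).sub (iconst (I0 e))).sub
        (((ig x hx).sub (iconst e)).mul_const (I0' e)))
      measurableSet_Icc
      (fun y hy => pointwise_bound e he (g x y) (hrange x hx y hy))
    rw [integral_const_mul] at mono
    simp only [Pi.sub_apply] at mono
    have i1 : IntegrableOn (fun y => I0 (g x y) - I0 e) (Icc (0:ℝ) 1) volume :=
      (iI0 x hx).sub (iconst (I0 e))
    have i2 : IntegrableOn (fun y => (g x y - e) * I0' e) (Icc (0:ℝ) 1) volume :=
      ((ig x hx).sub (iconst e)).mul_const (I0' e)
    rw [integral_sub i1 i2, integral_sub (iI0 x hx) (iconst (I0 e)),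
      integral_mul_const, integral_sub (ig x hx) (iconst e),
      setIntegral_const01, setIntegral_const01] at mono
    exact mono
  -- outer integrability
  have iA : IntegrableOn A (Icc (0:ℝ) 1) volume := by
    refine integrableOn_of_bounded (C := 1) ?_ ?_
    · exact ((I0_continuous.measurable.comp hm).stronglyMeasurable.integral_prod_right'
        (ν := volume.restrict (Icc (0:ℝ) 1))).aestronglyMeasurable
    · intro x hx
      have := norm_setIntegral_le_of_norm_le_const (f := fun y => I0 (g x y))
        (μ := volume) (s := Icc (0:ℝ) 1)
        (by rw [Real.volume_Icc]; exact ENNReal.ofReal_lt_top)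
        (fun y hy => by rw [Real.norm_eq_abs]; exact abs_I0_le (hrange x hx y hy))
      rwa [measureReal_def, vol01, mul_one, Real.norm_eq_abs] at this
  have iB : IntegrableOn B (Icc (0:ℝ) 1) volume := by
    refine integrableOn_of_bounded (C := 1) ?_ ?_
    · exact (hm.stronglyMeasurable.integral_prod_right'
        (ν := volume.restrict (Icc (0:ℝ) 1))).aestronglyMeasurable
    · intro x hx
      have := norm_setIntegral_le_of_norm_le_const (f := fun y => g x y)
        (μ := volume) (s := Icc (0:ℝ) 1)
        (by rw [Real.volume_Icc]; exact ENNReal.ofReal_lt_top)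
        (fun y hy => by rw [Real.norm_eq_abs]; exact habs x hx y hy)
      rwa [measureReal_def, vol01, mul_one, Real.norm_eq_abs] at this
  have iQ : IntegrableOn Q (Icc (0:ℝ) 1) volume := by
    refine integrableOn_of_bounded (C := 1) ?_ ?_
    · exact ((((hm.sub measurable_const).pow_const 2)).stronglyMeasurable.integral_prod_right'
        (ν := volume.restrict (Icc (0:ℝ) 1))).aestronglyMeasurable
    · intro x hx
      have := norm_setIntegral_le_of_norm_le_const (f := fun y => (g x y - e)^2)
        (μ := volume) (s := Icc (0:ℝ) 1)
        (by rw [Real.volume_Icc]; exact ENNReal.ofReal_lt_top)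
        (fun y hy => by rw [Real.norm_eq_abs]; exact habsq x hx y hy)
      rwa [measureReal_def, vol01, mul_one, Real.norm_eq_abs] at this
  -- outer inequality
  have outer := setIntegral_mono_on (iQ.const_mul (fminus e))
    ((iA.sub (iconst (I0 e))).sub ((iB.sub (iconst e)).mul_const (I0' e)))
    measurableSet_Icc inner
  rw [integral_const_mul] at outer
  simp only [Pi.sub_apply] at outer
  have j1 : IntegrableOn (fun x => A x - I0 e) (Icc (0:ℝ) 1) volume :=
    iA.sub (iconst (I0 e))
  have j2 : IntegrableOn (fun x => (B x - e) * I0' e) (Icc (0:ℝ) 1) volume :=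
    (iB.sub (iconst e)).mul_const (I0' e)
  rw [integral_sub j1 j2, integral_sub iA (iconst (I0 e)),
    integral_mul_const, integral_sub iB (iconst e),
    setIntegral_const01, setIntegral_const01] at outer
  have hAint : ∫ x in Icc (0:ℝ) 1, A x = rateFn g := rfl
  have hBint : ∫ x in Icc (0:ℝ) 1, B x = e := hE
  rw [hAint, hBint] at outer
  have : ∫ x in Icc (0:ℝ) 1, Q x
      = ∫ x in Icc (0:ℝ) 1, ∫ y in Icc (0:ℝ) 1, (g x y - e) ^ 2 := rfl
  rw [this] at outer
  linarith [outer]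

/-- `f₋(e)` is positive, at most `I₀''(e)/2 = 1/(4e(1-e))`, and every graphon with
edge density `e` satisfies `I(g) - I₀(e) ≥ f₋(e) ∫∫ (g - e)²`. -/
theorem rate_function_quadratic_bound (e : ℝ) (he : e ∈ Ioo (0:ℝ) 1) :
    0 < fminus e ∧ fminus e ≤ 1 / (4 * e * (1 - e)) ∧
    ∀ g : ℝ → ℝ → ℝ, IsGraphon g → edgeDensity g = e →
      rateFn g - I0 e ≥
        fminus e * ∫ x in Icc (0:ℝ) 1, ∫ y in Icc (0:ℝ) 1, (g x y - e) ^ 2 := by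
  exact ⟨lt_of_lt_of_le zero_lt_one (one_le_fminus e he), fminus_le e he,
    fun g hg hE => main3 e he g hg hE⟩
end

section
/- Let k : [0,1]² → ℝ be a bounded measurable symmetric function (k(x,y) = k(y,x)). Then equality |∫_{[0,1]³} k(x,y)·k(y,z)·k(z,x) dx dy dz| = (∫_{[0,1]²} k(x,y)² dx dy)^{3/2} holds if and only if the associated integral operator on L²[0,1] has rank at most one, i.e. if and only if there exist c ∈ ℝ and a square-integrable function φ : [0,1] → ℝ such that k(x,y) = c·φ(x)·φ(y) for almost every (x,y). -/
set_option maxHeartbeats 1000000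
open MeasureTheory Set

lemma intg_of_bdd {α : Type*} [MeasurableSpace α] {μ : Measure α} [IsFiniteMeasure μ]
    {f : α → ℝ} {M : ℝ} (hm : Measurable f) (hb : ∀ a, |f a| ≤ M) : Integrable f μ :=
  ⟨hm.aestronglyMeasurable, HasFiniteIntegral.of_bounded (C := M)
    (Filter.Eventually.of_forall fun a => by simpa [Real.norm_eq_abs] using hb a)⟩

lemma cs_le {α : Type*} [MeasurableSpace α] {μ : Measure α} {f g : α → ℝ}
    (hf2 : Integrable (fun a => f a ^ 2) μ) (hg2 : Integrable (fun a => g a ^ 2) μ)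
    (hfg : Integrable (fun a => f a * g a) μ) :
    (∫ a, f a * g a ∂μ) ^ 2 ≤ (∫ a, f a ^ 2 ∂μ) * (∫ a, g a ^ 2 ∂μ) := by
  by_cases hg : ∫ a, g a ^ 2 ∂μ = 0
  · have hg0 : (fun a => g a ^ 2) =ᵐ[μ] 0 :=
      (integral_eq_zero_iff_of_nonneg (fun a => sq_nonneg _) hg2).mp hg
    have hfg0 : (fun a => f a * g a) =ᵐ[μ] 0 := by
      filter_upwards [hg0] with a ha
      have : g a = 0 := by simpa [pow_eq_zero_iff] using ha
      simp [this]
    rw [integral_congr_ae hfg0, hg]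
    simp
  · have hG : 0 < ∫ a, g a ^ 2 ∂μ :=
      lt_of_le_of_ne (integral_nonneg fun a => sq_nonneg _) (Ne.symm hg)
    set q := ∫ a, f a * g a ∂μ with hq
    set G := ∫ a, g a ^ 2 ∂μ with hGdef
    set t := q / G with ht
    have hint : Integrable (fun a => (f a - t * g a) ^ 2) μ := by
      have : Integrable (fun a => f a ^ 2 - 2 * t * (f a * g a) + t ^ 2 * g a ^ 2) μ :=
        (hf2.sub (hfg.const_mul _)).add (hg2.const_mul _)
      exact this.congr (Filter.Eventually.of_forall fun a => by ring)
    have h0 : 0 ≤ ∫ a, (f a - t * g a) ^ 2 ∂μ := integral_nonneg fun a => sq_nonneg _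
    have hexp : ∫ a, (f a - t * g a) ^ 2 ∂μ
        = (∫ a, f a ^ 2 ∂μ) - 2 * t * q + t ^ 2 * G := by
      have h1 : (fun a => (f a - t * g a) ^ 2)
          = fun a => f a ^ 2 - 2 * t * (f a * g a) + t ^ 2 * g a ^ 2 := by
        funext a; ring
      have i1 : Integrable (fun a => 2 * t * (f a * g a)) μ := hfg.const_mul _
      have i2 : Integrable (fun a => t ^ 2 * g a ^ 2) μ := hg2.const_mul _
      have i3 : Integrable (fun a => f a ^ 2 - 2 * t * (f a * g a)) μ := hf2.sub i1
      rw [h1, integral_add i3 i2, integral_sub hf2 i1, integral_const_mul, integral_const_mul]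
    rw [hexp] at h0
    have ht2 : t ^ 2 * G = q ^ 2 / G := by
      rw [ht]; field_simp
    have ht1 : 2 * t * q = 2 * (q ^ 2 / G) := by
      rw [ht]; field_simp
    rw [ht2, ht1] at h0
    have : q ^ 2 / G ≤ ∫ a, f a ^ 2 ∂μ := by linarith
    calc q ^ 2 = q ^ 2 / G * G := by field_simp
    _ ≤ (∫ a, f a ^ 2 ∂μ) * G := mul_le_mul_of_nonneg_right this hG.le

lemma cs_eq {α : Type*} [MeasurableSpace α] {μ : Measure α} {f g : α → ℝ}
    (hf2 : Integrable (fun a => f a ^ 2) μ) (hg2 : Integrable (fun a => g a ^ 2) μ)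
    (hfg : Integrable (fun a => f a * g a) μ)
    (hg : ∫ a, g a ^ 2 ∂μ ≠ 0)
    (heq : (∫ a, f a * g a ∂μ) ^ 2 = (∫ a, f a ^ 2 ∂μ) * (∫ a, g a ^ 2 ∂μ)) :
    ∀ᵐ a ∂μ, f a = ((∫ a, f a * g a ∂μ) / (∫ a, g a ^ 2 ∂μ)) * g a := by
  have hG : 0 < ∫ a, g a ^ 2 ∂μ :=
    lt_of_le_of_ne (integral_nonneg fun a => sq_nonneg _) (Ne.symm hg)
  set q := ∫ a, f a * g a ∂μ with hq
  set G := ∫ a, g a ^ 2 ∂μ with hGdef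
  set t := q / G with ht
  have hint : Integrable (fun a => (f a - t * g a) ^ 2) μ := by
    have : Integrable (fun a => f a ^ 2 - 2 * t * (f a * g a) + t ^ 2 * g a ^ 2) μ :=
      (hf2.sub (hfg.const_mul _)).add (hg2.const_mul _)
    exact this.congr (Filter.Eventually.of_forall fun a => by ring)
  have hexp : ∫ a, (f a - t * g a) ^ 2 ∂μ
      = (∫ a, f a ^ 2 ∂μ) - 2 * t * q + t ^ 2 * G := by
    have h1 : (fun a => (f a - t * g a) ^ 2)
        = fun a => f a ^ 2 - 2 * t * (f a * g a) + t ^ 2 * g a ^ 2 := by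
      funext a; ring
    have i1 : Integrable (fun a => 2 * t * (f a * g a)) μ := hfg.const_mul _
    have i2 : Integrable (fun a => t ^ 2 * g a ^ 2) μ := hg2.const_mul _
    have i3 : Integrable (fun a => f a ^ 2 - 2 * t * (f a * g a)) μ := hf2.sub i1
    rw [h1, integral_add i3 i2, integral_sub hf2 i1, integral_const_mul, integral_const_mul]
  have hzero : ∫ a, (f a - t * g a) ^ 2 ∂μ = 0 := by
    rw [hexp]
    have h2 : (∫ a, f a ^ 2 ∂μ) = q ^ 2 / G := by
      field_simp at heq ⊢
      linarith [heq]
    have ht2 : t ^ 2 * G = q ^ 2 / G := by rw [ht]; field_simp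
    have ht1 : 2 * t * q = 2 * (q ^ 2 / G) := by rw [ht]; field_simp
    rw [h2, ht2, ht1]; ring
  have := (integral_eq_zero_iff_of_nonneg (fun a => sq_nonneg _) hint).mp hzero
  filter_upwards [this] with a ha
  have : f a - t * g a = 0 := by
    have := ha
    simpa [pow_eq_zero_iff] using this
  linarith [this]


/-- Equality `|Tr(T_k³)| = (Tr(T_k²))^{3/2}` holds iff the integral operator with
kernel `k` has rank at most one, i.e. iff `k(x,y) = c φ(x) φ(y)` a.e. on `[0,1]²`
for some `c ∈ ℝ` and square-integrable `φ`. -/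
theorem trace_cube_eq_iff_rank_one (k : ℝ → ℝ → ℝ)
    (hmeas : Measurable (Function.uncurry k))
    (hbdd : ∃ M : ℝ, ∀ x y, |k x y| ≤ M)
    (hsymm : ∀ x y, k x y = k y x) :
    |∫ x in Icc (0:ℝ) 1, ∫ y in Icc (0:ℝ) 1, ∫ z in Icc (0:ℝ) 1,
        k x y * k y z * k z x| =
      (∫ x in Icc (0:ℝ) 1, ∫ y in Icc (0:ℝ) 1, (k x y) ^ 2) ^ ((3:ℝ)/2) ↔
    ∃ (c : ℝ) (φ : ℝ → ℝ), Measurable φ ∧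
      IntegrableOn (fun x => (φ x) ^ 2) (Icc (0:ℝ) 1) ∧
      ∀ᵐ p : ℝ × ℝ ∂(volume.restrict (Icc (0:ℝ) 1 ×ˢ Icc (0:ℝ) 1)),
        k p.1 p.2 = c * φ p.1 * φ p.2 := by
  obtain ⟨M₀, hM₀⟩ := hbdd
  set M : ℝ := |M₀| with hMdef
  have hM : ∀ x y, |k x y| ≤ M := fun x y => (hM₀ x y).trans (le_abs_self _)
  have hM0 : 0 ≤ M := abs_nonneg _
  set μ : Measure ℝ := volume.restrict (Icc (0:ℝ) 1) with hμdef
  haveI : IsProbabilityMeasure μ := ⟨by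
    rw [hμdef, Measure.restrict_apply_univ, Real.volume_Icc]; norm_num⟩
  have hν : volume.restrict (Icc (0:ℝ) 1 ×ˢ Icc (0:ℝ) 1) = μ.prod μ := by
    rw [hμdef, Measure.prod_restrict, ← Measure.volume_eq_prod]
  -- measurability of k
  have hmk : Measurable fun p : ℝ × ℝ => k p.1 p.2 := hmeas
  have hmkx : ∀ x, Measurable (k x) := fun x => hmeas.comp measurable_prodMk_left
  have hmky : ∀ z, Measurable (fun y => k y z) := fun z =>
    hmeas.comp (measurable_id.prodMk measurable_const)
  -- k2 and F
  set k₂ : ℝ → ℝ → ℝ := fun x z => ∫ y, k x y * k y z ∂μ with hk₂def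
  have hk₂m : Measurable fun p : ℝ × ℝ => k₂ p.1 p.2 := by
    have h1 : Measurable fun q : (ℝ × ℝ) × ℝ => k q.1.1 q.2 * k q.2 q.1.2 :=
      (hmeas.comp (measurable_fst.fst.prodMk measurable_snd)).mul
        (hmeas.comp (measurable_snd.prodMk measurable_fst.snd))
    exact (h1.stronglyMeasurable.integral_prod_right').measurable
  have hk₂b : ∀ x z, |k₂ x z| ≤ M ^ 2 := by
    intro x z
    have := norm_integral_le_of_norm_le_const (μ := μ)
      (f := fun y => k x y * k y z) (C := M ^ 2)
      (Filter.Eventually.of_forall fun y => by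
        rw [Real.norm_eq_abs, abs_mul, sq]
        exact mul_le_mul (hM x y) (hM y z) (abs_nonneg _) hM0)
    simpa [Real.norm_eq_abs] using this
  have hk₂s : ∀ x z, k₂ x z = k₂ z x := by
    intro x z
    simp only [hk₂def]
    have : ∀ y, k z y * k y x = k x y * k y z := fun y => by
      rw [hsymm z y, hsymm y x]; ring
    simp only [this]
  set F : ℝ → ℝ := fun x => ∫ y, (k x y) ^ 2 ∂μ with hFdef
  have hFm : Measurable F := by
    have h1 : Measurable fun q : ℝ × ℝ => (k q.1 q.2) ^ 2 := hmk.pow_const 2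
    exact (h1.stronglyMeasurable.integral_prod_right').measurable
  have hF0 : ∀ x, 0 ≤ F x := fun x => integral_nonneg fun y => sq_nonneg _
  have hFb : ∀ x, F x ≤ M ^ 2 := by
    intro x
    have := norm_integral_le_of_norm_le_const (μ := μ)
      (f := fun y => (k x y) ^ 2) (C := M ^ 2)
      (Filter.Eventually.of_forall fun y => by
        show ‖k x y ^ 2‖ ≤ M ^ 2
        rw [Real.norm_eq_abs, abs_of_nonneg (sq_nonneg _), ← sq_abs (k x y)]
        exact pow_le_pow_left₀ (abs_nonneg _) (hM x y) 2)
    have h2 : |F x| ≤ M ^ 2 := by simpa [Real.norm_eq_abs] using this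
    exact (le_abs_self _).trans h2
  have hFcol : ∀ z, (∫ y, (k y z) ^ 2 ∂μ) = F z := by
    intro z
    have : ∀ y, (k y z) ^ 2 = (k z y) ^ 2 := fun y => by rw [hsymm]
    simp only [this, hFdef]
  -- integrabilities on the product
  have hint_sq : Integrable (fun p : ℝ × ℝ => (k p.1 p.2) ^ 2) (μ.prod μ) :=
    intg_of_bdd (hmk.pow_const 2) (fun p => by
      rw [abs_of_nonneg (sq_nonneg _), ← sq_abs (k p.1 p.2)]
      exact pow_le_pow_left₀ (abs_nonneg _) (hM p.1 p.2) 2)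
  have habs_sq : ∀ (a b : ℝ), |a| ≤ b → |a ^ 2| ≤ b ^ 2 := fun a b h => by
    rw [abs_of_nonneg (sq_nonneg _), ← sq_abs a]
    exact pow_le_pow_left₀ (abs_nonneg _) h 2
  have hint_k₂sq : Integrable (fun p : ℝ × ℝ => (k₂ p.1 p.2) ^ 2) (μ.prod μ) :=
    intg_of_bdd (hk₂m.pow_const 2) (fun p => habs_sq _ _ (hk₂b p.1 p.2))
  have hint_FF : Integrable (fun p : ℝ × ℝ => F p.1 * F p.2) (μ.prod μ) :=
    intg_of_bdd ((hFm.comp measurable_fst).mul (hFm.comp measurable_snd))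
      (M := M ^ 2 * M ^ 2) (fun p => by
      show |F p.1 * F p.2| ≤ M ^ 2 * M ^ 2
      rw [abs_mul, abs_of_nonneg (hF0 _), abs_of_nonneg (hF0 _)]
      exact mul_le_mul (hFb _) (hFb _) (hF0 _) (sq_nonneg _))
  have hint_kk₂ : Integrable (fun p : ℝ × ℝ => k₂ p.1 p.2 * k p.1 p.2) (μ.prod μ) :=
    intg_of_bdd (hk₂m.mul hmk) (M := M ^ 2 * M) (fun p => by
      rw [abs_mul]
      exact mul_le_mul (hk₂b _ _) (hM _ _) (abs_nonneg _) (sq_nonneg _))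
  set S : ℝ := ∫ p : ℝ × ℝ, (k p.1 p.2) ^ 2 ∂(μ.prod μ) with hSdef
  have hS0 : 0 ≤ S := integral_nonneg fun p => sq_nonneg _
  have hSiter : (∫ x, ∫ y, (k x y) ^ 2 ∂μ ∂μ) = S := integral_integral hint_sq
  have hSF : (∫ x, F x ∂μ) = S := hSiter
  set A : ℝ := ∫ p : ℝ × ℝ, k₂ p.1 p.2 * k p.1 p.2 ∂(μ.prod μ) with hAdef
  -- triple integral equals A
  have hTA : (∫ x, ∫ y, ∫ z, k x y * k y z * k z x ∂μ ∂μ ∂μ) = A := by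
    have step1 : ∀ x y, (∫ z, k x y * k y z * k z x ∂μ) = k x y * k₂ y x := by
      intro x y
      simp only [mul_assoc]
      rw [integral_const_mul]
    have hint2 : Integrable (fun p : ℝ × ℝ => k p.1 p.2 * k₂ p.2 p.1) (μ.prod μ) :=
      intg_of_bdd (hmk.mul (hk₂m.comp measurable_swap)) (M := M * M ^ 2) (fun p => by
        rw [abs_mul]
        exact mul_le_mul (hM _ _) (hk₂b _ _) (abs_nonneg _) hM0)
    calc (∫ x, ∫ y, ∫ z, k x y * k y z * k z x ∂μ ∂μ ∂μ)
        = ∫ x, ∫ y, k x y * k₂ y x ∂μ ∂μ := by simp only [step1]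
      _ = ∫ p : ℝ × ℝ, k p.1 p.2 * k₂ p.2 p.1 ∂(μ.prod μ) := integral_integral hint2
      _ = A := integral_congr_ae (Filter.Eventually.of_forall fun p => by
            show k p.1 p.2 * k₂ p.2 p.1 = k₂ p.1 p.2 * k p.1 p.2
            rw [hk₂s p.2 p.1, mul_comm])
  -- pointwise Cauchy-Schwarz
  have hint_fx2 : ∀ x, Integrable (fun y => (k x y) ^ 2) μ := fun x =>
    intg_of_bdd ((hmkx x).pow_const 2) (fun y => habs_sq _ _ (hM x y))
  have hint_gz2 : ∀ z, Integrable (fun y => (k y z) ^ 2) μ := fun z =>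
    intg_of_bdd ((hmky z).pow_const 2) (fun y => habs_sq _ _ (hM y z))
  have hint_fg : ∀ x z, Integrable (fun y => k x y * k y z) μ := fun x z =>
    intg_of_bdd ((hmkx x).mul (hmky z)) (M := M * M) (fun y => by
      rw [abs_mul]; exact mul_le_mul (hM _ _) (hM _ _) (abs_nonneg _) hM0)
  have hpt : ∀ x z, (k₂ x z) ^ 2 ≤ F x * F z := by
    intro x z
    have h := cs_le (hint_fx2 x) (hint_gz2 z) (hint_fg x z)
    rw [hFcol z] at h
    exact h
  have h2 : (∫ p : ℝ × ℝ, (k₂ p.1 p.2) ^ 2 ∂(μ.prod μ)) ≤ S ^ 2 := by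
    have h := integral_mono hint_k₂sq hint_FF (fun p => hpt p.1 p.2)
    rwa [integral_prod_mul, hSF, ← sq] at h
  constructor
  · -- forward direction
    intro heq
    rw [hTA, hSiter] at heq
    by_cases hS : S = 0
    · -- k = 0 a.e.
      have hzero : (∫ p : ℝ × ℝ, (k p.1 p.2) ^ 2 ∂(μ.prod μ)) = 0 := by rw [← hSdef]; exact hS
      have hk0 := (integral_eq_zero_iff_of_nonneg (fun p => sq_nonneg _) hint_sq).mp hzero
      refine ⟨0, fun _ => 0, measurable_const, by simpa using (integrable_const (0:ℝ)).integrableOn, ?_⟩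
      rw [hν]
      filter_upwards [hk0] with p hp
      have : k p.1 p.2 = 0 := by
        have hp' : (k p.1 p.2) ^ 2 = 0 := hp
        exact sq_eq_zero_iff.mp hp'
      simp [this]
    · have hSpos : 0 < S := lt_of_le_of_ne hS0 (Ne.symm hS)
      -- |A| = S^{3/2} implies A² = S³
      have hA2 : A ^ 2 = S ^ 3 := by
        have h1 : |A| ^ 2 = (S ^ ((3:ℝ)/2)) ^ 2 := by rw [heq]
        rw [sq_abs] at h1
        rw [h1, ← Real.rpow_natCast (S ^ ((3:ℝ)/2)) 2, ← Real.rpow_mul hS0,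
          ← Real.rpow_natCast S 3]
        norm_num
      have hcs : A ^ 2 ≤ (∫ p : ℝ × ℝ, (k₂ p.1 p.2) ^ 2 ∂(μ.prod μ)) * S :=
        cs_le hint_k₂sq hint_sq hint_kk₂
      have hI2 : S ^ 2 ≤ ∫ p : ℝ × ℝ, (k₂ p.1 p.2) ^ 2 ∂(μ.prod μ) := by
        nlinarith [hcs, hA2, hSpos]
      have hKeq : (∫ p : ℝ × ℝ, (k₂ p.1 p.2) ^ 2 ∂(μ.prod μ)) = S ^ 2 := le_antisymm h2 hI2
      have hFFint : (∫ p : ℝ × ℝ, F p.1 * F p.2 ∂(μ.prod μ)) = S ^ 2 := by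
        rw [integral_prod_mul, hSF]; ring
      have heqFF : (∫ p : ℝ × ℝ, (F p.1 * F p.2 - (k₂ p.1 p.2) ^ 2) ∂(μ.prod μ)) = 0 := by
        rw [integral_sub hint_FF hint_k₂sq, hFFint, hKeq, sub_self]
      have hnn : (0 : (ℝ × ℝ) → ℝ) ≤ fun p : ℝ × ℝ => F p.1 * F p.2 - (k₂ p.1 p.2) ^ 2 :=
        fun p => sub_nonneg.mpr (hpt p.1 p.2)
      have hintsub : Integrable (fun p : ℝ × ℝ => F p.1 * F p.2 - (k₂ p.1 p.2) ^ 2)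
          (μ.prod μ) := hint_FF.sub hint_k₂sq
      have hae0 := (integral_eq_zero_iff_of_nonneg hnn hintsub).mp heqFF
      have haeq : ∀ᵐ p : ℝ × ℝ ∂(μ.prod μ), (k₂ p.1 p.2) ^ 2 = F p.1 * F p.2 := by
        filter_upwards [hae0] with p hp
        have hp' : F p.1 * F p.2 - (k₂ p.1 p.2) ^ 2 = 0 := hp
        linarith
      have hxz := Measure.ae_ae_of_ae_prod haeq
      have hFne : ¬ (∀ᵐ x ∂μ, F x = 0) := by
        intro h
        have h0 : (∫ x, F x ∂μ) = 0 := by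
          rw [integral_congr_ae (g := fun _ => (0:ℝ)) (by filter_upwards [h] with x hx using hx)]
          simp
        rw [hSF] at h0; exact hS h0
      obtain ⟨x₀, hx₀F, hx₀⟩ := ((Filter.not_eventually.mp hFne).and_eventually hxz).exists
      set φ : ℝ → ℝ := fun y => k x₀ y with hφdef
      have hφm : Measurable φ := hmkx x₀
      have hFx₀ : (∫ y, φ y ^ 2 ∂μ) = F x₀ := rfl
      set lam : ℝ → ℝ := fun z => k₂ x₀ z / F x₀ with hlamdef
      have hlamm : Measurable lam :=
        (hk₂m.comp (measurable_const.prodMk measurable_id)).div_const _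
      have hslice : ∀ᵐ z ∂μ, ∀ᵐ y ∂μ, k y z = lam z * φ y := by
        filter_upwards [hx₀] with z hz
        have hcomm : (∫ y, k y z * k x₀ y ∂μ) = k₂ x₀ z :=
          integral_congr_ae (Filter.Eventually.of_forall fun y => mul_comm _ _)
        have hfg' : Integrable (fun y => k y z * k x₀ y) μ :=
          intg_of_bdd ((hmky z).mul (hmkx x₀)) (M := M * M) (fun y => by
            rw [abs_mul]; exact mul_le_mul (hM _ _) (hM _ _) (abs_nonneg _) hM0)
        have hkey : (∫ y, k y z * k x₀ y ∂μ) ^ 2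
            = (∫ y, (k y z) ^ 2 ∂μ) * (∫ y, (k x₀ y) ^ 2 ∂μ) := by
          rw [hcomm, hFcol z]
          show (k₂ x₀ z) ^ 2 = F z * F x₀
          rw [hz]; ring
        have hres := cs_eq (hint_gz2 z) (hint_fx2 x₀) hfg' hx₀F hkey
        filter_upwards [hres] with y hy
        rw [hy, hcomm]
      have hs1 : MeasurableSet {p : ℝ × ℝ | k p.2 p.1 = lam p.1 * φ p.2} :=
        measurableSet_eq_fun
          (hmk.comp (measurable_snd.prodMk measurable_fst))
          ((hlamm.comp measurable_fst).mul (hφm.comp measurable_snd))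
      have hprod1 : ∀ᵐ p : ℝ × ℝ ∂(μ.prod μ), k p.2 p.1 = lam p.1 * φ p.2 :=
        (Measure.ae_prod_iff_ae_ae hs1).mpr hslice
      have h1' : ∀ᵐ p : ℝ × ℝ ∂(μ.prod μ), k p.1 p.2 = lam p.1 * φ p.2 := by
        filter_upwards [hprod1] with p hp
        rw [hsymm]; exact hp
      have hswap : ∀ᵐ p : ℝ × ℝ ∂(μ.prod μ), k p.1 p.2 = lam p.2 * φ p.1 := by
        have h := hprod1
        rw [← Measure.prod_swap (μ := μ) (ν := μ)] at h
        rw [ae_map_iff measurable_swap.aemeasurable hs1] at h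
        simpa using h
      have hlamphi : ∀ᵐ p : ℝ × ℝ ∂(μ.prod μ), lam p.1 * φ p.2 = lam p.2 * φ p.1 := by
        filter_upwards [h1', hswap] with p e1 e2
        rw [← e1, ← e2]
      have hlp := Measure.ae_ae_of_ae_prod hlamphi
      have hφne : ¬ (∀ᵐ y ∂μ, φ y = 0) := by
        intro h
        have h0 : (∫ y, φ y ^ 2 ∂μ) = 0 := by
          rw [integral_congr_ae (g := fun _ => (0:ℝ))
            (by filter_upwards [h] with y hy; simp [hy])]
          simp
        rw [hFx₀] at h0; exact hx₀F h0
      obtain ⟨y₁, hy₁φ, hy₁⟩ := ((Filter.not_eventually.mp hφne).and_eventually hlp).exists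
      set c : ℝ := lam y₁ / φ y₁ with hcdef
      have hc : ∀ᵐ z ∂μ, lam z = c * φ z := by
        filter_upwards [hy₁] with z hz
        rw [hcdef]
        field_simp
        linarith [hz]
      have hs2 : MeasurableSet {p : ℝ × ℝ | lam p.1 = c * φ p.1} := by
        have : MeasurableSet {x : ℝ | lam x = c * φ x} :=
          measurableSet_eq_fun hlamm (hφm.const_mul c)
        exact measurable_fst this
      have hcprod : ∀ᵐ p : ℝ × ℝ ∂(μ.prod μ), lam p.1 = c * φ p.1 := by
        rw [Measure.ae_prod_iff_ae_ae hs2]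
        filter_upwards [hc] with x hx
        exact Filter.Eventually.of_forall fun _ => hx
      refine ⟨c, φ, hφm, hint_fx2 x₀, ?_⟩
      rw [hν]
      filter_upwards [h1', hcprod] with p e1 e2
      rw [e1, e2]
  · -- backward direction
    rintro ⟨c, φ, hφm, hφint, hae⟩
    rw [hν] at hae
    have hφ2 : Integrable (fun x => φ x ^ 2) μ := hφint
    set I : ℝ := ∫ y, φ y ^ 2 ∂μ with hIdef
    have hI0 : 0 ≤ I := integral_nonneg fun y => sq_nonneg _
    have hφφ : (∫ y, φ y * φ y ∂μ) = I := by
      simp_rw [← pow_two]; rfl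
    have h_xy := Measure.ae_ae_of_ae_prod hae
    set ψ : ℝ → ℝ := fun x => ∫ y, k x y * φ y ∂μ with hψdef
    have hψ : ∀ᵐ x ∂μ, ψ x = c * I * φ x := by
      filter_upwards [h_xy] with x hx
      have e1 : ψ x = ∫ y, c * φ x * (φ y * φ y) ∂μ :=
        integral_congr_ae (by filter_upwards [hx] with y hy; rw [hy]; ring)
      rw [e1, integral_const_mul, hφφ]; ring
    have hk₂ae : ∀ᵐ z ∂μ, ∀ x, k₂ x z = c * φ z * ψ x := by
      filter_upwards [h_xy] with z hz
      intro x
      have e1 : k₂ x z = ∫ y, c * φ z * (k x y * φ y) ∂μ :=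
        integral_congr_ae (by
          filter_upwards [hz] with y hy
          show k x y * k y z = c * φ z * (k x y * φ y)
          rw [hsymm y z, hy]; ring)
      rw [e1, integral_const_mul]
    have hgint : Integrable (fun p : ℝ × ℝ => k₂ p.1 p.2 * (c * φ p.1 * φ p.2)) (μ.prod μ) :=
      hint_kk₂.congr (by filter_upwards [hae] with p hp; rw [hp])
    have hA1 : A = ∫ x, ∫ z, k₂ x z * (c * φ x * φ z) ∂μ ∂μ := by
      rw [hAdef, integral_integral hgint]
      exact integral_congr_ae (by filter_upwards [hae] with p hp; rw [hp])
    have hinner : ∀ x, (∫ z, k₂ x z * (c * φ x * φ z) ∂μ) = c ^ 2 * I * (ψ x * φ x) := by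
      intro x
      have e1 : (∫ z, k₂ x z * (c * φ x * φ z) ∂μ)
          = ∫ z, c ^ 2 * (ψ x * φ x) * (φ z * φ z) ∂μ :=
        integral_congr_ae (by
          filter_upwards [hk₂ae] with z hz
          rw [hz x]; ring)
      rw [e1, integral_const_mul, hφφ]; ring
    have hA2 : A = c ^ 3 * I ^ 3 := by
      rw [hA1]
      have e2 : (∫ x, ∫ z, k₂ x z * (c * φ x * φ z) ∂μ ∂μ)
          = ∫ x, c ^ 2 * I * (ψ x * φ x) ∂μ := by
        simp_rw [hinner]
      rw [e2, integral_const_mul]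
      have e3 : (∫ x, ψ x * φ x ∂μ) = ∫ x, c * I * (φ x * φ x) ∂μ :=
        integral_congr_ae (by filter_upwards [hψ] with x hx; rw [hx]; ring)
      rw [e3, integral_const_mul, hφφ]; ring
    have hSval : S = c ^ 2 * I ^ 2 := by
      have e1 : S = ∫ p : ℝ × ℝ, (c ^ 2 * φ p.1 ^ 2) * φ p.2 ^ 2 ∂(μ.prod μ) := by
        rw [hSdef]
        exact integral_congr_ae (by filter_upwards [hae] with p hp; rw [hp]; ring)
      rw [e1, integral_prod_mul (f := fun x => c ^ 2 * φ x ^ 2) (g := fun y => φ y ^ 2),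
        integral_const_mul, ← hIdef]
      ring
    rw [hTA, hSiter, hA2, hSval]
    have e4 : c ^ 2 * I ^ 2 = (|c| * I) ^ 2 := by
      rw [mul_pow, sq_abs]
    have e5 : |c ^ 3 * I ^ 3| = (|c| * I) ^ 3 := by
      rw [abs_mul, abs_pow, abs_pow, abs_of_nonneg hI0, mul_pow]
    rw [e4, e5, ← Real.rpow_natCast (|c| * I) 2, ← Real.rpow_mul (by positivity),
      ← Real.rpow_natCast (|c| * I) 3]
    norm_num
end

section
/- Every graphon g with edge density e = e(g) satisfies e³ - t(g) ≤ (∫_{[0,1]²} (g(x,y) - e)² dx dy)^{3/2}. -/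
open MeasureTheory Set

lemma aux_integrable_of_bdd {α : Type*} [MeasurableSpace α] {μ : Measure α}
    [IsFiniteMeasure μ] {F : α → ℝ} (hm : AEStronglyMeasurable F μ)
    {C : ℝ} (hb : ∀ᵐ a ∂μ, |F a| ≤ C) : Integrable F μ :=
  (integrable_const C).mono' hm (by simpa [Real.norm_eq_abs] using hb)

lemma aux_cs {α : Type*} [MeasurableSpace α] {μ : Measure α} {u v : α → ℝ}
    (hu : Integrable (fun a => u a ^ 2) μ) (hv : Integrable (fun a => v a ^ 2) μ)
    (huv : Integrable (fun a => u a * v a) μ) :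
    |∫ a, u a * v a ∂μ| ≤ Real.sqrt (∫ a, u a ^ 2 ∂μ) * Real.sqrt (∫ a, v a ^ 2 ∂μ) := by
  set A := ∫ a, u a ^ 2 ∂μ with hA
  set B := ∫ a, u a * v a ∂μ with hB
  set C := ∫ a, v a ^ 2 ∂μ with hC
  have hA0 : 0 ≤ A := integral_nonneg fun a => sq_nonneg _
  have hC0 : 0 ≤ C := integral_nonneg fun a => sq_nonneg _
  have key : ∀ t : ℝ, 0 ≤ C * (t * t) + (2 * B) * t + A := by
    intro t
    have h1 : (fun a => (u a + t * v a) ^ 2)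
        = fun a => u a ^ 2 + ((2 * t) * (u a * v a) + (t * t) * (v a ^ 2)) := by
      funext a; ring
    have h2 : 0 ≤ ∫ a, (u a + t * v a) ^ 2 ∂μ := integral_nonneg fun a => sq_nonneg _
    rw [h1] at h2
    have hi2 : Integrable (fun a => 2 * t * (u a * v a) + t * t * v a ^ 2) μ :=
      (huv.const_mul (2 * t)).add (hv.const_mul (t * t))
    rw [integral_add hu hi2,
      integral_add (huv.const_mul (2 * t)) (hv.const_mul (t * t)),
      integral_const_mul, integral_const_mul, ← hA, ← hB, ← hC] at h2
    nlinarith [h2]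
  have hd := discrim_le_zero key
  rw [discrim] at hd
  have hBsq : B ^ 2 ≤ A * C := by nlinarith
  calc |B| = Real.sqrt (B ^ 2) := (Real.sqrt_sq_eq_abs B).symm
    _ ≤ Real.sqrt (A * C) := Real.sqrt_le_sqrt hBsq
    _ = Real.sqrt A * Real.sqrt C := Real.sqrt_mul hA0 C

lemma aux_triple {α β γ : Type*} [MeasurableSpace α] [MeasurableSpace β] [MeasurableSpace γ]
    {μ : Measure α} {ν : Measure β} {ρ : Measure γ} [SFinite μ] [SFinite ν] [SFinite ρ]
    (F : α × β × γ → ℝ) (hF : Integrable F (μ.prod (ν.prod ρ))) :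
    ∫ p, F p ∂(μ.prod (ν.prod ρ)) = ∫ x, (∫ y, (∫ z, F (x, y, z) ∂ρ) ∂ν) ∂μ := by
  rw [integral_prod _ hF]
  refine integral_congr_ae ?_
  filter_upwards [hF.prod_right_ae] with x hx
  exact integral_prod _ hx

/-- Every graphon `g` with edge density `e` satisfies
`e³ - t(g) ≤ (∫∫ (g - e)²)^{3/2}`. -/
theorem triangle_density_lower_bound (g : ℝ → ℝ → ℝ) (hg : IsGraphon g) :
    (edgeDensity g) ^ 3 - triangleDensity g ≤
      (∫ x in Icc (0:ℝ) 1, ∫ y in Icc (0:ℝ) 1, (g x y - edgeDensity g) ^ 2)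
        ^ ((3:ℝ)/2) := by
  obtain ⟨hgm, hgs, hgb⟩ := hg
  set e := edgeDensity g with he
  set μ : Measure ℝ := volume.restrict (Icc (0:ℝ) 1) with hμ
  haveI : IsProbabilityMeasure μ := by
    constructor
    rw [hμ, Measure.restrict_apply_univ, Real.volume_Icc]
    norm_num
  have haeI : ∀ᵐ x ∂μ, x ∈ Icc (0:ℝ) 1 := by
    rw [hμ]; exact ae_restrict_mem measurableSet_Icc
  have hgm2 : Measurable fun p : ℝ × ℝ => g p.1 p.2 := hgm
  have h2ae : ∀ᵐ p ∂(μ.prod μ), p.1 ∈ Icc (0:ℝ) 1 ∧ p.2 ∈ Icc (0:ℝ) 1 := by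
    rw [hμ, Measure.prod_restrict]
    filter_upwards [ae_restrict_mem (measurableSet_Icc.prod measurableSet_Icc)] with p hp
    exact ⟨hp.1, hp.2⟩
  have h3ae : ∀ᵐ p ∂(μ.prod (μ.prod μ)),
      p.1 ∈ Icc (0:ℝ) 1 ∧ p.2.1 ∈ Icc (0:ℝ) 1 ∧ p.2.2 ∈ Icc (0:ℝ) 1 := by
    rw [hμ, Measure.prod_restrict, Measure.prod_restrict]
    filter_upwards [ae_restrict_mem
      (measurableSet_Icc.prod (measurableSet_Icc.prod measurableSet_Icc))] with p hp
    exact ⟨hp.1, hp.2.1, hp.2.2⟩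
  have key1 : ∀ F : ℝ → ℝ, Measurable F → (∀ x ∈ Icc (0:ℝ) 1, |F x| ≤ 1) → Integrable F μ := by
    intro F hFm hFb
    exact aux_integrable_of_bdd hFm.aestronglyMeasurable
      (by filter_upwards [haeI] with x hx using hFb x hx)
  have key2 : ∀ F : ℝ × ℝ → ℝ, Measurable F →
      (∀ p : ℝ × ℝ, p.1 ∈ Icc (0:ℝ) 1 → p.2 ∈ Icc (0:ℝ) 1 → |F p| ≤ 1) →
      Integrable F (μ.prod μ) := by
    intro F hFm hFb
    exact aux_integrable_of_bdd hFm.aestronglyMeasurable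
      (by filter_upwards [h2ae] with p hp using hFb p hp.1 hp.2)
  have key3 : ∀ F : ℝ × ℝ × ℝ → ℝ, Measurable F →
      (∀ p : ℝ × ℝ × ℝ, p.1 ∈ Icc (0:ℝ) 1 → p.2.1 ∈ Icc (0:ℝ) 1 → p.2.2 ∈ Icc (0:ℝ) 1 →
        |F p| ≤ 1) → Integrable F (μ.prod (μ.prod μ)) := by
    intro F hFm hFb
    exact aux_integrable_of_bdd hFm.aestronglyMeasurable
      (by filter_upwards [h3ae] with p hp using hFb p hp.1 hp.2.1 hp.2.2)
  -- edge density bounds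
  have heint : e = ∫ x, (∫ y, g x y ∂μ) ∂μ := by
    rw [he]; simp only [edgeDensity, ← hμ]
  have hGb : ∀ x ∈ Icc (0:ℝ) 1, |∫ y, g x y ∂μ| ≤ 1 := by
    intro x hx
    have hb' : ∀ᵐ y ∂μ, ‖g x y‖ ≤ 1 := by
      filter_upwards [haeI] with y hy
      rw [Real.norm_eq_abs, abs_le]
      exact ⟨by linarith [(hgb x hx y hy).1], (hgb x hx y hy).2⟩
    have h := norm_integral_le_of_norm_le_const (μ := μ) hb'
    simpa [measure_univ, Real.norm_eq_abs] using h
  have hGnn : ∀ x ∈ Icc (0:ℝ) 1, 0 ≤ ∫ y, g x y ∂μ := fun x hx =>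
    integral_nonneg_of_ae (by filter_upwards [haeI] with y hy using (hgb x hx y hy).1)
  have h0e : 0 ≤ e := by
    rw [heint]
    exact integral_nonneg_of_ae (by filter_upwards [haeI] with x hx using hGnn x hx)
  have h1e : e ≤ 1 := by
    rw [heint]
    have hb' : ∀ᵐ x ∂μ, ‖∫ y, g x y ∂μ‖ ≤ 1 := by
      filter_upwards [haeI] with x hx
      rw [Real.norm_eq_abs]; exact hGb x hx
    have h := norm_integral_le_of_norm_le_const (μ := μ) hb'
    calc (∫ x, (∫ y, g x y ∂μ) ∂μ) ≤ |∫ x, (∫ y, g x y ∂μ) ∂μ| := le_abs_self _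
      _ ≤ 1 := by simpa [measure_univ, Real.norm_eq_abs] using h
  -- deviation function facts
  have hfm2 : Measurable fun p : ℝ × ℝ => g p.1 p.2 - e := hgm2.sub measurable_const
  have hfb : ∀ x ∈ Icc (0:ℝ) 1, ∀ y ∈ Icc (0:ℝ) 1, |g x y - e| ≤ 1 := by
    intro x hx y hy
    have h := hgb x hx y hy
    rw [abs_le]; exact ⟨by linarith [h.1], by linarith [h.2]⟩
  -- row and column averages of the deviation
  set F : ℝ → ℝ := fun y => ∫ z, (g y z - e) ∂μ with hFdef
  set Fc : ℝ → ℝ := fun x => ∫ z, (g z x - e) ∂μ with hFcdef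
  have hFm : Measurable F := by
    rw [hFdef]
    exact (hfm2.stronglyMeasurable.integral_prod_right').measurable
  have hFcm : Measurable Fc := by
    rw [hFcdef]
    exact ((hfm2.comp measurable_swap).stronglyMeasurable.integral_prod_right').measurable
  have hFb : ∀ y ∈ Icc (0:ℝ) 1, |F y| ≤ 1 := by
    intro y hy
    have hb' : ∀ᵐ z ∂μ, ‖g y z - e‖ ≤ 1 := by
      filter_upwards [haeI] with z hz
      rw [Real.norm_eq_abs]; exact hfb y hy z hz
    have h := norm_integral_le_of_norm_le_const (μ := μ) hb'
    simpa [hFdef, measure_univ, Real.norm_eq_abs] using h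
  have hFcb : ∀ x ∈ Icc (0:ℝ) 1, |Fc x| ≤ 1 := by
    intro x hx
    have hb' : ∀ᵐ z ∂μ, ‖g z x - e‖ ≤ 1 := by
      filter_upwards [haeI] with z hz
      rw [Real.norm_eq_abs]; exact hfb z hz x hx
    have h := norm_integral_le_of_norm_le_const (μ := μ) hb'
    simpa [hFcdef, measure_univ, Real.norm_eq_abs] using h
  have hFint : Integrable F μ := key1 F hFm hFb
  have hFcF : ∀ᵐ x ∂μ, Fc x = F x := by
    filter_upwards [haeI] with x hx
    simp only [hFdef, hFcdef]
    exact integral_congr_ae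
      (by filter_upwards [haeI] with z hz using by rw [hgs z hz x hx])
  have hGm : Measurable fun x => ∫ y, g x y ∂μ :=
    (hgm2.stronglyMeasurable.integral_prod_right').measurable
  have hGint : Integrable (fun x => ∫ y, g x y ∂μ) μ := key1 _ hGm hGb
  have hF0 : ∫ y, F y ∂μ = 0 := by
    have h1 : ∀ᵐ x ∂μ, F x = (∫ y, g x y ∂μ) - e := by
      filter_upwards [haeI] with x hx
      simp only [hFdef]
      have hint : Integrable (fun z => g x z) μ :=
        key1 _ (hgm2.comp measurable_prodMk_left) (fun z hz => by
          rw [abs_le]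
          exact ⟨by linarith [(hgb x hx z hz).1], (hgb x hx z hz).2⟩)
      rw [integral_sub hint (integrable_const e), integral_const, probReal_univ]
      simp
    rw [integral_congr_ae h1, integral_sub hGint (integrable_const e), integral_const,
      probReal_univ, ← heint]
    simp
  set Q := ∫ y, F y ^ 2 ∂μ with hQdef
  have hQ0 : 0 ≤ Q := integral_nonneg fun y => sq_nonneg _
  -- integrability on the triple product
  have m12 : Measurable fun p : ℝ × ℝ × ℝ => g p.1 p.2.1 :=
    hgm2.comp (measurable_fst.prodMk (measurable_fst.comp measurable_snd))
  have m23 : Measurable fun p : ℝ × ℝ × ℝ => g p.2.1 p.2.2 :=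
    hgm2.comp ((measurable_fst.comp measurable_snd).prodMk (measurable_snd.comp measurable_snd))
  have m31 : Measurable fun p : ℝ × ℝ × ℝ => g p.2.2 p.1 :=
    hgm2.comp ((measurable_snd.comp measurable_snd).prodMk measurable_fst)
  have hgabs : ∀ x ∈ Icc (0:ℝ) 1, ∀ y ∈ Icc (0:ℝ) 1, |g x y| ≤ 1 := by
    intro x hx y hy
    rw [abs_le]
    exact ⟨by linarith [(hgb x hx y hy).1], (hgb x hx y hy).2⟩
  have i1 : Integrable (fun p : ℝ × ℝ × ℝ => g p.1 p.2.1 - e) (μ.prod (μ.prod μ)) :=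
    key3 _ (m12.sub measurable_const) fun p h1 h2 _ => hfb _ h1 _ h2
  have i2 : Integrable (fun p : ℝ × ℝ × ℝ => g p.2.1 p.2.2 - e) (μ.prod (μ.prod μ)) :=
    key3 _ (m23.sub measurable_const) fun p _ h2 h3 => hfb _ h2 _ h3
  have i3 : Integrable (fun p : ℝ × ℝ × ℝ => g p.2.2 p.1 - e) (μ.prod (μ.prod μ)) :=
    key3 _ (m31.sub measurable_const) fun p h1 _ h3 => hfb _ h3 _ h1
  have i12 : Integrable (fun p : ℝ × ℝ × ℝ => (g p.1 p.2.1 - e) * (g p.2.1 p.2.2 - e))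
      (μ.prod (μ.prod μ)) :=
    key3 _ ((m12.sub measurable_const).mul (m23.sub measurable_const)) fun p h1 h2 h3 => by
      rw [abs_mul]
      exact le_trans (mul_le_mul (hfb _ h1 _ h2) (hfb _ h2 _ h3) (abs_nonneg _) zero_le_one)
        (by norm_num)
  have i13 : Integrable (fun p : ℝ × ℝ × ℝ => (g p.1 p.2.1 - e) * (g p.2.2 p.1 - e))
      (μ.prod (μ.prod μ)) :=
    key3 _ ((m12.sub measurable_const).mul (m31.sub measurable_const)) fun p h1 h2 h3 => by
      rw [abs_mul]
      exact le_trans (mul_le_mul (hfb _ h1 _ h2) (hfb _ h3 _ h1) (abs_nonneg _) zero_le_one)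
        (by norm_num)
  have i23 : Integrable (fun p : ℝ × ℝ × ℝ => (g p.2.1 p.2.2 - e) * (g p.2.2 p.1 - e))
      (μ.prod (μ.prod μ)) :=
    key3 _ ((m23.sub measurable_const).mul (m31.sub measurable_const)) fun p h1 h2 h3 => by
      rw [abs_mul]
      exact le_trans (mul_le_mul (hfb _ h2 _ h3) (hfb _ h3 _ h1) (abs_nonneg _) zero_le_one)
        (by norm_num)
  have i123 : Integrable
      (fun p : ℝ × ℝ × ℝ => (g p.1 p.2.1 - e) * (g p.2.1 p.2.2 - e) * (g p.2.2 p.1 - e))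
      (μ.prod (μ.prod μ)) :=
    key3 _ (((m12.sub measurable_const).mul (m23.sub measurable_const)).mul
      (m31.sub measurable_const)) fun p h1 h2 h3 => by
      rw [abs_mul, abs_mul]
      have b1 := hfb _ h1 _ h2; have b2 := hfb _ h2 _ h3; have b3 := hfb _ h3 _ h1
      exact le_trans (mul_le_mul (le_trans (mul_le_mul b1 b2 (abs_nonneg _) zero_le_one)
        (by norm_num)) b3 (abs_nonneg _) zero_le_one) (by norm_num)
  have ig : Integrable
      (fun p : ℝ × ℝ × ℝ => g p.1 p.2.1 * g p.2.1 p.2.2 * g p.2.2 p.1)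
      (μ.prod (μ.prod μ)) :=
    key3 _ ((m12.mul m23).mul m31) fun p h1 h2 h3 => by
      rw [abs_mul, abs_mul]
      have b1 := hgabs _ h1 _ h2; have b2 := hgabs _ h2 _ h3; have b3 := hgabs _ h3 _ h1
      exact le_trans (mul_le_mul (le_trans (mul_le_mul b1 b2 (abs_nonneg _) zero_le_one)
        (by norm_num)) b3 (abs_nonneg _) zero_le_one) (by norm_num)
  -- triangle density as product integral
  have ht : triangleDensity g
      = ∫ p, g p.1 p.2.1 * g p.2.1 p.2.2 * g p.2.2 p.1 ∂(μ.prod (μ.prod μ)) := by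
    rw [aux_triple _ ig]
    simp only [triangleDensity, ← hμ]
  -- single terms vanish
  have hF0' : ∫ y, (∫ z, (g y z - e) ∂μ) ∂μ = 0 := by simpa only [hFdef] using hF0
  have hFcF' : ∀ᵐ x ∂μ, (∫ z, (g z x - e) ∂μ) = ∫ z, (g x z - e) ∂μ := by
    simpa only [hFdef, hFcdef] using hFcF
  have hs1 : ∫ p, (g p.1 p.2.1 - e) ∂(μ.prod (μ.prod μ)) = 0 := by
    rw [aux_triple _ i1]
    have h1 : ∀ x : ℝ, (∫ y, (∫ z, (g x y - e) ∂μ) ∂μ) = ∫ z, (g x z - e) ∂μ := by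
      intro x
      have h2 : ∀ y : ℝ, (∫ z, (g x y - e) ∂μ) = g x y - e := by
        intro y; simp [measure_univ]
      simp only [h2]
    simp only [h1]
    exact hF0'
  have hs2 : ∫ p, (g p.2.1 p.2.2 - e) ∂(μ.prod (μ.prod μ)) = 0 := by
    rw [aux_triple _ i2]
    simp only [integral_const, measure_univ, probReal_univ, one_smul]
    exact hF0'
  have hs3 : ∫ p, (g p.2.2 p.1 - e) ∂(μ.prod (μ.prod μ)) = 0 := by
    rw [aux_triple _ i3]
    have h1 : ∀ x : ℝ, (∫ y, (∫ z, (g z x - e) ∂μ) ∂μ) = ∫ z, (g z x - e) ∂μ := by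
      intro x; simp [measure_univ]
    simp only [h1]
    rw [integral_congr_ae hFcF']
    exact hF0'
  -- cross terms equal Q
  have hQ' : Q = ∫ y, (∫ z, (g y z - e) ∂μ) ^ 2 ∂μ := by simpa only [hFdef] using hQdef
  have hc12 : ∫ p, (g p.1 p.2.1 - e) * (g p.2.1 p.2.2 - e) ∂(μ.prod (μ.prod μ)) = Q := by
    rw [aux_triple _ i12]
    have h1 : ∀ x y : ℝ, (∫ z, (g x y - e) * (g y z - e) ∂μ)
        = (g x y - e) * ∫ z, (g y z - e) ∂μ := by
      intro x y; rw [integral_const_mul]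
    simp only [h1]
    have hsw : Integrable
        (Function.uncurry fun x y => (g x y - e) * ∫ z, (g y z - e) ∂μ) (μ.prod μ) := by
      refine key2 _ (hfm2.mul (hFm.comp measurable_snd)) ?_
      intro p h1 h2
      simp only [Function.uncurry_def]
      rw [abs_mul]
      exact le_trans (mul_le_mul (hfb _ h1 _ h2) (hFb _ h2) (abs_nonneg _) zero_le_one)
        (by norm_num)
    rw [integral_integral_swap hsw]
    have h2 : ∀ y : ℝ, (∫ x, (g x y - e) * ∫ z, (g y z - e) ∂μ ∂μ)
        = (∫ z, (g z y - e) ∂μ) * ∫ z, (g y z - e) ∂μ := by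
      intro y; rw [integral_mul_const]
    simp only [h2]
    rw [integral_congr_ae (g := fun y => (∫ z, (g y z - e) ∂μ) ^ 2) ?_, ← hQ']
    filter_upwards [hFcF'] with y hy
    rw [hy]; ring
  have hc13 : ∫ p, (g p.1 p.2.1 - e) * (g p.2.2 p.1 - e) ∂(μ.prod (μ.prod μ)) = Q := by
    rw [aux_triple _ i13]
    have h1 : ∀ x y : ℝ, (∫ z, (g x y - e) * (g z x - e) ∂μ)
        = (g x y - e) * ∫ z, (g z x - e) ∂μ := by
      intro x y; rw [integral_const_mul]
    simp only [h1]
    have h2 : ∀ x : ℝ, (∫ y, (g x y - e) * ∫ z, (g z x - e) ∂μ ∂μ)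
        = (∫ y, (g x y - e) ∂μ) * ∫ z, (g z x - e) ∂μ := by
      intro x; rw [integral_mul_const]
    simp only [h2]
    rw [integral_congr_ae (g := fun x => (∫ z, (g x z - e) ∂μ) ^ 2) ?_, ← hQ']
    filter_upwards [hFcF'] with x hx
    rw [hx]; ring
  have hc23 : ∫ p, (g p.2.1 p.2.2 - e) * (g p.2.2 p.1 - e) ∂(μ.prod (μ.prod μ)) = Q := by
    rw [aux_triple _ i23]
    have h1 : ∀ᵐ x ∂μ, (∫ y, ∫ z, (g y z - e) * (g z x - e) ∂μ ∂μ)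
        = ∫ z, (∫ y, (g y z - e) ∂μ) * (g z x - e) ∂μ := by
      filter_upwards [haeI] with x hx
      have hsw : Integrable
          (Function.uncurry fun y z => (g y z - e) * (g z x - e)) (μ.prod μ) := by
        refine key2 _ (hfm2.mul ((hgm2.comp
          (measurable_snd.prodMk measurable_const)).sub measurable_const)) ?_
        intro p hp1 hp2
        simp only [Function.uncurry_def]
        rw [abs_mul]
        exact le_trans (mul_le_mul (hfb _ hp1 _ hp2) (hfb _ hp2 x hx) (abs_nonneg _)
          zero_le_one) (by norm_num)
      rw [integral_integral_swap hsw]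
      have h2 : ∀ z : ℝ, (∫ y, (g y z - e) * (g z x - e) ∂μ)
          = (∫ y, (g y z - e) ∂μ) * (g z x - e) := by
        intro z; rw [integral_mul_const]
      simp only [h2]
    rw [integral_congr_ae h1]
    have hsw2 : Integrable
        (Function.uncurry fun x z => (∫ y, (g y z - e) ∂μ) * (g z x - e)) (μ.prod μ) := by
      refine key2 _ (((hFcm.comp measurable_snd)).mul ((hgm2.comp
        (measurable_snd.prodMk measurable_fst)).sub measurable_const)) ?_
      intro p hp1 hp2
      simp only [Function.uncurry_def]
      rw [abs_mul]
      have hb1 : |∫ y, (g y p.2 - e) ∂μ| ≤ 1 := by simpa only [hFcdef] using hFcb _ hp2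
      exact le_trans (mul_le_mul hb1 (hfb _ hp2 _ hp1) (abs_nonneg _) zero_le_one)
        (by norm_num)
    rw [integral_integral_swap hsw2]
    have h3 : ∀ z : ℝ, (∫ x, (∫ y, (g y z - e) ∂μ) * (g z x - e) ∂μ)
        = (∫ y, (g y z - e) ∂μ) * ∫ x, (g z x - e) ∂μ := by
      intro z; rw [integral_const_mul]
    simp only [h3]
    rw [integral_congr_ae (g := fun z => (∫ y, (g z y - e) ∂μ) ^ 2) ?_, ← hQ']
    filter_upwards [hFcF'] with z hz
    rw [hz]; ring
  -- the kernel h(x,y) = ∫ z f(y,z) f(z,x)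
  have hHm : Measurable fun p : ℝ × ℝ => ∫ z, (g p.2 z - e) * (g z p.1 - e) ∂μ := by
    have hm : Measurable fun q : (ℝ × ℝ) × ℝ => (g q.1.2 q.2 - e) * (g q.2 q.1.1 - e) :=
      ((hgm2.comp ((measurable_snd.comp measurable_fst).prodMk measurable_snd)).sub
        measurable_const).mul
      ((hgm2.comp (measurable_snd.prodMk (measurable_fst.comp measurable_fst))).sub
        measurable_const)
    exact (hm.stronglyMeasurable.integral_prod_right').measurable
  have hHb : ∀ p : ℝ × ℝ, p.1 ∈ Icc (0:ℝ) 1 → p.2 ∈ Icc (0:ℝ) 1 →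
      |∫ z, (g p.2 z - e) * (g z p.1 - e) ∂μ| ≤ 1 := by
    intro p h1 h2
    have hb' : ∀ᵐ z ∂μ, ‖(g p.2 z - e) * (g z p.1 - e)‖ ≤ 1 := by
      filter_upwards [haeI] with z hz
      rw [Real.norm_eq_abs, abs_mul]
      exact le_trans (mul_le_mul (hfb _ h2 _ hz) (hfb _ hz _ h1) (abs_nonneg _) zero_le_one)
        (by norm_num)
    have h := norm_integral_le_of_norm_le_const (μ := μ) hb'
    simpa [measure_univ, Real.norm_eq_abs] using h
  have habssq : ∀ t : ℝ, |t| ≤ 1 → |t ^ 2| ≤ 1 := by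
    intro t ht; rw [abs_pow]; nlinarith [abs_nonneg t]
  have hu2 : Integrable (fun p : ℝ × ℝ => (g p.1 p.2 - e) ^ 2) (μ.prod μ) :=
    key2 _ (hfm2.pow_const 2) fun p h1 h2 => habssq _ (hfb _ h1 _ h2)
  have hv2 : Integrable
      (fun p : ℝ × ℝ => (∫ z, (g p.2 z - e) * (g z p.1 - e) ∂μ) ^ 2) (μ.prod μ) :=
    key2 _ (hHm.pow_const 2) fun p h1 h2 => habssq _ (hHb p h1 h2)
  have huv : Integrable
      (fun p : ℝ × ℝ => (g p.1 p.2 - e) * ∫ z, (g p.2 z - e) * (g z p.1 - e) ∂μ)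
      (μ.prod μ) :=
    key2 _ (hfm2.mul hHm) fun p h1 h2 => by
      rw [abs_mul]
      exact le_trans (mul_le_mul (hfb _ h1 _ h2) (hHb p h1 h2) (abs_nonneg _) zero_le_one)
        (by norm_num)
  -- T3 as a double integral
  have hT3eq : ∫ p, (g p.1 p.2.1 - e) * (g p.2.1 p.2.2 - e) * (g p.2.2 p.1 - e)
        ∂(μ.prod (μ.prod μ))
      = ∫ p : ℝ × ℝ, (g p.1 p.2 - e) * ∫ z, (g p.2 z - e) * (g z p.1 - e) ∂μ
        ∂(μ.prod μ) := by
    rw [aux_triple _ i123]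
    have h1 : ∀ x y : ℝ, (∫ z, (g x y - e) * (g y z - e) * (g z x - e) ∂μ)
        = (g x y - e) * ∫ z, (g y z - e) * (g z x - e) ∂μ := by
      intro x y
      rw [show (fun z => (g x y - e) * (g y z - e) * (g z x - e))
        = fun z => (g x y - e) * ((g y z - e) * (g z x - e)) from by funext z; ring]
      rw [integral_const_mul]
    simp only [h1]
    exact (integral_prod _ huv).symm
  -- S
  set S := ∫ x, (∫ y, (g x y - e) ^ 2 ∂μ) ∂μ with hSdef
  have hSprod : S = ∫ p : ℝ × ℝ, (g p.1 p.2 - e) ^ 2 ∂(μ.prod μ) := by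
    rw [hSdef]; exact (integral_prod _ hu2).symm
  have hS0 : 0 ≤ S := by
    rw [hSprod]; exact integral_nonneg fun p => sq_nonneg _
  -- row/column square integrals
  have hRAm : Measurable fun y : ℝ => ∫ z, (g y z - e) ^ 2 ∂μ :=
    ((hfm2.pow_const 2).stronglyMeasurable.integral_prod_right').measurable
  have hRBm : Measurable fun x : ℝ => ∫ z, (g z x - e) ^ 2 ∂μ :=
    (((hfm2.comp measurable_swap).pow_const 2).stronglyMeasurable.integral_prod_right').measurable
  have hRAnn : ∀ y : ℝ, 0 ≤ ∫ z, (g y z - e) ^ 2 ∂μ :=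
    fun y => integral_nonneg fun z => sq_nonneg _
  have hRBnn : ∀ x : ℝ, 0 ≤ ∫ z, (g z x - e) ^ 2 ∂μ :=
    fun x => integral_nonneg fun z => sq_nonneg _
  have hRAb : ∀ y ∈ Icc (0:ℝ) 1, (∫ z, (g y z - e) ^ 2 ∂μ) ≤ 1 := by
    intro y hy
    have hb' : ∀ᵐ z ∂μ, ‖(g y z - e) ^ 2‖ ≤ 1 := by
      filter_upwards [haeI] with z hz
      rw [Real.norm_eq_abs]; exact habssq _ (hfb _ hy _ hz)
    have h := norm_integral_le_of_norm_le_const (μ := μ) hb'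
    calc (∫ z, (g y z - e) ^ 2 ∂μ) ≤ |∫ z, (g y z - e) ^ 2 ∂μ| := le_abs_self _
      _ ≤ 1 := by simpa [measure_univ, Real.norm_eq_abs] using h
  have hRBb : ∀ x ∈ Icc (0:ℝ) 1, (∫ z, (g z x - e) ^ 2 ∂μ) ≤ 1 := by
    intro x hx
    have hb' : ∀ᵐ z ∂μ, ‖(g z x - e) ^ 2‖ ≤ 1 := by
      filter_upwards [haeI] with z hz
      rw [Real.norm_eq_abs]; exact habssq _ (hfb _ hz _ hx)
    have h := norm_integral_le_of_norm_le_const (μ := μ) hb'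
    calc (∫ z, (g z x - e) ^ 2 ∂μ) ≤ |∫ z, (g z x - e) ^ 2 ∂μ| := le_abs_self _
      _ ≤ 1 := by simpa [measure_univ, Real.norm_eq_abs] using h
  -- pointwise Cauchy-Schwarz for the kernel
  have hpt : ∀ᵐ p ∂(μ.prod μ), (∫ z, (g p.2 z - e) * (g z p.1 - e) ∂μ) ^ 2
      ≤ (∫ z, (g p.2 z - e) ^ 2 ∂μ) * (∫ z, (g z p.1 - e) ^ 2 ∂μ) := by
    filter_upwards [h2ae] with p hp
    have hmu' : Measurable fun z => g p.2 z - e :=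
      (hgm2.comp measurable_prodMk_left).sub measurable_const
    have hmv' : Measurable fun z => g z p.1 - e :=
      (hgm2.comp (measurable_id.prodMk measurable_const)).sub measurable_const
    have hu' : Integrable (fun z => (g p.2 z - e) ^ 2) μ :=
      key1 _ (hmu'.pow_const 2) fun z hz => habssq _ (hfb _ hp.2 _ hz)
    have hv' : Integrable (fun z => (g z p.1 - e) ^ 2) μ :=
      key1 _ (hmv'.pow_const 2) fun z hz => habssq _ (hfb _ hz _ hp.1)
    have huv' : Integrable (fun z => (g p.2 z - e) * (g z p.1 - e)) μ :=
      key1 _ (hmu'.mul hmv') fun z hz => by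
        rw [abs_mul]
        exact le_trans (mul_le_mul (hfb _ hp.2 _ hz) (hfb _ hz _ hp.1) (abs_nonneg _)
          zero_le_one) (by norm_num)
    have h := aux_cs hu' hv' huv'
    calc (∫ z, (g p.2 z - e) * (g z p.1 - e) ∂μ) ^ 2
        = |∫ z, (g p.2 z - e) * (g z p.1 - e) ∂μ| ^ 2 := (sq_abs _).symm
      _ ≤ (Real.sqrt (∫ z, (g p.2 z - e) ^ 2 ∂μ) * Real.sqrt (∫ z, (g z p.1 - e) ^ 2 ∂μ)) ^ 2 :=
          pow_le_pow_left₀ (abs_nonneg _) h 2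
      _ = (∫ z, (g p.2 z - e) ^ 2 ∂μ) * (∫ z, (g z p.1 - e) ^ 2 ∂μ) := by
          rw [mul_pow, Real.sq_sqrt (hRAnn _), Real.sq_sqrt (hRBnn _)]
  -- ∫ h² ≤ S²
  have hH2le : (∫ p : ℝ × ℝ, (∫ z, (g p.2 z - e) * (g z p.1 - e) ∂μ) ^ 2 ∂(μ.prod μ))
      ≤ S * S := by
    have hABint : Integrable
        (fun p : ℝ × ℝ => (∫ z, (g p.2 z - e) ^ 2 ∂μ) * (∫ z, (g z p.1 - e) ^ 2 ∂μ))
        (μ.prod μ) :=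
      key2 _ ((hRAm.comp measurable_snd).mul (hRBm.comp measurable_fst)) fun p h1 h2 => by
        rw [abs_mul, abs_of_nonneg (hRAnn _), abs_of_nonneg (hRBnn _)]
        exact le_trans (mul_le_mul (hRAb _ h2) (hRBb _ h1) (hRBnn _) zero_le_one)
          (by norm_num)
    refine le_trans (integral_mono_ae hv2 hABint hpt) ?_
    rw [integral_prod _ hABint]
    have h1 : ∀ x : ℝ, (∫ y, (∫ z, (g y z - e) ^ 2 ∂μ) * (∫ z, (g z x - e) ^ 2 ∂μ) ∂μ)
        = (∫ y, (∫ z, (g y z - e) ^ 2 ∂μ) ∂μ) * (∫ z, (g z x - e) ^ 2 ∂μ) := by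
      intro x; rw [integral_mul_const]
    simp only [h1]
    rw [integral_const_mul]
    have hA : (∫ y, (∫ z, (g y z - e) ^ 2 ∂μ) ∂μ) = S := hSdef.symm
    have hB : (∫ x, (∫ z, (g z x - e) ^ 2 ∂μ) ∂μ) = S := by
      rw [integral_congr_ae (g := fun x => ∫ z, (g x z - e) ^ 2 ∂μ) ?_]
      · filter_upwards [haeI] with x hx
        exact integral_congr_ae
          (by filter_upwards [haeI] with z hz using by rw [hgs z hz x hx])
    rw [hA, hB]
  -- bound on T3
  have hT3bound : |∫ p, (g p.1 p.2.1 - e) * (g p.2.1 p.2.2 - e) * (g p.2.2 p.1 - e)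
      ∂(μ.prod (μ.prod μ))| ≤ Real.sqrt S * S := by
    rw [hT3eq]
    refine le_trans (aux_cs hu2 hv2 huv) ?_
    rw [← hSprod]
    have h2 : Real.sqrt (∫ p : ℝ × ℝ, (∫ z, (g p.2 z - e) * (g z p.1 - e) ∂μ) ^ 2
        ∂(μ.prod μ)) ≤ S := by
      refine le_trans (Real.sqrt_le_sqrt hH2le) ?_
      rw [Real.sqrt_mul_self hS0]
    exact mul_le_mul_of_nonneg_left h2 (Real.sqrt_nonneg S)
  -- expansion of the triangle density
  have hsplit : triangleDensity g = e ^ 3 + 3 * e * Q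
      + ∫ p, (g p.1 p.2.1 - e) * (g p.2.1 p.2.2 - e) * (g p.2.2 p.1 - e)
        ∂(μ.prod (μ.prod μ)) := by
    rw [ht]
    have hptw : (fun p : ℝ × ℝ × ℝ => g p.1 p.2.1 * g p.2.1 p.2.2 * g p.2.2 p.1)
        = fun p : ℝ × ℝ × ℝ => e ^ 3 + (e ^ 2 * (g p.1 p.2.1 - e)
          + (e ^ 2 * (g p.2.1 p.2.2 - e) + (e ^ 2 * (g p.2.2 p.1 - e)
          + (e * ((g p.1 p.2.1 - e) * (g p.2.1 p.2.2 - e))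
          + (e * ((g p.1 p.2.1 - e) * (g p.2.2 p.1 - e))
          + (e * ((g p.2.1 p.2.2 - e) * (g p.2.2 p.1 - e))
          + (g p.1 p.2.1 - e) * (g p.2.1 p.2.2 - e) * (g p.2.2 p.1 - e))))))) := by
      funext p; ring
    rw [hptw]
    have j7 : Integrable
        (fun p : ℝ × ℝ × ℝ => (g p.1 p.2.1 - e) * (g p.2.1 p.2.2 - e) * (g p.2.2 p.1 - e))
        (μ.prod (μ.prod μ)) := i123
    have j6 : Integrable (fun p : ℝ × ℝ × ℝ =>
        e * ((g p.2.1 p.2.2 - e) * (g p.2.2 p.1 - e))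
          + (g p.1 p.2.1 - e) * (g p.2.1 p.2.2 - e) * (g p.2.2 p.1 - e))
        (μ.prod (μ.prod μ)) := (i23.const_mul e).add j7
    have j5 : Integrable (fun p : ℝ × ℝ × ℝ =>
        e * ((g p.1 p.2.1 - e) * (g p.2.2 p.1 - e))
          + (e * ((g p.2.1 p.2.2 - e) * (g p.2.2 p.1 - e))
          + (g p.1 p.2.1 - e) * (g p.2.1 p.2.2 - e) * (g p.2.2 p.1 - e)))
        (μ.prod (μ.prod μ)) := (i13.const_mul e).add j6
    have j4 : Integrable (fun p : ℝ × ℝ × ℝ =>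
        e * ((g p.1 p.2.1 - e) * (g p.2.1 p.2.2 - e))
          + (e * ((g p.1 p.2.1 - e) * (g p.2.2 p.1 - e))
          + (e * ((g p.2.1 p.2.2 - e) * (g p.2.2 p.1 - e))
          + (g p.1 p.2.1 - e) * (g p.2.1 p.2.2 - e) * (g p.2.2 p.1 - e))))
        (μ.prod (μ.prod μ)) := (i12.const_mul e).add j5
    have j3 : Integrable (fun p : ℝ × ℝ × ℝ =>
        e ^ 2 * (g p.2.2 p.1 - e)
          + (e * ((g p.1 p.2.1 - e) * (g p.2.1 p.2.2 - e))
          + (e * ((g p.1 p.2.1 - e) * (g p.2.2 p.1 - e))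
          + (e * ((g p.2.1 p.2.2 - e) * (g p.2.2 p.1 - e))
          + (g p.1 p.2.1 - e) * (g p.2.1 p.2.2 - e) * (g p.2.2 p.1 - e)))))
        (μ.prod (μ.prod μ)) := (i3.const_mul (e ^ 2)).add j4
    have j2 : Integrable (fun p : ℝ × ℝ × ℝ =>
        e ^ 2 * (g p.2.1 p.2.2 - e)
          + (e ^ 2 * (g p.2.2 p.1 - e)
          + (e * ((g p.1 p.2.1 - e) * (g p.2.1 p.2.2 - e))
          + (e * ((g p.1 p.2.1 - e) * (g p.2.2 p.1 - e))
          + (e * ((g p.2.1 p.2.2 - e) * (g p.2.2 p.1 - e))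
          + (g p.1 p.2.1 - e) * (g p.2.1 p.2.2 - e) * (g p.2.2 p.1 - e))))))
        (μ.prod (μ.prod μ)) := (i2.const_mul (e ^ 2)).add j3
    have j1 : Integrable (fun p : ℝ × ℝ × ℝ =>
        e ^ 2 * (g p.1 p.2.1 - e)
          + (e ^ 2 * (g p.2.1 p.2.2 - e)
          + (e ^ 2 * (g p.2.2 p.1 - e)
          + (e * ((g p.1 p.2.1 - e) * (g p.2.1 p.2.2 - e))
          + (e * ((g p.1 p.2.1 - e) * (g p.2.2 p.1 - e))
          + (e * ((g p.2.1 p.2.2 - e) * (g p.2.2 p.1 - e))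
          + (g p.1 p.2.1 - e) * (g p.2.1 p.2.2 - e) * (g p.2.2 p.1 - e)))))))
        (μ.prod (μ.prod μ)) := (i1.const_mul (e ^ 2)).add j2
    rw [integral_add (integrable_const _) j1, integral_add (i1.const_mul (e ^ 2)) j2,
      integral_add (i2.const_mul (e ^ 2)) j3, integral_add (i3.const_mul (e ^ 2)) j4,
      integral_add (i12.const_mul e) j5, integral_add (i13.const_mul e) j6,
      integral_add (i23.const_mul e) j7,
      integral_const_mul, integral_const_mul, integral_const_mul, integral_const_mul,
      integral_const_mul, integral_const_mul,
      hs1, hs2, hs3, hc12, hc13, hc23, integral_const]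
    simp [measure_univ]
    ring
  -- conclusion
  have hfinal : e ^ 3 - triangleDensity g ≤ Real.sqrt S * S := by
    rw [hsplit]
    have h1 : -(∫ p, (g p.1 p.2.1 - e) * (g p.2.1 p.2.2 - e) * (g p.2.2 p.1 - e)
        ∂(μ.prod (μ.prod μ)))
        ≤ |∫ p, (g p.1 p.2.1 - e) * (g p.2.1 p.2.2 - e) * (g p.2.2 p.1 - e)
        ∂(μ.prod (μ.prod μ))| := neg_le_abs _
    have h2 : 0 ≤ 3 * e * Q := by positivity
    linarith [h1, hT3bound, h2]
  refine le_trans hfinal ?_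
  have : Real.sqrt S * S = S ^ ((3:ℝ)/2) := by
    rw [Real.sqrt_eq_rpow]
    nth_rewrite 2 [← Real.rpow_one S]
    rw [← Real.rpow_add_of_nonneg hS0 (by norm_num) (by norm_num)]
    norm_num
  rw [this]
end

section
/- Every graphon g with edge density e = e(g) satisfies t(g) - e³ ≤ (3e + 1)·∫_{[0,1]²} (g(x,y) - e)² dx dy. -/
open MeasureTheory Set

/-- `Hf g e x = ∫ y, (g x y - e)` (degree deviation). -/
noncomputable def Hf (g : ℝ → ℝ → ℝ) (e x : ℝ) : ℝ := ∫ y in Icc (0:ℝ) 1, (g x y - e)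

/-- `Qf g e x = ∫ y, (g x y - e)²`. -/
noncomputable def Qf (g : ℝ → ℝ → ℝ) (e x : ℝ) : ℝ := ∫ y in Icc (0:ℝ) 1, (g x y - e) ^ 2

/-- Every graphon `g` with edge density `e` satisfies
`t(g) - e³ ≤ (3e + 1) ∫∫ (g - e)²`. -/
theorem triangle_density_upper_bound (g : ℝ → ℝ → ℝ) (hg : IsGraphon g) :
    triangleDensity g - (edgeDensity g) ^ 3 ≤
      (3 * edgeDensity g + 1) *
        ∫ x in Icc (0:ℝ) 1, ∫ y in Icc (0:ℝ) 1, (g x y - edgeDensity g) ^ 2 := by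
  obtain ⟨hm, hsy, hb⟩ := hg
  haveI hprob : IsProbabilityMeasure (volume.restrict (Icc (0:ℝ) 1)) :=
    ⟨by simp [Real.volume_Icc]⟩
  set e := edgeDensity g with hedef
  have hedensity : (∫ x in Icc (0:ℝ) 1, ∫ y in Icc (0:ℝ) 1, g x y) = e := rfl
  -- generic helpers
  have hInt : ∀ (F : ℝ → ℝ) (C : ℝ), AEStronglyMeasurable F (volume.restrict (Icc (0:ℝ) 1)) →
      (∀ x ∈ Icc (0:ℝ) 1, |F x| ≤ C) → IntegrableOn F (Icc (0:ℝ) 1) := by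
    intro F C hF hC
    exact (integrable_const C).mono' hF
      ((ae_restrict_iff' measurableSet_Icc).2 (ae_of_all _ fun x hx => by
        simpa using hC x hx))
  have hNorm : ∀ (F : ℝ → ℝ) (C : ℝ), (∀ x ∈ Icc (0:ℝ) 1, |F x| ≤ C) →
      |∫ x in Icc (0:ℝ) 1, F x| ≤ C := by
    intro F C hC
    have h := norm_integral_le_of_norm_le_const (μ := volume.restrict (Icc (0:ℝ) 1))
      (f := F) (C := C)
      ((ae_restrict_iff' measurableSet_Icc).2 (ae_of_all _ fun x hx => by simpa using hC x hx))
    simpa [Real.norm_eq_abs, measure_univ] using h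
  -- measurability of sections
  have msec1 : ∀ x : ℝ, Measurable (g x) := fun x => hm.comp measurable_prodMk_left
  have msec2 : ∀ x : ℝ, Measurable (fun z => g z x) := fun x =>
    hm.comp (measurable_id.prodMk measurable_const)
  -- bounds
  have hb0 : ∀ x ∈ Icc (0:ℝ) 1, ∀ y ∈ Icc (0:ℝ) 1, 0 ≤ g x y := fun x hx y hy => (hb x hx y hy).1
  have hb1 : ∀ x ∈ Icc (0:ℝ) 1, ∀ y ∈ Icc (0:ℝ) 1, g x y ≤ 1 := fun x hx y hy => (hb x hx y hy).2
  have habs : ∀ x ∈ Icc (0:ℝ) 1, ∀ y ∈ Icc (0:ℝ) 1, |g x y| ≤ 1 := fun x hx y hy =>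
    abs_le.2 ⟨by linarith [hb0 x hx y hy], hb1 x hx y hy⟩
  have he0 : 0 ≤ e := by
    rw [hedef]
    exact setIntegral_nonneg measurableSet_Icc fun x hx =>
      setIntegral_nonneg measurableSet_Icc fun y hy => hb0 x hx y hy
  have hA_meas : Measurable fun x => ∫ y in Icc (0:ℝ) 1, g x y :=
    (hm.stronglyMeasurable.integral_prod_right').measurable
  have hA_bd : ∀ x ∈ Icc (0:ℝ) 1, |∫ y in Icc (0:ℝ) 1, g x y| ≤ 1 := fun x hx =>
    hNorm _ 1 fun y hy => habs x hx y hy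
  have he1 : e ≤ 1 := by
    have := hNorm _ 1 hA_bd
    rw [hedensity] at this
    exact le_trans (le_abs_self e) this
  have hf_abs : ∀ x ∈ Icc (0:ℝ) 1, ∀ y ∈ Icc (0:ℝ) 1, |g x y - e| ≤ 1 := fun x hx y hy =>
    abs_le.2 ⟨by linarith [hb0 x hx y hy, he1], by linarith [hb1 x hx y hy, he0]⟩
  have hf2_abs : ∀ x ∈ Icc (0:ℝ) 1, ∀ y ∈ Icc (0:ℝ) 1, |(g x y - e) ^ 2| ≤ 1 := by
    intro x hx y hy
    rw [abs_pow]
    exact pow_le_one₀ (abs_nonneg _) (hf_abs x hx y hy)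
  -- Hf, Qf basics
  have hfm : Measurable (fun p : ℝ × ℝ => g p.1 p.2 - e) := hm.sub measurable_const
  have mH : Measurable (Hf g e) :=
    (hfm.stronglyMeasurable.integral_prod_right').measurable
  have mQ : Measurable (Qf g e) :=
    ((hfm.pow_const 2).stronglyMeasurable.integral_prod_right').measurable
  have hH_bd : ∀ x ∈ Icc (0:ℝ) 1, |Hf g e x| ≤ 1 := fun x hx =>
    hNorm _ 1 fun y hy => hf_abs x hx y hy
  have hQ_bd : ∀ x ∈ Icc (0:ℝ) 1, |Qf g e x| ≤ 1 := fun x hx =>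
    hNorm _ 1 fun y hy => hf2_abs x hx y hy
  have hH_int : IntegrableOn (Hf g e) (Icc (0:ℝ) 1) := hInt _ 1 mH.aestronglyMeasurable hH_bd
  have hQ_int : IntegrableOn (Qf g e) (Icc (0:ℝ) 1) := hInt _ 1 mQ.aestronglyMeasurable hQ_bd
  set S : ℝ := ∫ x in Icc (0:ℝ) 1, Qf g e x with hSdef
  -- ∫ Hf = 0
  have hgx_int : ∀ x ∈ Icc (0:ℝ) 1, IntegrableOn (g x) (Icc (0:ℝ) 1) := fun x hx =>
    hInt _ 1 (msec1 x).aestronglyMeasurable (habs x hx)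
  have hHzero : (∫ x in Icc (0:ℝ) 1, Hf g e x) = 0 := by
    have h1 : EqOn (Hf g e) (fun x => (∫ y in Icc (0:ℝ) 1, g x y) - e) (Icc (0:ℝ) 1) := by
      intro x hx
      show Hf g e x = _
      unfold Hf
      rw [integral_sub (hgx_int x hx) (integrable_const e), integral_const]
      simp [measure_univ]
    rw [setIntegral_congr_fun measurableSet_Icc h1,
      integral_sub (hInt _ 1 hA_meas.aestronglyMeasurable hA_bd) (integrable_const e),
      integral_const, hedensity]
    simp [measure_univ]
  -- innermost layer
  have key_z : ∀ x ∈ Icc (0:ℝ) 1, ∀ y ∈ Icc (0:ℝ) 1,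
      (∫ z in Icc (0:ℝ) 1, g x y * g y z * g z x) ≤
        (e ^ 3 + e ^ 2 * (g x y - e) + (e + 1/2) * (g x y - e) ^ 2)
          + e ^ 2 * Hf g e y + e ^ 2 * Hf g e x + (e + 1/2) * Qf g e y + e * Qf g e x := by
    intro x hx y hy
    have i1 : Integrable
        (fun _ : ℝ => e ^ 3 + e ^ 2 * (g x y - e) + (e + 1/2) * (g x y - e) ^ 2)
        (volume.restrict (Icc (0:ℝ) 1)) := integrable_const _
    have ify : IntegrableOn (fun z => g y z - e) (Icc (0:ℝ) 1) :=
      hInt _ 1 ((msec1 y).sub measurable_const).aestronglyMeasurable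
        fun z hz => hf_abs y hy z hz
    have ifx : IntegrableOn (fun z => g x z - e) (Icc (0:ℝ) 1) :=
      hInt _ 1 ((msec1 x).sub measurable_const).aestronglyMeasurable
        fun z hz => hf_abs x hx z hz
    have ify2 : IntegrableOn (fun z => (g y z - e) ^ 2) (Icc (0:ℝ) 1) :=
      hInt _ 1 (((msec1 y).sub measurable_const).pow_const 2).aestronglyMeasurable
        fun z hz => hf2_abs y hy z hz
    have ifx2 : IntegrableOn (fun z => (g x z - e) ^ 2) (Icc (0:ℝ) 1) :=
      hInt _ 1 (((msec1 x).sub measurable_const).pow_const 2).aestronglyMeasurable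
        fun z hz => hf2_abs x hx z hz
    have iprod : IntegrableOn (fun z => g x y * g y z * g z x) (Icc (0:ℝ) 1) := by
      refine hInt _ 1 ((measurable_const.mul (msec1 y)).mul (msec2 x)).aestronglyMeasurable
        fun z hz => ?_
      have h1 := hb x hx y hy; have h2 := hb y hy z hz; have h3 := hb z hz x hx
      have hp0 : 0 ≤ g x y * g y z * g z x := mul_nonneg (mul_nonneg h1.1 h2.1) h3.1
      have hp1 : g x y * g y z * g z x ≤ 1 :=
        mul_le_one₀ (mul_le_one₀ h1.2 h2.1 h2.2) h3.1 h3.2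
      rw [abs_le]; constructor <;> linarith
    have hpt : ∀ z ∈ Icc (0:ℝ) 1,
        g x y * g y z * g z x ≤
          (e ^ 3 + e ^ 2 * (g x y - e) + (e + 1/2) * (g x y - e) ^ 2)
            + e ^ 2 * (g y z - e) + e ^ 2 * (g x z - e)
            + (e + 1/2) * (g y z - e) ^ 2 + e * (g x z - e) ^ 2 := by
      intro z hz
      have hsym1 : g z x = g x z := hsy z hz x hx
      rw [hsym1]
      obtain ⟨hc1, hc2⟩ := abs_le.1 (hf_abs x hx z hz)
      nlinarith [mul_nonneg he0 (sq_nonneg ((g x y - e) - (g y z - e))),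
        mul_nonneg he0 (sq_nonneg ((g y z - e) - (g x z - e))),
        mul_nonneg he0 (sq_nonneg ((g x z - e) - (g x y - e))),
        mul_nonneg (by linarith : (0:ℝ) ≤ 1 - (g x z - e)) (sq_nonneg ((g x y - e) + (g y z - e))),
        mul_nonneg (by linarith : (0:ℝ) ≤ 1 + (g x z - e)) (sq_nonneg ((g x y - e) - (g y z - e)))]
    have hmono : (∫ z in Icc (0:ℝ) 1, g x y * g y z * g z x) ≤
        ∫ z in Icc (0:ℝ) 1,
          ((e ^ 3 + e ^ 2 * (g x y - e) + (e + 1/2) * (g x y - e) ^ 2)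
            + e ^ 2 * (g y z - e) + e ^ 2 * (g x z - e)
            + (e + 1/2) * (g y z - e) ^ 2 + e * (g x z - e) ^ 2) :=
      setIntegral_mono_on iprod
        (by exact (((i1.add (ify.const_mul (e ^ 2))).add (ifx.const_mul (e ^ 2))).add
          (ify2.const_mul (e + 1/2))).add (ifx2.const_mul e)) measurableSet_Icc hpt
    refine hmono.trans (le_of_eq ?_)
    have k2 : Integrable (fun z => e ^ 2 * (g y z - e)) (volume.restrict (Icc (0:ℝ) 1)) :=
      by exact ify.const_mul _
    have k3 : Integrable (fun z => e ^ 2 * (g x z - e)) (volume.restrict (Icc (0:ℝ) 1)) :=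
      by exact ifx.const_mul _
    have k4 : Integrable (fun z => (e + 1/2) * (g y z - e) ^ 2)
        (volume.restrict (Icc (0:ℝ) 1)) := by exact ify2.const_mul _
    have k5 : Integrable (fun z => e * (g x z - e) ^ 2) (volume.restrict (Icc (0:ℝ) 1)) :=
      by exact ifx2.const_mul _
    have c2 : Integrable (fun z => (e ^ 3 + e ^ 2 * (g x y - e) + (e + 1/2) * (g x y - e) ^ 2)
        + e ^ 2 * (g y z - e)) (volume.restrict (Icc (0:ℝ) 1)) := by exact i1.add k2
    have c3 : Integrable (fun z => (e ^ 3 + e ^ 2 * (g x y - e) + (e + 1/2) * (g x y - e) ^ 2)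
        + e ^ 2 * (g y z - e) + e ^ 2 * (g x z - e)) (volume.restrict (Icc (0:ℝ) 1)) :=
      by exact c2.add k3
    have c4 : Integrable (fun z => (e ^ 3 + e ^ 2 * (g x y - e) + (e + 1/2) * (g x y - e) ^ 2)
        + e ^ 2 * (g y z - e) + e ^ 2 * (g x z - e) + (e + 1/2) * (g y z - e) ^ 2)
        (volume.restrict (Icc (0:ℝ) 1)) := by exact c3.add k4
    rw [integral_add c4 k5, integral_add c3 k4, integral_add c2 k3, integral_add i1 k2,
      integral_const, integral_const_mul, integral_const_mul, integral_const_mul,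
      integral_const_mul]
    simp only [measure_univ, probReal_univ, ENNReal.toReal_one, one_smul]
    unfold Hf Qf
    ring
  -- middle layer
  have hprod_abs : ∀ x ∈ Icc (0:ℝ) 1, ∀ y ∈ Icc (0:ℝ) 1, ∀ z ∈ Icc (0:ℝ) 1,
      |g x y * g y z * g z x| ≤ 1 := by
    intro x hx y hy z hz
    have h1 := hb x hx y hy; have h2 := hb y hy z hz; have h3 := hb z hz x hx
    have hp0 : 0 ≤ g x y * g y z * g z x := mul_nonneg (mul_nonneg h1.1 h2.1) h3.1
    have hp1 : g x y * g y z * g z x ≤ 1 :=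
      mul_le_one₀ (mul_le_one₀ h1.2 h2.1 h2.2) h3.1 h3.2
    rw [abs_le]; constructor <;> linarith
  have hIz_bd : ∀ x ∈ Icc (0:ℝ) 1, ∀ y ∈ Icc (0:ℝ) 1,
      |∫ z in Icc (0:ℝ) 1, g x y * g y z * g z x| ≤ 1 := fun x hx y hy =>
    hNorm _ 1 fun z hz => hprod_abs x hx y hy z hz
  have iInner_meas : Measurable fun p : ℝ × ℝ =>
      ∫ z in Icc (0:ℝ) 1, g p.1 p.2 * g p.2 z * g z p.1 := by
    have hq : Measurable (fun q : (ℝ × ℝ) × ℝ => g q.1.1 q.1.2 * g q.1.2 q.2 * g q.2 q.1.1) :=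
      ((hm.comp (measurable_fst.fst.prodMk measurable_fst.snd)).mul
        (hm.comp (measurable_fst.snd.prodMk measurable_snd))).mul
        (hm.comp (measurable_snd.prodMk measurable_fst.fst))
    exact (hq.stronglyMeasurable.integral_prod_right').measurable
  have key_y : ∀ x ∈ Icc (0:ℝ) 1,
      (∫ y in Icc (0:ℝ) 1, ∫ z in Icc (0:ℝ) 1, g x y * g y z * g z x) ≤
        e ^ 3 + 2 * e ^ 2 * Hf g e x + (2 * e + 1/2) * Qf g e x + (e + 1/2) * S := by
    intro x hx
    have j1 : Integrable (fun _ : ℝ => e ^ 3) (volume.restrict (Icc (0:ℝ) 1)) :=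
      integrable_const _
    have jf : IntegrableOn (fun y => g x y - e) (Icc (0:ℝ) 1) :=
      hInt _ 1 ((msec1 x).sub measurable_const).aestronglyMeasurable
        fun y hy => hf_abs x hx y hy
    have jf2 : IntegrableOn (fun y => (g x y - e) ^ 2) (Icc (0:ℝ) 1) :=
      hInt _ 1 (((msec1 x).sub measurable_const).pow_const 2).aestronglyMeasurable
        fun y hy => hf2_abs x hx y hy
    have j2 : Integrable (fun y => e ^ 2 * (g x y - e)) (volume.restrict (Icc (0:ℝ) 1)) :=
      by exact jf.const_mul _
    have j3 : Integrable (fun y => (e + 1/2) * (g x y - e) ^ 2)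
        (volume.restrict (Icc (0:ℝ) 1)) := by exact jf2.const_mul _
    have j4 : Integrable (fun y => e ^ 2 * Hf g e y) (volume.restrict (Icc (0:ℝ) 1)) :=
      by exact hH_int.const_mul _
    have j5 : Integrable (fun _ : ℝ => e ^ 2 * Hf g e x) (volume.restrict (Icc (0:ℝ) 1)) :=
      integrable_const _
    have j6 : Integrable (fun y => (e + 1/2) * Qf g e y) (volume.restrict (Icc (0:ℝ) 1)) :=
      by exact hQ_int.const_mul _
    have j7 : Integrable (fun _ : ℝ => e * Qf g e x) (volume.restrict (Icc (0:ℝ) 1)) :=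
      integrable_const _
    have jlhs : IntegrableOn (fun y => ∫ z in Icc (0:ℝ) 1, g x y * g y z * g z x)
        (Icc (0:ℝ) 1) := by
      refine hInt _ 1 ?_ fun y hy => hIz_bd x hx y hy
      exact (iInner_meas.comp (measurable_const.prodMk measurable_id)).aestronglyMeasurable
    have hpt : ∀ y ∈ Icc (0:ℝ) 1,
        (∫ z in Icc (0:ℝ) 1, g x y * g y z * g z x) ≤
          e ^ 3 + e ^ 2 * (g x y - e) + (e + 1/2) * (g x y - e) ^ 2
            + e ^ 2 * Hf g e y + e ^ 2 * Hf g e x + (e + 1/2) * Qf g e y + e * Qf g e x :=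
      fun y hy => key_z x hx y hy
    have hmono : (∫ y in Icc (0:ℝ) 1, ∫ z in Icc (0:ℝ) 1, g x y * g y z * g z x) ≤
        ∫ y in Icc (0:ℝ) 1,
          (e ^ 3 + e ^ 2 * (g x y - e) + (e + 1/2) * (g x y - e) ^ 2
            + e ^ 2 * Hf g e y + e ^ 2 * Hf g e x + (e + 1/2) * Qf g e y + e * Qf g e x) :=
      setIntegral_mono_on jlhs
        (by exact (((((j1.add j2).add j3).add j4).add j5).add j6).add j7)
        measurableSet_Icc hpt
    refine hmono.trans (le_of_eq ?_)
    have d2 : Integrable (fun y => e ^ 3 + e ^ 2 * (g x y - e))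
        (volume.restrict (Icc (0:ℝ) 1)) := by exact j1.add j2
    have d3 : Integrable (fun y => e ^ 3 + e ^ 2 * (g x y - e)
        + (e + 1/2) * (g x y - e) ^ 2) (volume.restrict (Icc (0:ℝ) 1)) := by exact d2.add j3
    have d4 : Integrable (fun y => e ^ 3 + e ^ 2 * (g x y - e)
        + (e + 1/2) * (g x y - e) ^ 2 + e ^ 2 * Hf g e y)
        (volume.restrict (Icc (0:ℝ) 1)) := by exact d3.add j4
    have d5 : Integrable (fun y => e ^ 3 + e ^ 2 * (g x y - e)
        + (e + 1/2) * (g x y - e) ^ 2 + e ^ 2 * Hf g e y + e ^ 2 * Hf g e x)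
        (volume.restrict (Icc (0:ℝ) 1)) := by exact d4.add j5
    have d6 : Integrable (fun y => e ^ 3 + e ^ 2 * (g x y - e)
        + (e + 1/2) * (g x y - e) ^ 2 + e ^ 2 * Hf g e y + e ^ 2 * Hf g e x
        + (e + 1/2) * Qf g e y) (volume.restrict (Icc (0:ℝ) 1)) := by exact d5.add j6
    rw [integral_add d6 j7, integral_add d5 j6, integral_add d4 j5, integral_add d3 j4,
      integral_add d2 j3, integral_add j1 j2,
      integral_const, integral_const, integral_const,
      integral_const_mul, integral_const_mul, integral_const_mul, integral_const_mul, hHzero]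
    simp only [measure_univ, probReal_univ, ENNReal.toReal_one, one_smul]
    have e1 : (∫ y in Icc (0:ℝ) 1, (g x y - e)) = Hf g e x := rfl
    have e2 : (∫ y in Icc (0:ℝ) 1, (g x y - e) ^ 2) = Qf g e x := rfl
    rw [e1, e2, ← hSdef]
    ring
  -- outer layer
  have jO1 : Integrable (fun _ : ℝ => e ^ 3) (volume.restrict (Icc (0:ℝ) 1)) := integrable_const _
  have jO2 : Integrable (fun x => 2 * e ^ 2 * Hf g e x) (volume.restrict (Icc (0:ℝ) 1)) :=
    by exact hH_int.const_mul _
  have jO3 : Integrable (fun x => (2 * e + 1/2) * Qf g e x)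
      (volume.restrict (Icc (0:ℝ) 1)) := by exact hQ_int.const_mul _
  have jO4 : Integrable (fun _ : ℝ => (e + 1/2) * S) (volume.restrict (Icc (0:ℝ) 1)) :=
    integrable_const _
  have jOlhs : IntegrableOn
      (fun x => ∫ y in Icc (0:ℝ) 1, ∫ z in Icc (0:ℝ) 1, g x y * g y z * g z x)
      (Icc (0:ℝ) 1) := by
    refine hInt _ 1 (iInner_meas.stronglyMeasurable.integral_prod_right').measurable.aestronglyMeasurable
      fun x hx => ?_
    exact hNorm _ 1 fun y hy => hIz_bd x hx y hy
  have key_x : triangleDensity g ≤ e ^ 3 + (3 * e + 1) * S := by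
    have hmono : triangleDensity g ≤
        ∫ x in Icc (0:ℝ) 1,
          (e ^ 3 + 2 * e ^ 2 * Hf g e x + (2 * e + 1/2) * Qf g e x + (e + 1/2) * S) :=
      setIntegral_mono_on jOlhs (by exact ((jO1.add jO2).add jO3).add jO4)
        measurableSet_Icc (fun x hx => key_y x hx)
    refine hmono.trans (le_of_eq ?_)
    have dO2 : Integrable (fun x => e ^ 3 + 2 * e ^ 2 * Hf g e x)
        (volume.restrict (Icc (0:ℝ) 1)) := by exact jO1.add jO2
    have dO3 : Integrable (fun x => e ^ 3 + 2 * e ^ 2 * Hf g e x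
        + (2 * e + 1/2) * Qf g e x) (volume.restrict (Icc (0:ℝ) 1)) := by exact dO2.add jO3
    rw [integral_add dO3 jO4, integral_add dO2 jO3, integral_add jO1 jO2,
      integral_const, integral_const,
      integral_const_mul, integral_const_mul, hHzero, ← hSdef]
    simp only [measure_univ, probReal_univ, ENNReal.toReal_one, one_smul]
    ring
  have hSfinal : (∫ x in Icc (0:ℝ) 1, ∫ y in Icc (0:ℝ) 1, (g x y - e) ^ 2) = S := rfl
  rw [hSfinal]
  linarith [key_x]
end
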